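/- arXiv:1004.4543 — 7 statements merged into one kernel-verified Lean document; each statement's English description precedes it below -/
import Mathlib

section
/- Let (α_p)_{p∈V} be a canonical family with canonical graph (V,E). For each p ∈ V let w_p : V → R be a function all of whose values are homogeneous polynomials of degree 1 (linear forms). Assume that for every p ∈ V there exist polynomials x_{p,r} ∈ R, one for each r ∈ V with λ(r) > λ(p), such that x_{p,r} is homogeneous of degree λ(p)+1−λ(r) (in particular x_{p,r} = 0 when λ(r) > λ(p)+1) and, for every q ∈ V, α_p(q)·(w_p(q) − w_p(p)) = Σ_{r : λ(r)>λ(p)} x_{p,r}·α_r(q). Fix p, q ∈ V and assume moreover: (i) w_{γ_i}(q) ≠ w_{γ_i}(γ_i) for every γ ∈ Σ(p,q) and every 1 ≤ i ≤ |γ|; and (ii) α_r(q) = 0 for every r ∈ V that is E-reachable from p and satisfies λ(r) < λ(q) and Σ(r,q) = ∅. Then, in the field of fractions of R, α_p(q) = Λ_q · Σ_{γ ∈ Σ(p,q)} Π_{i=1}^{|γ|} [(w_{γ_i}(γ_{i+1}) − w_{γ_i}(γ_i)) / (w_{γ_i}(q) − w_{γ_i}(γ_i))] · [α_{γ_i}(γ_{i+1})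 / Λ_{γ_{i+1}}]. -/
open scoped Classical

noncomputable section

/-- A path in a directed graph with edge relation `E`, from `p` to `q`, encoded as a
length `γ.1` together with a `(γ.1 + 1)`-tuple of vertices `γ.2`. -/
def IsPathBetween {V : Type*} (E : V → V → Prop) (p q : V)
    (γ : Σ L : ℕ, Fin (L + 1) → V) : Prop :=
  γ.2 0 = p ∧ γ.2 (Fin.last γ.1) = q ∧ ∀ i : Fin γ.1, E (γ.2 i.castSucc) (γ.2 i.succ)

/-- The canonical map from `ℝ[y_1, …, y_m]` to its field of fractions. -/
def toFF (m : ℕ) : MvPolynomial (Fin m) ℝ →+* FractionRing (MvPolynomial (Fin m) ℝ) :=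
  algebraMap _ _

section PathAux

variable {V : Type*} {E : V → V → Prop} {lam : V → ℕ}

theorem path_lam (hlam : ∀ r r', E r r' → lam r' = lam r + 1) {p q : V}
    {γ : Σ L : ℕ, Fin (L + 1) → V} (hγ : IsPathBetween E p q γ) :
    ∀ i : Fin (γ.1 + 1), lam (γ.2 i) = lam p + i := by
  intro i
  induction i using Fin.induction with
  | zero => simp [hγ.1]
  | succ j ih =>
    rw [hlam _ _ (hγ.2.2 j), ih]
    simp [Fin.val_succ, Fin.coe_castSucc]
    omega

theorem path_len (hlam : ∀ r r', E r r' → lam r' = lam r + 1) {p q : V}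
    {γ : Σ L : ℕ, Fin (L + 1) → V} (hγ : IsPathBetween E p q γ) :
    lam q = lam p + γ.1 := by
  have h := path_lam hlam hγ (Fin.last γ.1)
  rwa [hγ.2.1, Fin.val_last] at h

theorem paths_finite [Fintype V] (hlam : ∀ r r', E r r' → lam r' = lam r + 1) (p q : V) :
    {γ : Σ L : ℕ, Fin (L + 1) → V | IsPathBetween E p q γ}.Finite := by
  apply Set.Finite.subset (Set.finite_range
    (fun g : Fin (lam q - lam p + 1) → V => (⟨lam q - lam p, g⟩ : Σ L : ℕ, Fin (L + 1) → V)))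
  rintro ⟨L, g⟩ hγ
  have hL : L = lam q - lam p := by
    have h : lam q = lam p + L := path_len hlam hγ
    omega
  subst hL
  exact ⟨g, rfl⟩

theorem paths_self (hlam : ∀ r r', E r r' → lam r' = lam r + 1) (p : V) :
    {γ : Σ L : ℕ, Fin (L + 1) → V | IsPathBetween E p p γ} =
      {(⟨0, fun _ => p⟩ : Σ L : ℕ, Fin (L + 1) → V)} := by
  ext ⟨L, g⟩
  simp only [Set.mem_setOf_eq, Set.mem_singleton_iff]
  constructor
  · intro hγ
    have hL : L = 0 := by
      have h : lam p = lam p + L := path_len hlam hγ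
      omega
    subst hL
    have hg : g = fun _ => p := by
      funext i
      have h1 : i = 0 := by have := i.isLt; exact Fin.ext (by omega)
      rw [h1]; exact hγ.1
    rw [hg]
  · intro h
    obtain ⟨h1, h2⟩ := Sigma.mk.inj_iff.mp h
    subst h1
    rw [heq_iff_eq] at h2
    subst h2
    exact ⟨rfl, rfl, fun i => i.elim0⟩

theorem paths_eq_empty (hlam : ∀ r r', E r r' → lam r' = lam r + 1) {p q : V}
    (hne : q ≠ p) (hle : lam q ≤ lam p) :
    {γ : Σ L : ℕ, Fin (L + 1) → V | IsPathBetween E p q γ} = ∅ := by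
  rw [Set.eq_empty_iff_forall_notMem]
  rintro ⟨L, g⟩ hγ
  have hlen : lam q = lam p + L := path_len hlam hγ
  have hL : L = 0 := by omega
  subst hL
  exact hne (hγ.2.1.symm.trans hγ.1)

def consPath {V : Type*} (p : V) (δ : Σ L : ℕ, Fin (L + 1) → V) : Σ L : ℕ, Fin (L + 1) → V :=
  ⟨δ.1 + 1, Fin.cons p δ.2⟩

theorem isPathBetween_consPath {p r q : V} (hpr : E p r) {δ : Σ L : ℕ, Fin (L + 1) → V}
    (hδ : IsPathBetween E r q δ) : IsPathBetween E p q (consPath p δ) := by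
  obtain ⟨L, g⟩ := δ
  obtain ⟨h0, hl, he⟩ := hδ
  simp only [IsPathBetween, consPath] at h0 hl he ⊢
  refine ⟨Fin.cons_zero _ _, ?_, ?_⟩
  · rw [← Fin.succ_last, Fin.cons_succ]
    exact hl
  · intro i
    induction i using Fin.cases with
    | zero =>
      rw [Fin.castSucc_zero, Fin.cons_zero, Fin.cons_succ, h0]
      exact hpr
    | succ j =>
      rw [← Fin.succ_castSucc, Fin.cons_succ, Fin.cons_succ]
      exact he j

theorem exists_consPath {p q : V} {γ : Σ L : ℕ, Fin (L + 1) → V}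
    (hγ : IsPathBetween E p q γ) (hL : γ.1 ≠ 0) :
    ∃ δ : Σ L : ℕ, Fin (L + 1) → V,
      E p (δ.2 0) ∧ IsPathBetween E (δ.2 0) q δ ∧ γ = consPath p δ := by
  obtain ⟨L', g⟩ := γ
  obtain ⟨L, rfl⟩ : ∃ L, L' = L + 1 := ⟨L' - 1, by simp at hL; omega⟩
  obtain ⟨h0, hl, he⟩ := hγ
  refine ⟨⟨L, fun i => g i.succ⟩, ?_, ⟨rfl, ?_, ?_⟩, ?_⟩
  · show E p (g (Fin.succ 0))
    have h := he 0
    rwa [Fin.castSucc_zero, h0] at h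
  · show g (Fin.last L).succ = q
    rw [Fin.succ_last]; exact hl
  · intro i
    show E (g i.castSucc.succ) (g i.succ.succ)
    rw [Fin.succ_castSucc]
    exact he i.succ
  · show (⟨L + 1, g⟩ : Σ L : ℕ, Fin (L + 1) → V) = ⟨L + 1, Fin.cons p fun i => g i.succ⟩
    have hg : (Fin.cons p fun i : Fin (L + 1) => g i.succ) = g := by
      funext j
      induction j using Fin.cases with
      | zero => rw [Fin.cons_zero]; exact h0.symm
      | succ i => rw [Fin.cons_succ]
    rw [hg]

theorem sum_paths_decomp {M : Type*} [AddCommMonoid M] [Fintype V]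
    (hlam : ∀ r r', E r r' → lam r' = lam r + 1) {p q : V} (hlt : lam p < lam q)
    (f : (Σ L : ℕ, Fin (L + 1) → V) → M) :
    ∑ γ ∈ (paths_finite hlam p q).toFinset, f γ =
      ∑ r ∈ Finset.univ.filter (fun r => E p r),
        ∑ δ ∈ (paths_finite hlam r q).toFinset, f (consPath p δ) := by
  refine Eq.trans ?_ (Finset.sum_sigma _ _ (fun x : Σ _ : V, Σ L : ℕ, Fin (L + 1) → V => f (consPath p x.2)))
  refine (Finset.sum_bij (fun (x : Σ _ : V, Σ L : ℕ, Fin (L + 1) → V) _ => consPath p x.2)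
    ?_ ?_ ?_ ?_).symm
  · rintro ⟨r, δ⟩ hx
    obtain ⟨hr, hδ⟩ := Finset.mem_sigma.mp hx
    have hEpr : E p r := (Finset.mem_filter.mp hr).2
    have hδp : IsPathBetween E r q δ := (paths_finite hlam r q).mem_toFinset.mp hδ
    exact (paths_finite hlam p q).mem_toFinset.mpr (isPathBetween_consPath hEpr hδp)
  · rintro ⟨r₁, L₁, g₁⟩ h₁ ⟨r₂, L₂, g₂⟩ h₂ hcons
    simp only [consPath] at hcons
    obtain ⟨hL, hg⟩ := Sigma.mk.inj_iff.mp hcons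
    have hL' : L₁ = L₂ := by omega
    subst hL'
    rw [heq_iff_eq] at hg
    have hgg : g₁ = g₂ := by
      funext i
      have h := congrFun hg i.succ
      rwa [Fin.cons_succ, Fin.cons_succ] at h
    subst hgg
    have e₁ : g₁ 0 = r₁ :=
      ((paths_finite hlam r₁ q).mem_toFinset.mp (Finset.mem_sigma.mp h₁).2).1
    have e₂ : g₁ 0 = r₂ :=
      ((paths_finite hlam r₂ q).mem_toFinset.mp (Finset.mem_sigma.mp h₂).2).1
    have : r₁ = r₂ := e₁.symm.trans e₂
    subst this
    rfl
  · intro γ hmem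
    have hpath := (paths_finite hlam p q).mem_toFinset.mp hmem
    have hlen : lam q = lam p + γ.1 := path_len hlam hpath
    have hL : γ.1 ≠ 0 := by omega
    obtain ⟨δ, hE', hδ, hγeq⟩ := exists_consPath hpath hL
    refine ⟨⟨δ.2 0, δ⟩, ?_, hγeq.symm⟩
    exact Finset.mem_sigma.mpr ⟨Finset.mem_filter.mpr ⟨Finset.mem_univ _, hE'⟩,
      (paths_finite hlam _ q).mem_toFinset.mpr hδ⟩
  · intro x hx
    rfl

end PathAux

def Fterm {m : ℕ} {V : Type*} (w α : V → V → MvPolynomial (Fin m) ℝ)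
    (Lam : V → MvPolynomial (Fin m) ℝ) (q : V) (γ : Σ L : ℕ, Fin (L + 1) → V) :
    FractionRing (MvPolynomial (Fin m) ℝ) :=
  ∏ i : Fin γ.1,
    ((toFF m (w (γ.2 i.castSucc) (γ.2 i.succ)) -
        toFF m (w (γ.2 i.castSucc) (γ.2 i.castSucc))) /
      (toFF m (w (γ.2 i.castSucc) q) -
        toFF m (w (γ.2 i.castSucc) (γ.2 i.castSucc)))) *
    (toFF m (α (γ.2 i.castSucc) (γ.2 i.succ)) / toFF m (Lam (γ.2 i.succ)))

theorem Fterm_cons {m : ℕ} {V : Type*} (w α : V → V → MvPolynomial (Fin m) ℝ)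
    (Lam : V → MvPolynomial (Fin m) ℝ) (q p : V) (δ : Σ L : ℕ, Fin (L + 1) → V) :
    Fterm w α Lam q (consPath p δ) =
      (((toFF m (w p (δ.2 0)) - toFF m (w p p)) / (toFF m (w p q) - toFF m (w p p))) *
        (toFF m (α p (δ.2 0)) / toFF m (Lam (δ.2 0)))) * Fterm w α Lam q δ := by
  obtain ⟨L, g⟩ := δ
  simp only [Fterm, consPath]
  show (∏ i : Fin (L + 1), _) = _
  rw [Fin.prod_univ_succ]
  simp [← Fin.succ_castSucc, Fin.cons_succ, Fin.castSucc_zero, Fin.cons_zero]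



/-
STATEMENT 0 (fixed-point model of Theorem 2.1): given a canonical family `(α_p)`
with canonical graph `(V, E)`, classes `w_p` of linear forms satisfying the
expansion hypothesis, and the nondegeneracy/vanishing hypotheses (i) and (ii),
the restriction `α_p(q)` is computed in the field of fractions by the path sum.
-/
set_option maxHeartbeats 2000000 in
theorem stmt_0 {m : ℕ} {V : Type*} [Fintype V]
    (lam : V → ℕ) (Lam : V → MvPolynomial (Fin m) ℝ)
    (hLam0 : ∀ p, Lam p ≠ 0)
    (hLamhom : ∀ p, (Lam p).IsHomogeneous (lam p))
    (α : V → V → MvPolynomial (Fin m) ℝ)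
    (hdiag : ∀ p, α p p = Lam p)
    (hvanish : ∀ p q, q ≠ p → lam q ≤ lam p → α p q = 0)
    (E : V → V → Prop)
    (hE : ∀ r r', E r r' ↔ lam r' = lam r + 1 ∧ α r r' ≠ 0)
    (w : V → V → MvPolynomial (Fin m) ℝ)
    (hwlin : ∀ p q, (w p q).IsHomogeneous 1)
    (hx : ∀ p : V, ∃ x : V → MvPolynomial (Fin m) ℝ,
      (∀ r, lam r = lam p + 1 → (x r).IsHomogeneous 0) ∧
      (∀ r, lam p + 1 < lam r → x r = 0) ∧
      ∀ q : V, α p q * (w p q - w p p) =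
        ∑ r ∈ Finset.univ.filter (fun r => lam p < lam r), x r * α r q)
    (p q : V)
    (hnz : ∀ γ : Σ L : ℕ, Fin (L + 1) → V, IsPathBetween E p q γ →
      ∀ i : Fin γ.1, w (γ.2 i.castSucc) q ≠ w (γ.2 i.castSucc) (γ.2 i.castSucc))
    (hvan2 : ∀ r : V, (∃ γ : Σ L : ℕ, Fin (L + 1) → V, IsPathBetween E p r γ) →
      lam r < lam q →
      (¬ ∃ γ : Σ L : ℕ, Fin (L + 1) → V, IsPathBetween E r q γ) → α r q = 0) :
    toFF m (α p q) =
      toFF m (Lam q) *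
      ∑ᶠ (γ : Σ L : ℕ, Fin (L + 1) → V) (_ : IsPathBetween E p q γ),
        ∏ i : Fin γ.1,
          ((toFF m (w (γ.2 i.castSucc) (γ.2 i.succ)) -
              toFF m (w (γ.2 i.castSucc) (γ.2 i.castSucc))) /
            (toFF m (w (γ.2 i.castSucc) q) -
              toFF m (w (γ.2 i.castSucc) (γ.2 i.castSucc)))) *
          (toFF m (α (γ.2 i.castSucc) (γ.2 i.succ)) / toFF m (Lam (γ.2 i.succ))) := by
  have hlam : ∀ r r', E r r' → lam r' = lam r + 1 := fun r r' h => ((hE r r').1 h).1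
  have hinj : Function.Injective (toFF m) :=
    IsFractionRing.injective (MvPolynomial (Fin m) ℝ) (FractionRing (MvPolynomial (Fin m) ℝ))
  have hΛ : ∀ r, toFF m (Lam r) ≠ 0 := fun r h => hLam0 r (hinj (by rw [h, map_zero]))
  suffices H : ∀ n : ℕ, ∀ p' : V, lam q ≤ lam p' + n →
      (∀ γ : Σ L : ℕ, Fin (L + 1) → V, IsPathBetween E p' q γ →
        ∀ i : Fin γ.1, w (γ.2 i.castSucc) q ≠ w (γ.2 i.castSucc) (γ.2 i.castSucc)) →
      (∀ r : V, (∃ γ : Σ L : ℕ, Fin (L + 1) → V, IsPathBetween E p' r γ) →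
        lam r < lam q →
        (¬ ∃ γ : Σ L : ℕ, Fin (L + 1) → V, IsPathBetween E r q γ) → α r q = 0) →
      toFF m (α p' q) =
        toFF m (Lam q) * ∑ γ ∈ (paths_finite hlam p' q).toFinset, Fterm w α Lam q γ by
    have main := H (lam q) p (by omega) hnz hvan2
    rw [← finsum_mem_eq_finite_toFinset_sum (Fterm w α Lam q) (paths_finite hlam p q)] at main
    exact main
  have base : ∀ p' : V, lam q ≤ lam p' →
      toFF m (α p' q) =
        toFF m (Lam q) * ∑ γ ∈ (paths_finite hlam p' q).toFinset, Fterm w α Lam q γ := by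
    intro p' hle
    by_cases hqp : q = p'
    · subst hqp
      have hset : (paths_finite hlam q q).toFinset =
          {(⟨0, fun _ => q⟩ : Σ L : ℕ, Fin (L + 1) → V)} := by
        apply Finset.ext
        intro γ
        rw [Set.Finite.mem_toFinset, paths_self hlam q]
        simp
      rw [hdiag, hset, Finset.sum_singleton]
      have h1 : Fterm w α Lam q ⟨0, fun _ => q⟩ = 1 := by simp [Fterm]
      rw [h1, mul_one]
    · have hempty : (paths_finite hlam p' q).toFinset = ∅ := by
        rw [Set.Finite.toFinset_eq_empty]
        exact paths_eq_empty hlam hqp hle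
      rw [hvanish p' q hqp hle, map_zero, hempty, Finset.sum_empty, mul_zero]
  intro n
  induction n with
  | zero =>
    intro p' hle _ _
    exact base p' (by omega)
  | succ n IH =>
    intro p' hle hnzp hvanp
    by_cases hlt : lam p' < lam q
    · -- main step
      by_cases hpaths : ∃ γ : Σ L : ℕ, Fin (L + 1) → V, IsPathBetween E p' q γ
      · obtain ⟨γ₀, hγ₀⟩ := hpaths
        have hlen : lam q = lam p' + γ₀.1 := path_len hlam hγ₀
        have hγlen : γ₀.1 ≠ 0 := by omega
        have hd : w p' q ≠ w p' p' := by
          have h0' := hnzp γ₀ hγ₀ ⟨0, Nat.pos_of_ne_zero hγlen⟩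
          have hc : (⟨0, Nat.pos_of_ne_zero hγlen⟩ : Fin γ₀.1).castSucc = 0 := by
            apply Fin.ext; simp
          rwa [hc, hγ₀.1] at h0'
        have hdK : toFF m (w p' q) - toFF m (w p' p') ≠ 0 :=
          sub_ne_zero.mpr (fun h => hd (hinj h))
        obtain ⟨x, hx0, hxz, hxe⟩ := hx p'
        have hxr : ∀ r, lam r = lam p' + 1 → x r * Lam r = α p' r * (w p' r - w p' p') := by
          intro r hr
          have h1 := hxe r
          rw [Finset.sum_eq_single r
            (fun b _ hb => by
              rw [hvanish b r (fun h => hb h.symm) (by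
                have : lam p' < lam b := by
                  have := Finset.mem_filter.mp ‹b ∈ _›
                  exact this.2
                omega), mul_zero])
            (fun habs => absurd (Finset.mem_filter.mpr ⟨Finset.mem_univ r, by omega⟩) habs)]
            at h1
          rw [hdiag r] at h1
          exact h1.symm
        have heq := congrArg (toFF m) (hxe q)
        simp only [map_mul, map_sub, map_sum] at heq
        have hsub : Finset.univ.filter (fun r => E p' r) ⊆
            Finset.univ.filter (fun r => lam p' < lam r) := by
          intro r hr
          have hEr := (Finset.mem_filter.mp hr).2
          exact Finset.mem_filter.mpr ⟨Finset.mem_univ r, by have := ((hE p' r).1 hEr).1; omega⟩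
        rw [← Finset.sum_subset hsub (by
          intro r hrt hrs
          have hlt' : lam p' < lam r := (Finset.mem_filter.mp hrt).2
          have hnE : ¬ E p' r := fun h => hrs (Finset.mem_filter.mpr ⟨Finset.mem_univ r, h⟩)
          by_cases hr1 : lam r = lam p' + 1
          · have hαpr : α p' r = 0 := by
              by_contra hc
              exact hnE ((hE p' r).2 ⟨hr1, hc⟩)
            have hxr0 : x r = 0 := by
              have h2 := hxr r hr1
              rw [hαpr, zero_mul] at h2
              exact (mul_eq_zero.mp h2).resolve_right (hLam0 r)
            rw [hxr0, map_zero, zero_mul]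
          · rw [hxz r (by omega), map_zero, zero_mul])] at heq
        have hrr : ∀ r ∈ Finset.univ.filter (fun r => E p' r),
            toFF m (x r) * toFF m (α r q) =
              (toFF m (Lam q) * ∑ δ ∈ (paths_finite hlam r q).toFinset,
                Fterm w α Lam q (consPath p' δ)) * (toFF m (w p' q) - toFF m (w p' p')) := by
          intro r hrmem
          have hEpr : E p' r := (Finset.mem_filter.mp hrmem).2
          obtain ⟨hr1, hr2⟩ := (hE p' r).1 hEpr
          have hnzr : ∀ γ : Σ L : ℕ, Fin (L + 1) → V, IsPathBetween E r q γ →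
              ∀ i : Fin γ.1, w (γ.2 i.castSucc) q ≠ w (γ.2 i.castSucc) (γ.2 i.castSucc) := by
            intro δ hδ i
            have hcons := isPathBetween_consPath hEpr hδ
            have h := hnzp (consPath p' δ) hcons i.succ
            simp only [consPath] at h
            exact h
          have hvanr : ∀ r' : V, (∃ γ : Σ L : ℕ, Fin (L + 1) → V, IsPathBetween E r r' γ) →
              lam r' < lam q →
              (¬ ∃ γ : Σ L : ℕ, Fin (L + 1) → V, IsPathBetween E r' q γ) → α r' q = 0 := by
            rintro r' ⟨δ, hδ⟩ h1 h2
            exact hvanp r' ⟨consPath p' δ, isPathBetween_consPath hEpr hδ⟩ h1 h2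
          have hIH : toFF m (α r q) =
              toFF m (Lam q) * ∑ δ ∈ (paths_finite hlam r q).toFinset, Fterm w α Lam q δ :=
            IH r (by omega) hnzr hvanr
          have hΛr := hΛ r
          have hx2 : toFF m (x r) * toFF m (Lam r) =
              toFF m (α p' r) * (toFF m (w p' r) - toFF m (w p' p')) := by
            have h2 := congrArg (toFF m) (hxr r hr1)
            simpa only [map_mul, map_sub] using h2
          have hxval : toFF m (x r) =
              toFF m (α p' r) * (toFF m (w p' r) - toFF m (w p' p')) / toFF m (Lam r) := by
            rw [eq_div_iff hΛr]; exact hx2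
          have hsum : ∑ δ ∈ (paths_finite hlam r q).toFinset, Fterm w α Lam q (consPath p' δ) =
              (((toFF m (w p' r) - toFF m (w p' p')) / (toFF m (w p' q) - toFF m (w p' p'))) *
                (toFF m (α p' r) / toFF m (Lam r))) *
                ∑ δ ∈ (paths_finite hlam r q).toFinset, Fterm w α Lam q δ := by
            rw [Finset.mul_sum]
            refine Finset.sum_congr rfl fun δ hδ => ?_
            rw [Fterm_cons, ((paths_finite hlam r q).mem_toFinset.mp hδ).1]
          rw [hxval, hIH, hsum]
          field_simp
        rw [Finset.sum_congr rfl hrr, ← Finset.sum_mul] at heq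
        have hkey := mul_right_cancel₀ hdK heq
        rw [hkey, sum_paths_decomp hlam hlt (Fterm w α Lam q), Finset.mul_sum]
      · have hα : α p' q = 0 :=
          hvanp p' ⟨⟨0, fun _ => p'⟩, ⟨rfl, rfl, fun i => i.elim0⟩⟩ hlt hpaths
        have hempty : (paths_finite hlam p' q).toFinset = ∅ := by
          rw [Set.Finite.toFinset_eq_empty]
          exact Set.eq_empty_iff_forall_notMem.mpr (fun γ hγ => hpaths ⟨γ, hγ⟩)
        rw [hα, map_zero, hempty, Finset.sum_empty, mul_zero]
    · exact base p' (by omega)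
end
end

section
/- Let (α_p)_{p∈V} be a canonical family with canonical graph (V,E), let ξ ∈ ℝ^m, and let w_1,…,w_k : V → R be functions whose values are linear forms, satisfying: (a) for every j ∈ {1,…,k} and every p ∈ V there exist polynomials x_{j,p,r} ∈ R, homogeneous of degree λ(p)+1−λ(r) (so zero when λ(r) > λ(p)+1), with α_p(q)·(w_j(q) − w_j(p)) = Σ_{r : λ(r)>λ(p)} x_{j,p,r}·α_r(q) for all q ∈ V; (b) for all j and all p,q ∈ V: if w_j(q) ≠ w_j(p) and (w_j(q) − w_j(p))(ξ) ≤ 0 then α_p(q) = 0; (c) for every edge (r,r′) ∈ E there is some j with w_j(r) ≠ w_j(r′), and one sets h(r,r′) = min{j : w_j(r) ≠ w_j(r′)}. Fix p,q ∈ V and assume also (d) α_r(q) = 0 for every r that is E-reachable from p with λ(r) < λ(q) and Σ(r,q) = ∅. Let C(p,q) = {γ ∈ Σ(p,q) : h(γ_1,γ_2) ≤ h(γ_2,γ_3) ≤ ⋯ ≤ h(γ_{|γ|},γ_{|γ|+1})}. Then for every γ ∈ C(p,q) and every i the linear form w_{h_i}(q) − w_{h_i}(γ_i) is nonzero, where h_i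 = h(γ_i,γ_{i+1}), and α_p(q) = Λ_q · Σ_{γ ∈ C(p,q)} Π_{i=1}^{|γ|} [(w_{h_i}(γ_{i+1}) − w_{h_i}(γ_i)) / (w_{h_i}(q) − w_{h_i}(γ_i))] · [α_{γ_i}(γ_{i+1}) / Λ_{γ_{i+1}}]. -/
open scoped Classical

noncomputable section

/-- The condition that the values of `h` along the consecutive edges of the path `γ`
form a (weakly) increasing chain. -/
def HChainMono {V k : Type*} [Preorder k] (h : V → V → k)
    (γ : Σ L : ℕ, Fin (L + 1) → V) : Prop :=
  ∀ i j : Fin γ.1, i ≤ j →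
    h (γ.2 i.castSucc) (γ.2 i.succ) ≤ h (γ.2 j.castSucc) (γ.2 j.succ)

namespace Stmt2Aux
open Finset
variable {V : Type*}
def vtx (γ : Σ L : ℕ, Fin (L + 1) → V) (n : ℕ) : V := γ.2 ⟨min n γ.1, by omega⟩
lemma snd_congr (γ : Σ L : ℕ, Fin (L + 1) → V) {i j : Fin (γ.1 + 1)}
    (hij : (i : ℕ) = (j : ℕ)) : γ.2 i = γ.2 j := congrArg γ.2 (Fin.ext hij)
lemma vtx_clamp (γ : Σ L : ℕ, Fin (L + 1) → V) (n : ℕ) :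
    vtx γ (min n γ.1) = vtx γ n := snd_congr γ (by simp only [Fin.val_mk]; omega)
lemma vtx_castSucc (γ : Σ L : ℕ, Fin (L + 1) → V) (i : Fin γ.1) :
    γ.2 i.castSucc = vtx γ (i : ℕ) :=
  snd_congr γ (by simp only [Fin.coe_castSucc, Fin.val_mk]; omega)
lemma vtx_succ (γ : Σ L : ℕ, Fin (L + 1) → V) (i : Fin γ.1) :
    γ.2 i.succ = vtx γ ((i : ℕ) + 1) :=
  snd_congr γ (by simp only [Fin.val_succ, Fin.val_mk]; omega)
lemma vtx_zero (γ : Σ L : ℕ, Fin (L + 1) → V) : γ.2 0 = vtx γ 0 :=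
  snd_congr γ (by simp only [Fin.val_zero, Fin.val_mk]; omega)
lemma vtx_last (γ : Σ L : ℕ, Fin (L + 1) → V) : γ.2 (Fin.last γ.1) = vtx γ γ.1 :=
  snd_congr γ (by simp only [Fin.val_last, Fin.val_mk]; omega)
lemma sigma_ext {γ δ : Σ L : ℕ, Fin (L + 1) → V} (h1 : γ.1 = δ.1)
    (h2 : ∀ n, vtx γ n = vtx δ n) : γ = δ := by
  rcases γ with ⟨L, f⟩; rcases δ with ⟨L', g⟩
  dsimp at h1; subst h1
  have : f = g := by
    funext i
    have h3 := h2 (i : ℕ)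
    unfold vtx at h3; dsimp at h3
    have h4 : (⟨min (i : ℕ) L, by omega⟩ : Fin (L + 1)) = i :=
      Fin.ext (by simp only [Fin.val_mk]; omega)
    rwa [h4] at h3
  rw [this]
lemma isPathBetween_iff {E : V → V → Prop} {p q : V} {γ : Σ L : ℕ, Fin (L + 1) → V} :
    IsPathBetween E p q γ ↔
      vtx γ 0 = p ∧ vtx γ γ.1 = q ∧ ∀ n, n < γ.1 → E (vtx γ n) (vtx γ (n + 1)) := by
  constructor
  · rintro ⟨h1, h2, h3⟩
    refine ⟨by rw [← vtx_zero]; exact h1, by rw [← vtx_last]; exact h2, fun n hn => ?_⟩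
    have := h3 ⟨n, hn⟩
    rwa [vtx_castSucc, vtx_succ] at this
  · rintro ⟨h1, h2, h3⟩
    refine ⟨by rw [vtx_zero]; exact h1, by rw [vtx_last]; exact h2, fun i => ?_⟩
    rw [vtx_castSucc, vtx_succ]
    exact h3 i i.isLt
lemma hChainMono_iff {k : ℕ} {h : V → V → Fin k} {γ : Σ L : ℕ, Fin (L + 1) → V} :
    HChainMono h γ ↔
      ∀ a b, a ≤ b → b < γ.1 →
        ((h (vtx γ a) (vtx γ (a + 1))) : ℕ) ≤ (h (vtx γ b) (vtx γ (b + 1)) : ℕ) := by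
  constructor
  · intro hc a b hab hb
    have := hc ⟨a, by omega⟩ ⟨b, hb⟩ (by exact hab)
    rw [vtx_castSucc, vtx_succ, vtx_castSucc, vtx_succ] at this
    exact this
  · intro hc i j hij
    rw [vtx_castSucc, vtx_succ, vtx_castSucc, vtx_succ]
    exact hc i j hij j.isLt
def constPath (p : V) : Σ L : ℕ, Fin (L + 1) → V := ⟨0, fun _ => p⟩
def consPath (p : V) (δ : Σ L : ℕ, Fin (L + 1) → V) : Σ L : ℕ, Fin (L + 1) → V :=
  ⟨δ.1 + 1, fun i => if (i : ℕ) = 0 then p else vtx δ ((i : ℕ) - 1)⟩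
def tailPath (γ : Σ L : ℕ, Fin (L + 1) → V) : Σ L : ℕ, Fin (L + 1) → V :=
  ⟨γ.1 - 1, fun i => vtx γ ((i : ℕ) + 1)⟩
def snocPath (γ : Σ L : ℕ, Fin (L + 1) → V) (r : V) : Σ L : ℕ, Fin (L + 1) → V :=
  ⟨γ.1 + 1, fun i => if (i : ℕ) ≤ γ.1 then vtx γ (i : ℕ) else r⟩
lemma vtx_consPath (p : V) (δ : Σ L : ℕ, Fin (L + 1) → V) (n : ℕ) :
    vtx (consPath p δ) n = if n = 0 then p else vtx δ (n - 1) := by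
  show (if (min n (δ.1 + 1) : ℕ) = 0 then p else vtx δ (min n (δ.1 + 1) - 1)) = _
  by_cases hn : n = 0
  · subst hn; simp
  · rw [if_neg (by omega), if_neg hn]
    rw [show min n (δ.1 + 1) - 1 = min (n - 1) δ.1 by omega, vtx_clamp]
lemma vtx_tailPath (γ : Σ L : ℕ, Fin (L + 1) → V) (hγ : 1 ≤ γ.1) (n : ℕ) :
    vtx (tailPath γ) n = vtx γ (min (n + 1) γ.1) := by
  show vtx γ (min n (γ.1 - 1) + 1) = _
  rw [show min n (γ.1 - 1) + 1 = min (min (n + 1) γ.1) γ.1 by omega, vtx_clamp]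
lemma vtx_snocPath (γ : Σ L : ℕ, Fin (L + 1) → V) (r : V) (n : ℕ) :
    vtx (snocPath γ r) n = if min n (γ.1 + 1) ≤ γ.1 then vtx γ n else r := by
  show (if (min n (γ.1 + 1) : ℕ) ≤ γ.1 then vtx γ (min n (γ.1 + 1)) else r) = _
  by_cases hn : min n (γ.1 + 1) ≤ γ.1
  · rw [if_pos hn, if_pos hn, show min n (γ.1 + 1) = min n γ.1 by omega, vtx_clamp]
  · rw [if_neg hn, if_neg hn]

section Main
set_option linter.unusedSectionVars false

variable {m : ℕ} [Fintype V]
variable (lam : V → ℕ) (Lam : V → MvPolynomial (Fin m) ℝ)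
variable (α : V → V → MvPolynomial (Fin m) ℝ) (E : V → V → Prop)
variable (ξ : Fin m → ℝ) {k : ℕ} (w : Fin k → V → MvPolynomial (Fin m) ℝ)
variable (h : V → V → Fin k) (q : V)

/-- the one-step factor of the path product -/
def pt (a b : V) : FractionRing (MvPolynomial (Fin m) ℝ) :=
  ((toFF m (w (h a b) b) - toFF m (w (h a b) a)) /
      (toFF m (w (h a b) q) - toFF m (w (h a b) a))) *
    (toFF m (α a b) / toFF m (Lam b))

/-- the full path product -/
def prodP (γ : Σ L : ℕ, Fin (L + 1) → V) : FractionRing (MvPolynomial (Fin m) ℝ) :=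
  ∏ i : Fin γ.1, pt Lam α w h q (vtx γ (i : ℕ)) (vtx γ ((i : ℕ) + 1))

/-- the path conditions -/
def PC (p : V) (j : ℕ) (γ : Σ L : ℕ, Fin (L + 1) → V) : Prop :=
  IsPathBetween E p q γ ∧ HChainMono h γ ∧
    ∀ n, n < γ.1 → j ≤ (h (vtx γ n) (vtx γ (n + 1)) : ℕ)

/-- the finset of h-monotone paths from `p` to `q` with all h-values at least `j`. -/
def pathFinset (p : V) (j : ℕ) : Finset (Σ L : ℕ, Fin (L + 1) → V) :=
  ((Finset.univ : Finset (Fin ((lam q - lam p) + 1) → V)).image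
    (fun f => (⟨lam q - lam p, f⟩ : Σ L : ℕ, Fin (L + 1) → V))).filter (PC E h q p j)

variable (hE : ∀ r r', E r r' ↔ lam r' = lam r + 1 ∧ α r r' ≠ 0)

include hE in
lemma path_lam {p : V} {γ : Σ L : ℕ, Fin (L + 1) → V} (hγ : IsPathBetween E p q γ) :
    lam q = lam p + γ.1 := by
  rw [isPathBetween_iff] at hγ
  obtain ⟨h0, hl, he⟩ := hγ
  have key : ∀ n, n ≤ γ.1 → lam (vtx γ n) = lam p + n := by
    intro n
    induction n with
    | zero => intro _; rw [h0]; omega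
    | succ n ih =>
      intro hn
      have h2 := ((hE _ _).mp (he n (by omega))).1
      rw [h2, ih (by omega)]
      omega
  rw [← hl]
  exact key γ.1 le_rfl

include hE in
lemma mem_pathFinset {p : V} {j : ℕ} {γ : Σ L : ℕ, Fin (L + 1) → V} :
    γ ∈ pathFinset lam E h q p j ↔ PC E h q p j γ := by
  unfold pathFinset
  simp only [Finset.mem_filter, Finset.mem_image, Finset.mem_univ, true_and]
  constructor
  · rintro ⟨-, hpc⟩; exact hpc
  · intro hpc
    refine ⟨?_, hpc⟩
    have hlen : γ.1 = lam q - lam p := by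
      have := path_lam lam α E q hE hpc.1
      omega
    rcases γ with ⟨L, g⟩
    dsimp at hlen
    subst hlen
    exact ⟨g, rfl⟩


variable (hb : ∀ (j : Fin k) (p q : V), w j q ≠ w j p →
      MvPolynomial.eval ξ (w j q - w j p) ≤ 0 → α p q = 0)
variable (hmin : ∀ r r', E r r' → w (h r r') r ≠ w (h r r') r' ∧
      ∀ j, w j r ≠ w j r' → h r r' ≤ j)

include hE hb in
lemma ev_strict {r r' : V} (he : E r r') (j : Fin k) (hw : w j r' ≠ w j r) :
    MvPolynomial.eval ξ (w j r) < MvPolynomial.eval ξ (w j r') := by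
  have hα : α r r' ≠ 0 := ((hE r r').mp he).2
  by_contra hle
  push_neg at hle
  exact hα (hb j r r' hw (by rw [map_sub]; linarith))

include hE hb in
lemma ev_mono {r r' : V} (he : E r r') (j : Fin k) :
    MvPolynomial.eval ξ (w j r) ≤ MvPolynomial.eval ξ (w j r') := by
  by_cases hw : w j r' = w j r
  · rw [hw]
  · exact (ev_strict lam α E ξ w hE hb he j hw).le

include hE hb in
lemma ev_path_mono {p' q' : V} {γ : Σ L : ℕ, Fin (L + 1) → V}
    (hγ : IsPathBetween E p' q' γ) (j : Fin k) :
    ∀ a b, a ≤ b → b ≤ γ.1 →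
      MvPolynomial.eval ξ (w j (vtx γ a)) ≤ MvPolynomial.eval ξ (w j (vtx γ b)) := by
  rw [isPathBetween_iff] at hγ
  intro a b hab hble
  induction b with
  | zero =>
    have : a = 0 := by omega
    subst this; exact le_rfl
  | succ b ih =>
    rcases Nat.lt_or_ge a (b + 1) with hl | hg
    · exact le_trans (ih (by omega) (by omega))
        (ev_mono lam α E ξ w hE hb (hγ.2.2 b (by omega)) j)
    · have : a = b + 1 := by omega
      subst this; exact le_rfl

include hE hb hmin in
lemma denom_ne {p' : V} {γ : Σ L : ℕ, Fin (L + 1) → V}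
    (hγ : IsPathBetween E p' q γ) (n : ℕ) (hn : n < γ.1) :
    w (h (vtx γ n) (vtx γ (n + 1))) q ≠ w (h (vtx γ n) (vtx γ (n + 1))) (vtx γ n) := by
  have hedge : E (vtx γ n) (vtx γ (n + 1)) := (isPathBetween_iff.mp hγ).2.2 n hn
  set j := h (vtx γ n) (vtx γ (n + 1)) with hj
  have h1 : MvPolynomial.eval ξ (w j (vtx γ n)) < MvPolynomial.eval ξ (w j (vtx γ (n + 1))) :=
    ev_strict lam α E ξ w hE hb hedge j (Ne.symm (hmin _ _ hedge).1)
  have h2 : MvPolynomial.eval ξ (w j (vtx γ (n + 1))) ≤ MvPolynomial.eval ξ (w j (vtx γ γ.1)) :=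
    ev_path_mono lam α E ξ w hE hb hγ j (n + 1) γ.1 (by omega) le_rfl
  have hq : vtx γ γ.1 = q := (isPathBetween_iff.mp hγ).2.1
  rw [hq] at h2
  intro hcontra
  rw [hcontra] at h2
  linarith

include hE hb in
lemma vanish1 {p' r : V} (he : E p' r) (i : Fin k) (hq : w i q = w i p')
    (hne : w i p' ≠ w i r) : α r q = 0 := by
  have h1 : MvPolynomial.eval ξ (w i p') < MvPolynomial.eval ξ (w i r) :=
    ev_strict lam α E ξ w hE hb he i (Ne.symm hne)
  have hneq : w i q ≠ w i r := fun hc => hne (hq ▸ hc)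
  apply hb i r q hneq
  rw [map_sub, hq]
  linarith

include hE hb hmin in
lemma no_path {p' : V} (hall : ∀ i : Fin k, w i q = w i p') (hlt : lam p' < lam q) :
    ¬ ∃ γ : Σ L : ℕ, Fin (L + 1) → V, IsPathBetween E p' q γ := by
  rintro ⟨γ, hγ⟩
  have hlen := path_lam lam α E q hE hγ
  have hpos : 0 < γ.1 := by omega
  have hd := denom_ne lam α E ξ w h q hE hb hmin hγ 0 hpos
  have h0 : vtx γ 0 = p' := (isPathBetween_iff.mp hγ).1
  rw [h0] at hd
  exact hd (hall _)

lemma trivial_path (p' : V) : IsPathBetween E p' p' (constPath p') :=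
  ⟨rfl, rfl, fun i => absurd i.isLt (by simp [constPath])⟩

include hE in
lemma reach_extend {p p' r : V} (hreach : ∃ γ, IsPathBetween E p p' γ) (he : E p' r) :
    ∃ γ, IsPathBetween E p r γ := by
  obtain ⟨γ, hγ⟩ := hreach
  rw [isPathBetween_iff] at hγ
  refine ⟨snocPath γ r, isPathBetween_iff.mpr ⟨?_, ?_, ?_⟩⟩
  · rw [vtx_snocPath, if_pos (by omega)]
    exact hγ.1
  · show vtx (snocPath γ r) (γ.1 + 1) = r
    rw [vtx_snocPath, if_neg (by omega)]
  · intro n hn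
    have hn' : n < γ.1 + 1 := hn
    rcases Nat.lt_or_ge n γ.1 with hl | hg
    · rw [vtx_snocPath, if_pos (by omega), vtx_snocPath, if_pos (by omega)]
      exact hγ.2.2 n hl
    · have : n = γ.1 := by omega
      subst this
      rw [vtx_snocPath, if_pos (by omega), vtx_snocPath, if_neg (by omega), hγ.2.1]
      exact he

lemma cons_prod (p' : V) (δ : Σ L : ℕ, Fin (L + 1) → V) :
    prodP Lam α w h q (consPath p' δ) = pt Lam α w h q p' (vtx δ 0) * prodP Lam α w h q δ := by
  unfold prodP
  show (∏ i : Fin (δ.1 + 1), pt Lam α w h q (vtx (consPath p' δ) (i : ℕ))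
      (vtx (consPath p' δ) ((i : ℕ) + 1))) = _
  rw [Fin.prod_univ_succ]
  congr 1
  · refine Finset.prod_congr rfl fun i _ => ?_
    rw [Fin.val_succ, vtx_consPath, vtx_consPath, if_neg (by omega), if_neg (by omega)]
    congr 2 <;> omega



include hE in
lemma decomp (p' : V) (hlt : lam p' < lam q) (j : ℕ) :
    ∑ γ ∈ pathFinset lam E h q p' j, prodP Lam α w h q γ =
    ∑ r ∈ Finset.univ, if E p' r ∧ j ≤ (h p' r : ℕ) then
        pt Lam α w h q p' r *
          ∑ δ ∈ pathFinset lam E h q r ((h p' r : ℕ)), prodP Lam α w h q δ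
      else 0 := by
  rw [← Finset.sum_fiberwise_of_maps_to (g := fun γ => vtx γ 1)
    (fun γ _ => Finset.mem_univ _) (prodP Lam α w h q)]
  refine Finset.sum_congr rfl fun r _ => ?_
  have hfib : ∀ γ ∈ (pathFinset lam E h q p' j).filter (fun γ => vtx γ 1 = r),
      PC E h q p' j γ ∧ 1 ≤ γ.1 ∧ vtx γ 0 = p' ∧ vtx γ 1 = r ∧ E p' r ∧
        j ≤ (h p' r : ℕ) := by
    intro γ hγ
    rw [Finset.mem_filter] at hγ
    obtain ⟨hmem, hsnd⟩ := hγ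
    have hpc := (mem_pathFinset lam α E h q hE).mp hmem
    have hpath := isPathBetween_iff.mp hpc.1
    have h1 : 1 ≤ γ.1 := by
      have := path_lam lam α E q hE hpc.1; omega
    have h0 : vtx γ 0 = p' := hpath.1
    have hedge : E p' r := by
      have := hpath.2.2 0 (by omega)
      rwa [h0, hsnd] at this
    have hjle : j ≤ (h p' r : ℕ) := by
      have := hpc.2.2 0 (by omega)
      rwa [h0, hsnd] at this
    exact ⟨hpc, h1, h0, hsnd, hedge, hjle⟩
  by_cases hcr : E p' r ∧ j ≤ (h p' r : ℕ)
  · rw [if_pos hcr, Finset.mul_sum]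
    refine Finset.sum_nbij' tailPath (consPath p') ?_ ?_ ?_ ?_ ?_
    · -- tail maps fiber into pathFinset r (h p' r)
      intro γ hγ
      obtain ⟨hpc, h1, h0, hsnd, -, -⟩ := hfib γ hγ
      have hpath := isPathBetween_iff.mp hpc.1
      rw [mem_pathFinset lam α E h q hE]
      have hchain := hChainMono_iff.mp hpc.2.1
      refine ⟨isPathBetween_iff.mpr ⟨?_, ?_, ?_⟩, ?_, ?_⟩
      · rw [vtx_tailPath _ h1, show min (0 + 1) γ.1 = 1 by omega]
        exact hsnd
      · show vtx (tailPath γ) (γ.1 - 1) = q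
        rw [vtx_tailPath _ h1, show min ((γ.1 - 1) + 1) γ.1 = γ.1 by omega]
        exact hpath.2.1
      · intro n hn
        have hn' : n < γ.1 - 1 := hn
        rw [vtx_tailPath _ h1, vtx_tailPath _ h1,
          show min (n + 1) γ.1 = n + 1 by omega,
          show min ((n + 1) + 1) γ.1 = (n + 1) + 1 by omega]
        exact hpath.2.2 (n + 1) (by omega)
      · rw [hChainMono_iff]
        intro a b hab hb
        have hb' : b < γ.1 - 1 := hb
        rw [vtx_tailPath _ h1, vtx_tailPath _ h1, vtx_tailPath _ h1, vtx_tailPath _ h1,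
          show min (a + 1) γ.1 = a + 1 by omega,
          show min ((a + 1) + 1) γ.1 = (a + 1) + 1 by omega,
          show min (b + 1) γ.1 = b + 1 by omega,
          show min ((b + 1) + 1) γ.1 = (b + 1) + 1 by omega]
        exact hchain (a + 1) (b + 1) (by omega) (by omega)
      · intro n hn
        have hn' : n < γ.1 - 1 := hn
        rw [vtx_tailPath _ h1, vtx_tailPath _ h1,
          show min (n + 1) γ.1 = n + 1 by omega,
          show min ((n + 1) + 1) γ.1 = (n + 1) + 1 by omega]
        have := hchain 0 (n + 1) (by omega) (by omega)
        rwa [h0, show (0 : ℕ) + 1 = 1 from rfl, hsnd] at this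
    · -- cons maps pathFinset r (h p' r) into the fiber
      intro δ hδ
      have hpcδ := (mem_pathFinset lam α E h q hE).mp hδ
      have hpathδ := isPathBetween_iff.mp hpcδ.1
      have hchainδ := hChainMono_iff.mp hpcδ.2.1
      have hstep : ∀ n, n < δ.1 + 1 →
          (h (vtx (consPath p' δ) n) (vtx (consPath p' δ) (n + 1)))
            = if n = 0 then h p' r
              else h (vtx δ (n - 1)) (vtx δ ((n - 1) + 1)) := by
        intro n hn
        by_cases hn0 : n = 0
        · subst hn0
          rw [vtx_consPath, vtx_consPath, if_pos rfl, if_neg (by omega), if_pos rfl]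
          rw [show (0 : ℕ) + 1 - 1 = 0 from rfl, hpathδ.1]
        · rw [vtx_consPath, vtx_consPath, if_neg hn0, if_neg (by omega), if_neg hn0,
            show n + 1 - 1 = (n - 1) + 1 by omega]
      have hvc1 : vtx (consPath p' δ) 1 = r := by
        rw [vtx_consPath, if_neg (by omega)]
        exact hpathδ.1
      rw [Finset.mem_filter]
      refine ⟨(mem_pathFinset lam α E h q hE).mpr ⟨isPathBetween_iff.mpr ⟨?_, ?_, ?_⟩, ?_, ?_⟩, hvc1⟩
      · rw [vtx_consPath, if_pos rfl]
      · show vtx (consPath p' δ) (δ.1 + 1) = q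
        rw [vtx_consPath, if_neg (by omega), show δ.1 + 1 - 1 = δ.1 by omega]
        exact hpathδ.2.1
      · intro n hn
        have hn' : n < δ.1 + 1 := hn
        by_cases hn0 : n = 0
        · subst hn0
          rw [vtx_consPath, vtx_consPath, if_pos rfl, if_neg (by omega),
            show (0 : ℕ) + 1 - 1 = 0 from rfl, hpathδ.1]
          exact hcr.1
        · rw [vtx_consPath, vtx_consPath, if_neg hn0, if_neg (by omega)]
          have := hpathδ.2.2 (n - 1) (by omega)
          rw [show n + 1 - 1 = (n - 1) + 1 by omega]
          exact this
      · rw [hChainMono_iff]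
        intro a b hab hb
        have hb' : b < δ.1 + 1 := hb
        rw [hstep a (by omega), hstep b (by omega)]
        by_cases ha0 : a = 0
        · rw [if_pos ha0]
          by_cases hb0 : b = 0
          · rw [if_pos hb0]
          · rw [if_neg hb0]
            have := hpcδ.2.2 (b - 1) (by omega)
            exact this
        · rw [if_neg ha0, if_neg (by omega : ¬ b = 0)]
          exact hchainδ (a - 1) (b - 1) (by omega) (by omega)
      · intro n hn
        have hn' : n < δ.1 + 1 := hn
        rw [hstep n (by omega)]
        by_cases hn0 : n = 0
        · rw [if_pos hn0]; exact hcr.2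
        · rw [if_neg hn0]
          exact le_trans hcr.2 (hpcδ.2.2 (n - 1) (by omega))
    · -- left inverse
      intro γ hγ
      obtain ⟨hpc, h1, h0, hsnd, -, -⟩ := hfib γ hγ
      refine sigma_ext (by show γ.1 - 1 + 1 = γ.1; omega) fun n => ?_
      rw [vtx_consPath]
      by_cases hn0 : n = 0
      · subst hn0; rw [if_pos rfl]; exact h0.symm
      · rw [if_neg hn0, vtx_tailPath _ h1, show min ((n - 1) + 1) γ.1 = min n γ.1 by omega,
          vtx_clamp]
    · -- right inverse
      intro δ hδ
      refine sigma_ext (by show δ.1 + 1 - 1 = δ.1; omega) fun n => ?_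
      rw [vtx_tailPath _ (by show 1 ≤ δ.1 + 1; omega),
        show (consPath p' δ).1 = δ.1 + 1 from rfl, vtx_consPath,
        if_neg (by omega : ¬ min (n + 1) (δ.1 + 1) = 0),
        show min (n + 1) (δ.1 + 1) - 1 = min n δ.1 by omega, vtx_clamp]
    · -- values
      intro γ hγ
      obtain ⟨hpc, h1, h0, hsnd, -, -⟩ := hfib γ hγ
      have hleft : consPath p' (tailPath γ) = γ := by
        refine sigma_ext (by show γ.1 - 1 + 1 = γ.1; omega) fun n => ?_
        rw [vtx_consPath]
        by_cases hn0 : n = 0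
        · subst hn0; rw [if_pos rfl]; exact h0.symm
        · rw [if_neg hn0, vtx_tailPath _ h1, show min ((n - 1) + 1) γ.1 = min n γ.1 by omega,
            vtx_clamp]
      conv_lhs => rw [← hleft]
      rw [cons_prod]
      congr 2
  · rw [if_neg hcr]
    refine Finset.sum_eq_zero fun γ hγ => ?_
    obtain ⟨-, -, -, -, hedge, hjle⟩ := hfib γ hγ
    exact (hcr ⟨hedge, hjle⟩).elim


variable (hLam0 : ∀ p, Lam p ≠ 0) (hdiag : ∀ p, α p p = Lam p)
variable (hvanish : ∀ p q, q ≠ p → lam q ≤ lam p → α p q = 0)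
variable (ha : ∀ (j : Fin k) (p : V), ∃ x : V → MvPolynomial (Fin m) ℝ,
      (∀ r, lam r = lam p + 1 → (x r).IsHomogeneous 0) ∧
      (∀ r, lam p + 1 < lam r → x r = 0) ∧
      ∀ q : V, α p q * (w j q - w j p) =
        ∑ r ∈ Finset.univ.filter (fun r => lam p < lam r), x r * α r q)

include hE hb hmin hLam0 hdiag hvanish ha in
lemma keyrec (p' : V) (hlt : lam p' < lam q) (j₀ : Fin k)
    (hj₀ : w j₀ q ≠ w j₀ p') (hj₀min : ∀ i : Fin k, i < j₀ → w i q = w i p') :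
    toFF m (α p' q) = ∑ r ∈ Finset.univ,
      if E p' r ∧ h p' r = j₀ then pt Lam α w h q p' r * toFF m (α r q) else 0 := by
  obtain ⟨x, -, hxz, hxeq⟩ := ha j₀ p'
  have hinj : Function.Injective (toFF m) := IsFractionRing.injective _ _
  have key1 : ∀ r, lam r = lam p' + 1 → x r * Lam r = α p' r * (w j₀ r - w j₀ p') := by
    intro r hr
    have h2 := hxeq r
    rw [Finset.sum_eq_single_of_mem r
      (by simp only [Finset.mem_filter, Finset.mem_univ, true_and]; omega)] at h2
    · rw [hdiag] at h2; exact h2.symm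
    · intro b hb' hbne
      rw [Finset.mem_filter] at hb'
      rw [hvanish b r (Ne.symm hbne) (by omega), mul_zero]
  have key2 : α p' q * (w j₀ q - w j₀ p') =
      ∑ r ∈ Finset.univ.filter (fun r => lam r = lam p' + 1), x r * α r q := by
    rw [hxeq q]
    refine (Finset.sum_subset ?_ ?_).symm
    · intro r hr
      simp only [Finset.mem_filter, Finset.mem_univ, true_and] at *
      omega
    · intro r hr hr'
      simp only [Finset.mem_filter, Finset.mem_univ, true_and] at hr hr'
      rw [hxz r (by omega), zero_mul]
  have hΔ : toFF m (w j₀ q) - toFF m (w j₀ p') ≠ 0 := by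
    rw [sub_ne_zero]
    exact fun hc => hj₀ (hinj hc)
  have key2' : toFF m (α p' q) * (toFF m (w j₀ q) - toFF m (w j₀ p')) =
      ∑ r ∈ Finset.univ.filter (fun r => lam r = lam p' + 1),
        toFF m (x r) * toFF m (α r q) := by
    have h3 := congrArg (toFF m) key2
    rw [map_mul, map_sub, map_sum] at h3
    simpa only [map_mul] using h3
  have hmain : toFF m (α p' q) =
      ∑ r ∈ Finset.univ.filter (fun r => lam r = lam p' + 1),
        toFF m (x r) * toFF m (α r q) / (toFF m (w j₀ q) - toFF m (w j₀ p')) := by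
    rw [← Finset.sum_div, eq_div_iff hΔ]
    exact key2'
  rw [Finset.sum_filter] at hmain
  rw [hmain]
  refine Finset.sum_congr rfl fun r _ => ?_
  by_cases h1 : lam r = lam p' + 1
  · rw [if_pos h1]
    have hkey := key1 r h1
    by_cases h2 : α p' r = 0
    · have hx0 : x r = 0 := by
        have h3 : x r * Lam r = 0 := by rw [hkey, h2, zero_mul]
        exact (mul_eq_zero.mp h3).resolve_right (hLam0 r)
      rw [hx0, map_zero, zero_mul, zero_div,
        if_neg (fun hc => (((hE _ _).mp hc.1).2) h2)]
    · have hEpr : E p' r := (hE p' r).mpr ⟨h1, h2⟩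
      have hΛ : toFF m (Lam r) ≠ 0 :=
        fun hc => hLam0 r (hinj (hc.trans (map_zero (toFF m)).symm))
      rcases lt_trichotomy (h p' r) j₀ with hlt' | heq' | hgt'
      · have hwq : w (h p' r) q = w (h p' r) p' := hj₀min _ hlt'
        have hwne : w (h p' r) p' ≠ w (h p' r) r := (hmin _ _ hEpr).1
        have hα0 : α r q = 0 := vanish1 lam α E ξ w q hE hb hEpr (h p' r) hwq hwne
        rw [hα0, map_zero, mul_zero, zero_div,
          if_neg (fun hc => absurd hc.2 (ne_of_lt hlt'))]
      · rw [if_pos ⟨hEpr, heq'⟩]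
        have hxr : toFF m (x r) =
            toFF m (α p' r) * (toFF m (w j₀ r) - toFF m (w j₀ p')) / toFF m (Lam r) := by
          rw [eq_div_iff hΛ]
          have h3 := congrArg (toFF m) hkey
          rw [map_mul, map_mul, map_sub] at h3
          exact h3
        rw [hxr]
        unfold pt
        rw [heq']
        ring
      · have hw0 : w j₀ p' = w j₀ r := by
          by_contra hc
          exact absurd ((hmin _ _ hEpr).2 j₀ hc) (not_le.mpr hgt')
        have hx0 : x r = 0 := by
          have h3 : x r * Lam r = 0 := by rw [hkey, hw0, sub_self, mul_zero]
          exact (mul_eq_zero.mp h3).resolve_right (hLam0 r)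
        rw [hx0, map_zero, zero_mul, zero_div,
          if_neg (fun hc => absurd hc.2 (ne_of_gt hgt'))]
  · rw [if_neg h1, if_neg (fun hc => h1 ((hE _ _).mp hc.1).1)]


include hE hb hmin hLam0 hdiag hvanish ha in
lemma main (p : V)
    (hd : ∀ r : V, (∃ γ : Σ L : ℕ, Fin (L + 1) → V, IsPathBetween E p r γ) →
      lam r < lam q →
      (¬ ∃ γ : Σ L : ℕ, Fin (L + 1) → V, IsPathBetween E r q γ) → α r q = 0) :
    ∀ n : ℕ, ∀ p' : V, (∃ γ, IsPathBetween E p p' γ) → lam q - lam p' = n → ∀ j : ℕ,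
      toFF m (Lam q) * ∑ γ ∈ pathFinset lam E h q p' j, prodP Lam α w h q γ =
        if (∀ i : Fin k, (i : ℕ) < j → w i q = w i p') then toFF m (α p' q) else 0 := by
  intro n
  induction n using Nat.strong_induction_on with
  | _ n IH =>
  intro p' hreach hn j
  by_cases hpq' : p' = q
  · have hone : pathFinset lam E h q p' j = {constPath q} := by
      ext γ
      rw [mem_pathFinset lam α E h q hE, Finset.mem_singleton]
      constructor
      · intro hpc
        have hlen : γ.1 = 0 := by
          have h5 := path_lam lam α E q hE hpc.1
          rw [hpq'] at h5
          omega
        refine sigma_ext (by rw [hlen]; rfl) fun n' => ?_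
        have h0 : vtx γ 0 = p' := (isPathBetween_iff.mp hpc.1).1
        have hcl : vtx γ n' = vtx γ 0 := snd_congr γ (by simp only [Fin.val_mk]; omega)
        rw [hcl, h0, hpq']; rfl
      · rintro rfl
        rw [← hpq']
        exact ⟨trivial_path E p', fun i _ _ => i.elim0,
          fun n' hn' => absurd hn' (Nat.not_lt_zero n')⟩
    rw [hone, Finset.sum_singleton]
    have hprod : prodP Lam α w h q (constPath q) = 1 := by
      unfold prodP constPath
      simp
    rw [hprod, mul_one, if_pos (fun i _ => by rw [hpq']), hpq', hdiag]
  · rcases Nat.lt_or_ge (lam p') (lam q) with hlt | hge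
    swap
    · have hempty : pathFinset lam E h q p' j = ∅ := by
        rw [Finset.eq_empty_iff_forall_notMem]
        intro γ hγ
        have hpc := (mem_pathFinset lam α E h q hE).mp hγ
        have hlen := path_lam lam α E q hE hpc.1
        have hγ1 : γ.1 = 0 := by omega
        have h0 : vtx γ 0 = p' := (isPathBetween_iff.mp hpc.1).1
        have hlast : vtx γ γ.1 = q := (isPathBetween_iff.mp hpc.1).2.1
        rw [hγ1] at hlast
        exact hpq' (by rw [← h0, hlast])
      rw [hempty, Finset.sum_empty, mul_zero,
        hvanish p' q (fun hc => hpq' hc.symm) hge, map_zero, ite_self]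
    · rw [decomp lam Lam α E w h q hE p' hlt j, Finset.mul_sum]
      have hterm : ∀ r : V,
          (toFF m (Lam q) * if E p' r ∧ j ≤ (h p' r : ℕ) then
              pt Lam α w h q p' r *
                ∑ δ ∈ pathFinset lam E h q r ((h p' r : ℕ)), prodP Lam α w h q δ
            else 0)
          = if E p' r ∧ j ≤ (h p' r : ℕ) then
              pt Lam α w h q p' r *
                (if (∀ i : Fin k, (i : ℕ) < ((h p' r : ℕ)) → w i q = w i r) then
                  toFF m (α r q) else 0)
            else 0 := by
        intro r
        by_cases hcr : E p' r ∧ j ≤ (h p' r : ℕ)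
        · rw [if_pos hcr, if_pos hcr]
          have hr1 : lam r = lam p' + 1 := ((hE _ _).mp hcr.1).1
          have hIH := IH (lam q - lam r) (by omega) r
            (reach_extend lam α E hE hreach hcr.1) rfl ((h p' r : ℕ))
          rw [← hIH]
          ring
        · rw [if_neg hcr, if_neg hcr, mul_zero]
      rw [Finset.sum_congr rfl (fun r _ => hterm r)]
      by_cases hall : ∀ i : Fin k, w i q = w i p'
      · rw [if_pos (fun i _ => hall i)]
        rw [Finset.sum_eq_zero]
        · have hnp : ¬ ∃ γ : Σ L : ℕ, Fin (L + 1) → V, IsPathBetween E p' q γ :=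
            no_path lam α E ξ w h q hE hb hmin hall hlt
          rw [hd p' hreach hlt hnp, map_zero]
        · intro r _
          by_cases hcr : E p' r ∧ j ≤ (h p' r : ℕ)
          · rw [if_pos hcr]
            by_cases hc2 : ∀ i : Fin k, (i : ℕ) < ((h p' r : ℕ)) → w i q = w i r
            · rw [if_pos hc2]
              have hα0 : α r q = 0 :=
                vanish1 lam α E ξ w q hE hb hcr.1 (h p' r) (hall _) ((hmin _ _ hcr.1).1)
              rw [hα0, map_zero, mul_zero]
            · rw [if_neg hc2, mul_zero]
          · rw [if_neg hcr]
      · push_neg at hall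
        have hs : (Finset.univ.filter (fun i : Fin k => w i q ≠ w i p')).Nonempty := by
          obtain ⟨i, hi⟩ := hall
          exact ⟨i, by simp only [Finset.mem_filter, Finset.mem_univ, true_and]; exact hi⟩
        set s := Finset.univ.filter (fun i : Fin k => w i q ≠ w i p') with hsdef
        set j₀ := s.min' hs with hj₀def
        have hj₀mem : j₀ ∈ s := Finset.min'_mem s hs
        have hj₀ : w j₀ q ≠ w j₀ p' := (Finset.mem_filter.mp hj₀mem).2
        have hj₀min : ∀ i : Fin k, i < j₀ → w i q = w i p' := by
          intro i hi
          by_contra hc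
          exact absurd (Finset.min'_le s i
            (by simp only [hsdef, Finset.mem_filter, Finset.mem_univ, true_and]; exact hc))
            (not_le.mpr hi)
        have hrec := keyrec lam Lam α E ξ w h q hE hb hmin hLam0 hdiag hvanish ha
          p' hlt j₀ hj₀ hj₀min
        by_cases hcond : ∀ i : Fin k, (i : ℕ) < j → w i q = w i p'
        · rw [if_pos hcond, hrec]
          have hjle : j ≤ (j₀ : ℕ) := by
            by_contra hc
            exact hj₀ (hcond j₀ (by omega))
          refine Finset.sum_congr rfl fun r _ => ?_
          by_cases hEr : E p' r
          · rcases lt_trichotomy (h p' r) j₀ with hlt' | heq' | hgt'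
            · rw [if_neg (fun hc => absurd hc.2 (ne_of_lt hlt') :
                ¬(E p' r ∧ h p' r = j₀))]
              by_cases hj' : j ≤ (h p' r : ℕ)
              · rw [if_pos (⟨hEr, hj'⟩ : E p' r ∧ j ≤ (h p' r : ℕ))]
                have hc2 : ∀ i : Fin k, (i : ℕ) < ((h p' r : ℕ)) → w i q = w i r := by
                  intro i hi
                  have hi' : i < h p' r := by rw [Fin.lt_def]; exact hi
                  have e1 : w i q = w i p' := hj₀min i (lt_trans hi' hlt')
                  have e2 : w i p' = w i r := by
                    by_contra hc
                    exact absurd ((hmin _ _ hEr).2 i hc) (not_le.mpr hi')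
                  rw [e1, e2]
                rw [if_pos hc2]
                have hα0 : α r q = 0 :=
                  vanish1 lam α E ξ w q hE hb hEr (h p' r) (hj₀min _ hlt')
                    ((hmin _ _ hEr).1)
                rw [hα0, map_zero, mul_zero]
              · rw [if_neg (fun hc => hj' hc.2)]
            · have hj'' : j ≤ (h p' r : ℕ) := by rw [heq']; exact hjle
              rw [if_pos (⟨hEr, hj''⟩ : E p' r ∧ j ≤ (h p' r : ℕ)),
                if_pos (⟨hEr, heq'⟩ : E p' r ∧ h p' r = j₀)]
              have hc2 : ∀ i : Fin k, (i : ℕ) < ((h p' r : ℕ)) → w i q = w i r := by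
                intro i hi
                have hi' : i < h p' r := by rw [Fin.lt_def]; exact hi
                have e1 : w i q = w i p' := hj₀min i (heq' ▸ hi')
                have e2 : w i p' = w i r := by
                  by_contra hc
                  exact absurd ((hmin _ _ hEr).2 i hc) (not_le.mpr hi')
                rw [e1, e2]
              rw [if_pos hc2]
            · rw [if_neg (fun hc => absurd hc.2 (ne_of_gt hgt') :
                ¬(E p' r ∧ h p' r = j₀))]
              by_cases hj' : j ≤ (h p' r : ℕ)
              · rw [if_pos (⟨hEr, hj'⟩ : E p' r ∧ j ≤ (h p' r : ℕ))]
                have hc2 : ¬ ∀ i : Fin k, (i : ℕ) < ((h p' r : ℕ)) → w i q = w i r := by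
                  intro hc
                  have e2 : w j₀ p' = w j₀ r := by
                    by_contra hcc
                    exact absurd ((hmin _ _ hEr).2 j₀ hcc) (not_le.mpr hgt')
                  exact hj₀ ((hc j₀ (Fin.lt_def.mp hgt')).trans e2.symm)
                rw [if_neg hc2, mul_zero]
              · rw [if_neg (fun hc => hj' hc.2 : ¬(E p' r ∧ j ≤ (h p' r : ℕ)))]
          · rw [if_neg (fun hc => hEr hc.1 : ¬(E p' r ∧ j ≤ (h p' r : ℕ))),
              if_neg (fun hc => hEr hc.1 : ¬(E p' r ∧ h p' r = j₀))]
        · rw [if_neg hcond]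
          refine Finset.sum_eq_zero fun r _ => ?_
          push_neg at hcond
          obtain ⟨i₀, hi₀lt, hi₀⟩ := hcond
          have hj₀le : (j₀ : ℕ) ≤ (i₀ : ℕ) := Fin.le_def.mp <| Finset.min'_le s i₀
            (by simp only [hsdef, Finset.mem_filter, Finset.mem_univ, true_and]; exact hi₀)
          have hj₀lt : (j₀ : ℕ) < j := by omega
          by_cases hcr : E p' r ∧ j ≤ (h p' r : ℕ)
          · rw [if_pos hcr]
            have hgt' : j₀ < h p' r := by rw [Fin.lt_def]; omega
            have hc2 : ¬ ∀ i : Fin k, (i : ℕ) < ((h p' r : ℕ)) → w i q = w i r := by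
              intro hc
              have e2 : w j₀ p' = w j₀ r := by
                by_contra hcc
                exact absurd ((hmin _ _ hcr.1).2 j₀ hcc) (not_le.mpr hgt')
              exact hj₀ ((hc j₀ (Fin.lt_def.mp hgt')).trans e2.symm)
            rw [if_neg hc2, mul_zero]
          · rw [if_neg hcr]

end Main
end Stmt2Aux

/-
STATEMENT 2 (fixed-point model of Corollary 2.4): given a canonical family
`(α_p)` with canonical graph `(V, E)`, classes `w_1, …, w_k` of linear forms
satisfying (a) the expansion hypothesis, (b) the positivity/vanishing condition
with respect to `ξ`, (c) the separation condition along edges (with `h` the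
associated minimum), and (d) the vanishing condition, the restriction `α_p(q)`
is computed by the path sum over the set `C(p,q)` of `h`-increasing paths, whose
denominators do not vanish.
-/
theorem stmt_2 {m : ℕ} {V : Type*} [Fintype V]
    (lam : V → ℕ) (Lam : V → MvPolynomial (Fin m) ℝ)
    (hLam0 : ∀ p, Lam p ≠ 0)
    (hLamhom : ∀ p, (Lam p).IsHomogeneous (lam p))
    (α : V → V → MvPolynomial (Fin m) ℝ)
    (hdiag : ∀ p, α p p = Lam p)
    (hvanish : ∀ p q, q ≠ p → lam q ≤ lam p → α p q = 0)
    (E : V → V → Prop)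
    (hE : ∀ r r', E r r' ↔ lam r' = lam r + 1 ∧ α r r' ≠ 0)
    (ξ : Fin m → ℝ) (k : ℕ)
    (w : Fin k → V → MvPolynomial (Fin m) ℝ)
    (hwlin : ∀ j p, (w j p).IsHomogeneous 1)
    (ha : ∀ (j : Fin k) (p : V), ∃ x : V → MvPolynomial (Fin m) ℝ,
      (∀ r, lam r = lam p + 1 → (x r).IsHomogeneous 0) ∧
      (∀ r, lam p + 1 < lam r → x r = 0) ∧
      ∀ q : V, α p q * (w j q - w j p) =
        ∑ r ∈ Finset.univ.filter (fun r => lam p < lam r), x r * α r q)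
    (hb : ∀ (j : Fin k) (p q : V), w j q ≠ w j p →
      MvPolynomial.eval ξ (w j q - w j p) ≤ 0 → α p q = 0)
    (hc : ∀ r r', E r r' → ∃ j, w j r ≠ w j r')
    (h : V → V → Fin k)
    (hmin : ∀ r r', E r r' → w (h r r') r ≠ w (h r r') r' ∧
      ∀ j, w j r ≠ w j r' → h r r' ≤ j)
    (p q : V)
    (hd : ∀ r : V, (∃ γ : Σ L : ℕ, Fin (L + 1) → V, IsPathBetween E p r γ) →
      lam r < lam q →
      (¬ ∃ γ : Σ L : ℕ, Fin (L + 1) → V, IsPathBetween E r q γ) → α r q = 0) :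
    (∀ γ : Σ L : ℕ, Fin (L + 1) → V, IsPathBetween E p q γ → HChainMono h γ →
      ∀ i : Fin γ.1,
        w (h (γ.2 i.castSucc) (γ.2 i.succ)) q -
          w (h (γ.2 i.castSucc) (γ.2 i.succ)) (γ.2 i.castSucc) ≠ 0) ∧
    toFF m (α p q) =
      toFF m (Lam q) *
      ∑ᶠ (γ : Σ L : ℕ, Fin (L + 1) → V)
        (_ : IsPathBetween E p q γ ∧ HChainMono h γ),
        ∏ i : Fin γ.1,
          ((toFF m (w (h (γ.2 i.castSucc) (γ.2 i.succ)) (γ.2 i.succ)) -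
              toFF m (w (h (γ.2 i.castSucc) (γ.2 i.succ)) (γ.2 i.castSucc))) /
            (toFF m (w (h (γ.2 i.castSucc) (γ.2 i.succ)) q) -
              toFF m (w (h (γ.2 i.castSucc) (γ.2 i.succ)) (γ.2 i.castSucc)))) *
          (toFF m (α (γ.2 i.castSucc) (γ.2 i.succ)) / toFF m (Lam (γ.2 i.succ))) := by
  classical
  constructor
  · intro γ hγ _ i
    rw [Stmt2Aux.vtx_castSucc, Stmt2Aux.vtx_succ]
    exact sub_ne_zero_of_ne
      (Stmt2Aux.denom_ne lam α E ξ w h q hE hb hmin hγ (i : ℕ) i.isLt)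
  · have hset : ∀ γ : Σ L : ℕ, Fin (L + 1) → V,
        (IsPathBetween E p q γ ∧ HChainMono h γ) ↔ Stmt2Aux.PC E h q p 0 γ := fun γ =>
      ⟨fun hc => ⟨hc.1, hc.2, fun n _ => Nat.zero_le _⟩, fun hc => ⟨hc.1, hc.2.1⟩⟩
    have hprod : ∀ γ : Σ L : ℕ, Fin (L + 1) → V,
        (∏ i : Fin γ.1,
          ((toFF m (w (h (γ.2 i.castSucc) (γ.2 i.succ)) (γ.2 i.succ)) -
              toFF m (w (h (γ.2 i.castSucc) (γ.2 i.succ)) (γ.2 i.castSucc))) /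
            (toFF m (w (h (γ.2 i.castSucc) (γ.2 i.succ)) q) -
              toFF m (w (h (γ.2 i.castSucc) (γ.2 i.succ)) (γ.2 i.castSucc)))) *
          (toFF m (α (γ.2 i.castSucc) (γ.2 i.succ)) / toFF m (Lam (γ.2 i.succ))))
        = Stmt2Aux.prodP Lam α w h q γ := by
      intro γ
      refine Finset.prod_congr rfl fun i _ => ?_
      rw [Stmt2Aux.vtx_castSucc, Stmt2Aux.vtx_succ]
      rfl
    have hmain := Stmt2Aux.main lam Lam α E ξ w h q hE hb hmin hLam0 hdiag hvanish ha
      p hd (lam q - lam p) p ⟨Stmt2Aux.constPath p, Stmt2Aux.trivial_path E p⟩ rfl 0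
    rw [if_pos (fun (i : Fin k) (hi : (i : ℕ) < 0) => absurd hi (Nat.not_lt_zero _))]
      at hmain
    have h2 : {γ : Σ L : ℕ, Fin (L + 1) → V | IsPathBetween E p q γ ∧ HChainMono h γ}
        = ↑(Stmt2Aux.pathFinset lam E h q p 0) := by
      ext γ
      rw [Finset.mem_coe, Stmt2Aux.mem_pathFinset lam α E h q hE]
      exact hset γ
    have h3 : (∑ᶠ (γ : Σ L : ℕ, Fin (L + 1) → V)
          (_ : IsPathBetween E p q γ ∧ HChainMono h γ),
        ∏ i : Fin γ.1,
          ((toFF m (w (h (γ.2 i.castSucc) (γ.2 i.succ)) (γ.2 i.succ)) -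
              toFF m (w (h (γ.2 i.castSucc) (γ.2 i.succ)) (γ.2 i.castSucc))) /
            (toFF m (w (h (γ.2 i.castSucc) (γ.2 i.succ)) q) -
              toFF m (w (h (γ.2 i.castSucc) (γ.2 i.succ)) (γ.2 i.castSucc)))) *
          (toFF m (α (γ.2 i.castSucc) (γ.2 i.succ)) / toFF m (Lam (γ.2 i.succ))))
        = ∑ γ ∈ Stmt2Aux.pathFinset lam E h q p 0, Stmt2Aux.prodP Lam α w h q γ := by
      rw [show (∑ᶠ (γ : Σ L : ℕ, Fin (L + 1) → V)
          (_ : IsPathBetween E p q γ ∧ HChainMono h γ),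
        ∏ i : Fin γ.1,
          ((toFF m (w (h (γ.2 i.castSucc) (γ.2 i.succ)) (γ.2 i.succ)) -
              toFF m (w (h (γ.2 i.castSucc) (γ.2 i.succ)) (γ.2 i.castSucc))) /
            (toFF m (w (h (γ.2 i.castSucc) (γ.2 i.succ)) q) -
              toFF m (w (h (γ.2 i.castSucc) (γ.2 i.succ)) (γ.2 i.castSucc)))) *
          (toFF m (α (γ.2 i.castSucc) (γ.2 i.succ)) / toFF m (Lam (γ.2 i.succ))))
        = ∑ᶠ γ ∈ {γ : Σ L : ℕ, Fin (L + 1) → V |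
              IsPathBetween E p q γ ∧ HChainMono h γ},
            ∏ i : Fin γ.1,
              ((toFF m (w (h (γ.2 i.castSucc) (γ.2 i.succ)) (γ.2 i.succ)) -
                  toFF m (w (h (γ.2 i.castSucc) (γ.2 i.succ)) (γ.2 i.castSucc))) /
                (toFF m (w (h (γ.2 i.castSucc) (γ.2 i.succ)) q) -
                  toFF m (w (h (γ.2 i.castSucc) (γ.2 i.succ)) (γ.2 i.castSucc)))) *
              (toFF m (α (γ.2 i.castSucc) (γ.2 i.succ)) / toFF m (Lam (γ.2 i.succ)))
        from rfl, h2, finsum_mem_coe_finset]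
      exact Finset.sum_congr rfl fun γ _ => hprod γ
    rw [h3]
    exact hmain.symm
end
end

section
/- Fix p ∈ V and let α : V → ℝ[y_1,…,y_m] satisfy: (i) every value α(q) is zero or homogeneous of degree λ(p); (ii) α(q) = 0 for every q ≠ p with λ(q) ≤ λ(p); (iii) for every edge (r,q) ∈ 𝓔, the linear form η(r,q) divides α(q) − α(r). Then α(q) = 0 for every q ∈ V such that there is no ascending path from p to q. -/
open scoped Classical

open MvPolynomial Finset in
lemma aux_td_mul {σ R : Type*} [CommRing R] [IsDomain R] {g h : MvPolynomial σ R}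
    (hg : g ≠ 0) (hh : h ≠ 0) :
    (g * h).totalDegree = g.totalDegree + h.totalDegree := by
  set K := g.totalDegree with hK
  set L := h.totalDegree with hL
  refine le_antisymm (totalDegree_mul g h) ?_
  have hcomp_ne : ∀ (p : MvPolynomial σ R), p ≠ 0 →
      homogeneousComponent p.totalDegree p ≠ 0 := by
    intro p hp
    obtain ⟨d, hd, hde⟩ := p.support.exists_mem_eq_sup
      (MvPolynomial.support_nonempty.mpr hp) (fun s => s.sum fun _ e => e)
    have hdeg : d.degree = p.totalDegree := by
      rw [Finsupp.degree]
      rw [totalDegree, hde]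
      rfl
    intro hzero
    have := coeff_homogeneousComponent (φ := p) p.totalDegree d
    rw [hzero, if_pos hdeg] at this
    exact (MvPolynomial.mem_support_iff.mp hd) this.symm
  have hgK : homogeneousComponent K g ≠ 0 := hcomp_ne g hg
  have hhL : homogeneousComponent L h ≠ 0 := hcomp_ne h hh
  have step : ∀ i ∈ Finset.range (K + 1), ∀ j ∈ Finset.range (L + 1),
      homogeneousComponent (K + L) (homogeneousComponent i g * homogeneousComponent j h)
      = if i = K ∧ j = L then homogeneousComponent K g * homogeneousComponent L h else 0 := by
    intro i hi j hj
    have hmem : (homogeneousComponent i g * homogeneousComponent j h) ∈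
        homogeneousSubmodule σ R (i + j) :=
      (homogeneousComponent_isHomogeneous i g).mul (homogeneousComponent_isHomogeneous j h)
    rw [homogeneousComponent_of_mem hmem]
    simp only [Finset.mem_range] at hi hj
    by_cases hKL : K + L = i + j
    · have hij : i = K ∧ j = L := by omega
      rw [if_pos hKL, if_pos hij, hij.1, hij.2]
    · rw [if_neg hKL, if_neg (by omega)]
  have hcomp : homogeneousComponent (K + L) (g * h)
      = homogeneousComponent K g * homogeneousComponent L h := by
    conv_lhs => rw [← sum_homogeneousComponent g, ← sum_homogeneousComponent h,
      Finset.sum_mul_sum]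
    rw [map_sum]
    rw [Finset.sum_congr rfl fun i _ => map_sum (homogeneousComponent (K + L)) _ _]
    rw [Finset.sum_congr rfl fun i hi => Finset.sum_congr rfl fun j hj => step i hi j hj]
    rw [Finset.sum_congr rfl (g := fun i => if i = K then
        homogeneousComponent K g * homogeneousComponent L h else 0) ?_]
    · simp
    · intro i _
      by_cases hiK : i = K
      · subst hiK
        simp
      · simp [hiK]
  by_contra hlt
  push_neg at hlt
  exact (hcomp ▸ mul_ne_zero hgK hhL) (homogeneousComponent_eq_zero _ _ hlt)

open MvPolynomial in
lemma aux_unit_C {σ : Type*} {u : MvPolynomial σ ℝ} (hu : IsUnit u) :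
    ∃ c : ℝ, u = C c := by
  obtain ⟨v, hv⟩ := hu.exists_right_inv
  have hu0 : u ≠ 0 := by rintro rfl; simp at hv
  have hv0 : v ≠ 0 := by rintro rfl; simp at hv
  have : u.totalDegree + v.totalDegree = 0 := by
    rw [← aux_td_mul hu0 hv0, hv, totalDegree_one]
  have hdu : u.totalDegree = 0 := by omega
  refine ⟨u.coeff 0, ?_⟩
  ext d
  by_cases hd : d = 0
  · simp [hd]
  · rw [coeff_C, if_neg (Ne.symm hd)]
    by_contra hc
    have := le_totalDegree (p := u) (s := d) (by simpa using hc)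
    rw [hdu, Nat.le_zero] at this
    apply hd
    ext i
    by_cases hi : i ∈ d.support
    · rw [Finsupp.sum, Finset.sum_eq_zero_iff] at this
      exact this i hi
    · simpa using hi
  
open MvPolynomial in
lemma aux_prime {σ : Type*} {f : MvPolynomial σ ℝ} (hf0 : f ≠ 0)
    (hf : f.IsHomogeneous 1) : Prime f := by
  rw [← UniqueFactorizationMonoid.irreducible_iff_prime]
  have htd : f.totalDegree = 1 := hf.totalDegree hf0
  constructor
  · intro hu
    obtain ⟨c, hc⟩ := aux_unit_C hu
    rw [hc, totalDegree_C] at htd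
    exact one_ne_zero htd.symm
  · intro g h hgh
    have hg0 : g ≠ 0 := by rintro rfl; rw [zero_mul] at hgh; exact hf0 hgh
    have hh0 : h ≠ 0 := by rintro rfl; rw [mul_zero] at hgh; exact hf0 hgh
    have : g.totalDegree + h.totalDegree = 1 := by
      rw [← aux_td_mul hg0 hh0, ← hgh, htd]
    rcases Nat.eq_zero_or_pos g.totalDegree with hg | hg
    · left
      have : IsHomogeneous g 0 := (totalDegree_zero_iff_isHomogeneous (σ := σ)).mp hg
      obtain ⟨c, hc⟩ : ∃ c : ℝ, g = C c := by
        refine ⟨g.coeff 0, ?_⟩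
        ext d
        by_cases hd : d = 0
        · simp [hd]
        · rw [coeff_C, if_neg (Ne.symm hd)]
          refine this.coeff_eq_zero ?_
          simpa [Finsupp.degree_eq_zero_iff] using hd
      have hc0 : c ≠ 0 := by rintro rfl; simp [hc] at hg0
      rw [hc]
      exact (isUnit_iff_ne_zero.mpr hc0).map (C : ℝ →+* MvPolynomial σ ℝ)
    · right
      have hh : h.totalDegree = 0 := by omega
      have : IsHomogeneous h 0 := (totalDegree_zero_iff_isHomogeneous (σ := σ)).mp hh
      obtain ⟨c, hc⟩ : ∃ c : ℝ, h = C c := by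
        refine ⟨h.coeff 0, ?_⟩
        ext d
        by_cases hd : d = 0
        · simp [hd]
        · rw [coeff_C, if_neg (Ne.symm hd)]
          refine this.coeff_eq_zero ?_
          simpa [Finsupp.degree_eq_zero_iff] using hd
      have hc0 : c ≠ 0 := by rintro rfl; simp [hc] at hh0
      rw [hc]
      exact (isUnit_iff_ne_zero.mpr hc0).map (C : ℝ →+* MvPolynomial σ ℝ)

lemma aux_prod_dvd {R ι : Type*} [CommRing R] [IsDomain R] (S : Finset ι) (f : ι → R) (a : R)
    (hp : ∀ i ∈ S, Prime (f i))
    (hna : ∀ i ∈ S, ∀ j ∈ S, i ≠ j → ¬ Associated (f i) (f j))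
    (hd : ∀ i ∈ S, f i ∣ a) : (∏ i ∈ S, f i) ∣ a := by
  classical
  induction S using Finset.induction_on with
  | empty => simpa using one_dvd a
  | @insert i S hi IH =>
    rw [Finset.prod_insert hi]
    obtain ⟨b, hb⟩ := IH (fun j hj => hp j (Finset.mem_insert_of_mem hj))
      (fun j hj k hk hjk => hna j (Finset.mem_insert_of_mem hj) k (Finset.mem_insert_of_mem hk) hjk)
      (fun j hj => hd j (Finset.mem_insert_of_mem hj))
    have hpi : Prime (f i) := hp i (Finset.mem_insert_self i S)
    have hndvd : ¬ f i ∣ ∏ j ∈ S, f j := by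
      intro hdvd
      obtain ⟨j, hj, hij⟩ := (hpi.dvd_finset_prod_iff f).mp hdvd
      exact hna i (Finset.mem_insert_self i S) j (Finset.mem_insert_of_mem hj)
        (by rintro rfl; exact hi hj) (hpi.associated_of_dvd (hp j (Finset.mem_insert_of_mem hj)) hij)
    have : f i ∣ (∏ j ∈ S, f j) * b := hb ▸ hd i (Finset.mem_insert_self i S)
    rcases hpi.2.2 _ _ this with h | h
    · exact absurd h hndvd
    · obtain ⟨c, rfl⟩ := h
      exact ⟨c, by rw [hb]; ring⟩

/-
STATEMENT 3 (GKM-graph model of Lemma 1.8): given a GKM graph `(V, 𝓔)` with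
weights `η`, a Morse function `φ`, index `λ(q) = #{(r,q) ∈ 𝓔 : φ(r) < φ(q)}`,
and a class `α` as in the statement, then `α(q) = 0` whenever there is no
ascending path from `p` to `q`.
-/
theorem stmt_3 {m : ℕ} {V : Type*} [Fintype V]
    (𝓔 : V → V → Prop)
    (hsymm : ∀ p q, 𝓔 p q ↔ 𝓔 q p)
    (hirr : ∀ p, ¬ 𝓔 p p)
    (η : V → V → MvPolynomial (Fin m) ℝ)
    (hη0 : ∀ p q, 𝓔 p q → η p q ≠ 0)
    (hηlin : ∀ p q, 𝓔 p q → (η p q).IsHomogeneous 1)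
    (hηanti : ∀ p q, 𝓔 p q → η q p = - η p q)
    (hnonprop : ∀ q r r', 𝓔 r q → 𝓔 r' q → r ≠ r' → ∀ c : ℝ, η r q ≠ c • η r' q)
    (φ : V → ℝ)
    (lam : V → ℕ)
    (hlam : ∀ q, lam q = (Finset.univ.filter (fun r => 𝓔 r q ∧ φ r < φ q)).card)
    (p : V)
    (α : V → MvPolynomial (Fin m) ℝ)
    (hhom : ∀ q, α q = 0 ∨ (α q).IsHomogeneous (lam p))
    (hvanish : ∀ q, q ≠ p → lam q ≤ lam p → α q = 0)
    (hdvd : ∀ r q, 𝓔 r q → η r q ∣ (α q - α r)) :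
    ∀ q : V,
      (¬ ∃ (k : ℕ) (γ : Fin (k + 1) → V), γ 0 = p ∧ γ (Fin.last k) = q ∧
        ∀ i : Fin k, 𝓔 (γ i.castSucc) (γ i.succ) ∧ φ (γ i.castSucc) < φ (γ i.succ)) →
      α q = 0 := by
  classical
  set Reach : V → Prop := fun v => ∃ (k : ℕ) (γ : Fin (k + 1) → V), γ 0 = p ∧
      γ (Fin.last k) = v ∧
      ∀ i : Fin k, 𝓔 (γ i.castSucc) (γ i.succ) ∧ φ (γ i.castSucc) < φ (γ i.succ) with hRdef
  have hReachp : Reach p := ⟨0, fun _ => p, rfl, rfl, fun i => i.elim0⟩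
  have hext : ∀ r q, Reach r → 𝓔 r q → φ r < φ q → Reach q := by
    rintro r q ⟨k, γ, h0, hlast, hstep⟩ he hφ
    refine ⟨k + 1, Fin.snoc γ q, ?_, ?_, ?_⟩
    · rw [show (0 : Fin (k + 2)) = Fin.castSucc 0 from (Fin.castSucc_zero).symm,
        Fin.snoc_castSucc]
      exact h0
    · simp
    · intro i
      induction i using Fin.lastCases with
      | last =>
        rw [Fin.snoc_castSucc, Fin.succ_last, Fin.snoc_last, hlast]
        exact ⟨he, hφ⟩
      | cast j =>
        rw [Fin.snoc_castSucc, Fin.succ_castSucc, Fin.snoc_castSucc]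
        exact hstep j
  set μ : V → ℕ := fun q => (Finset.univ.filter (fun r => φ r < φ q)).card with hμdef
  have hμ : ∀ r q, φ r < φ q → μ r < μ q := by
    intro r q h
    apply Finset.card_lt_card
    constructor
    · intro s hs
      simp only [Finset.mem_filter, Finset.mem_univ, true_and] at hs ⊢
      exact hs.trans h
    · intro hsub
      have hr : r ∈ Finset.univ.filter (fun s => φ s < φ q) := by
        simp only [Finset.mem_filter, Finset.mem_univ, true_and]; exact h
      have := hsub hr
      simp only [Finset.mem_filter, Finset.mem_univ, true_and] at this
      exact lt_irrefl _ this
  have key : ∀ n q, μ q = n → ¬ Reach q → α q = 0 := by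
    intro n
    induction n using Nat.strong_induction_on with
    | _ n IH =>
      intro q hμq hnr
      by_contra h0
      have hqp : q ≠ p := by rintro rfl; exact hnr hReachp
      have hlam_gt : lam p < lam q := by
        by_contra hle
        push_neg at hle
        exact h0 (hvanish q hqp hle)
      set S := Finset.univ.filter (fun r => 𝓔 r q ∧ φ r < φ q) with hSdef
      have hαr : ∀ r ∈ S, α r = 0 := by
        intro r hr
        rw [hSdef, Finset.mem_filter] at hr
        obtain ⟨-, he, hφr⟩ := hr
        exact IH (μ r) (hμq ▸ hμ r q hφr) r rfl (fun hR => hnr (hext r q hR he hφr))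
      have hdvd' : ∀ r ∈ S, η r q ∣ α q := by
        intro r hr
        have h1 := hdvd r q (Finset.mem_filter.mp hr).2.1
        rwa [hαr r hr, sub_zero] at h1
      have hprime : ∀ r ∈ S, Prime (η r q) := by
        intro r hr
        rw [hSdef, Finset.mem_filter] at hr
        exact aux_prime (hη0 r q hr.2.1) (hηlin r q hr.2.1)
      have hassoc : ∀ r ∈ S, ∀ r' ∈ S, r ≠ r' → ¬ Associated (η r q) (η r' q) := by
        intro r hr r' hr' hne hA
        rw [hSdef, Finset.mem_filter] at hr hr'
        obtain ⟨u, hu⟩ := hA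
        obtain ⟨c, hc⟩ := aux_unit_C u.isUnit
        exact hnonprop q r' r hr'.2.1 hr.2.1 hne.symm c
          (by rw [MvPolynomial.smul_eq_C_mul, ← hu, hc]; ring)
      obtain ⟨b, hb⟩ := aux_prod_dvd S (fun r => η r q) (α q) hprime hassoc hdvd'
      have hP0 : (∏ r ∈ S, η r q) ≠ 0 := by
        rw [Finset.prod_ne_zero_iff]
        intro r hr
        rw [hSdef, Finset.mem_filter] at hr
        exact hη0 r q hr.2.1
      have hb0 : b ≠ 0 := by rintro rfl; rw [mul_zero] at hb; exact h0 hb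
      have hPhom : (∏ r ∈ S, η r q).IsHomogeneous S.card := by
        have h2 := MvPolynomial.IsHomogeneous.prod S (fun r => η r q) (fun _ => 1)
          (fun r hr => hηlin r q (Finset.mem_filter.mp hr).2.1)
        simpa using h2
      have hαhom : (α q).IsHomogeneous (lam p) := (hhom q).resolve_left h0
      have h1 : (α q).totalDegree = lam p := hαhom.totalDegree h0
      have h2 : (∏ r ∈ S, η r q).totalDegree = S.card := hPhom.totalDegree hP0
      have h3 := aux_td_mul hP0 hb0
      rw [← hb] at h3
      have h4 : lam q = S.card := hlam q
      omega
  intro q hq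
  exact key (μ q) q rfl hq
end

section
/- For every ascending path v_1 ≺ v_2 ≺ ⋯ ≺ v_{m+1} in U, define P = Λ_{v_{m+1}} · Π_{i=1}^{m} (v_{i+1} − v_i) / ((v_{m+1} − v_i) · η(v_i, v_{i+1})), an element of the field of fractions of ℝ[y_1,…,y_n]. Then P = c · Π_{r ∈ SV} η(r, v_{m+1}), where c = 1/2 if the path is incomplete and c ∈ {1, 2} if the path is complete. -/
open scoped Classical

noncomputable section

/-
Model of `U = {±e_1, …, ±e_n}` with the total order
`-e_1 ≺ -e_2 ≺ ⋯ ≺ -e_n ≺ e_n ≺ ⋯ ≺ e_1`: position `k ∈ Fin (2n)` corresponds to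
`-e_{k+1}` when `k < n`, and to `e_{2n-k}` otherwise.  Integer vectors are
identified with linear forms in `ℝ[y_1, …, y_n]`.
-/

/-- The index `j` such that the element of `U` at position `k` is `±e_j`. -/
def posIdxU (n : ℕ) (k : Fin (2 * n)) : Fin n :=
  if h : (k : ℕ) < n then ⟨k, h⟩ else ⟨2 * n - 1 - k, by have := k.2; omega⟩

/-- The position of the antipode: `u ↦ -u` on `U`. -/
def mirrorU (n : ℕ) (k : Fin (2 * n)) : Fin (2 * n) :=
  ⟨2 * n - 1 - k, by have := k.2; omega⟩

/-- The element of `U` at position `k`, as a linear form. -/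
def LU (n : ℕ) (k : Fin (2 * n)) : MvPolynomial (Fin n) ℝ :=
  if (k : ℕ) < n then - MvPolynomial.X (posIdxU n k) else MvPolynomial.X (posIdxU n k)

/-- The label `η(r, s)` for `r ≺ s` in `U`: equal to `s - r` when `s ≠ -r`, and to
`e_j` on the antipodal pair `(-e_j, e_j)`. -/
def etaU (n : ℕ) (r s : Fin (2 * n)) : MvPolynomial (Fin n) ℝ :=
  if s = mirrorU n r then MvPolynomial.X (posIdxU n s) else LU n s - LU n r

/-- `Λ_s = ∏_{r ≺ s} η(r, s)`. -/
def LamU (n : ℕ) (s : Fin (2 * n)) : MvPolynomial (Fin n) ℝ :=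
  ∏ r ∈ Finset.univ.filter (fun r => r < s), etaU n r s

lemma lu_sub_ne_zero (n : ℕ) {r s : Fin (2*n)} (h : r < s) : LU n s - LU n r ≠ 0 := by
  have hr := r.2; have hs := s.2
  have hlt : (r:ℕ) < s := h
  intro hc
  have := congrArg (MvPolynomial.eval (fun j => if j = posIdxU n s then (1:ℝ) else 0)) hc
  simp only [map_sub, MvPolynomial.eval_zero, LU, posIdxU] at this
  split_ifs at this <;>
    simp_all [MvPolynomial.eval_X, Fin.mk.injEq] <;>
    split_ifs at this <;> simp_all [Fin.mk.injEq] <;> omega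

lemma eta_mul (n : ℕ) {r s : Fin (2*n)} (h : r < s) :
    (if s = mirrorU n r then (2:MvPolynomial (Fin n) ℝ) else 1) * etaU n r s
      = LU n s - LU n r := by
  have hr := r.2; have hs := s.2
  have hlt : (r:ℕ) < s := h
  unfold etaU
  split_ifs with hm
  · have hval : (s:ℕ) = 2*n - 1 - r := congrArg Fin.val hm
    have hrn : (r:ℕ) < n := by omega
    have hsn : ¬ (s:ℕ) < n := by omega
    have hidx : posIdxU n s = posIdxU n r := by
      simp only [posIdxU, dif_pos hrn, dif_neg hsn, Fin.mk.injEq]; omega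
    rw [hidx, LU, LU, if_pos hrn, if_neg hsn, hidx]
    ring
  · rw [one_mul]

lemma mirror_mirror (n : ℕ) (k : Fin (2*n)) : mirrorU n (mirrorU n k) = k := by
  have := k.2
  apply Fin.ext
  simp only [mirrorU]
  omega

lemma mirror_eq_comm (n : ℕ) {r s : Fin (2*n)} : s = mirrorU n r ↔ r = mirrorU n s := by
  constructor <;> intro h <;> rw [h, mirror_mirror]

lemma div_aux1 {K : Type*} [Field K] (c d e : K) (he : e ≠ 0) :
    (c * e) / (d * e) = c / d := mul_div_mul_right _ _ he

lemma div_aux2 {K : Type*} [Field K] (b c d : K) (hd : d ≠ 0) :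
    d / b * (c / d) = c / b := by
  rw [div_mul_div_comm, mul_comm d c, mul_div_mul_right _ _ hd]

lemma prod_ite_unique {m : ℕ} {M : Type*} [CommMonoid M] (a : M) (P : Fin m → Prop)
    [DecidablePred P] (hu : ∀ i j, P i → P j → i = j) :
    ∏ i, (if P i then a else 1) = if ∃ i, P i then a else 1 := by
  by_cases h : ∃ i, P i
  · obtain ⟨i0, h0⟩ := h
    rw [if_pos ⟨i0, h0⟩, Finset.prod_eq_single i0]
    · rw [if_pos h0]
    · intro j _ hj
      exact if_neg (fun hPj => hj (hu j i0 hPj h0))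
    · simp
  · rw [if_neg h]
    exact Finset.prod_eq_one fun i _ => if_neg (fun hp => h ⟨i, hp⟩)

theorem stmt_8 (n : ℕ) (hn : 1 ≤ n) (m : ℕ)
    (v : Fin (m + 1) → Fin (2 * n)) (hv : StrictMono v) :
    let K := FractionRing (MvPolynomial (Fin n) ℝ)
    let ι : MvPolynomial (Fin n) ℝ →+* K := algebraMap _ _
    let P : K := ι (LamU n (v (Fin.last m))) *
      ∏ i : Fin m, ι (LU n (v i.succ) - LU n (v i.castSucc)) /
        (ι (LU n (v (Fin.last m)) - LU n (v i.castSucc)) *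
          ι (etaU n (v i.castSucc) (v i.succ)))
    let SV : Finset (Fin (2 * n)) :=
      Finset.univ.filter (fun r => r < v (Fin.last m) ∧ ∀ i, v i ≠ r)
    let prodSV : K := ι (∏ r ∈ SV, etaU n r (v (Fin.last m)))
    let incomplete : Prop :=
      (∃ i : Fin m, v i.castSucc = mirrorU n (v (Fin.last m))) ∧
        ∀ i : Fin m, v i.succ ≠ mirrorU n (v i.castSucc)
    (incomplete → P = (1 / 2 : K) * prodSV) ∧
      (¬ incomplete → P = prodSV ∨ P = 2 * prodSV) := by
  intro K ι P SV prodSV incomplete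
  have hinj : Function.Injective ι := IsFractionRing.injective _ _
  set t := v (Fin.last m) with ht
  have hD : ∀ {r s : Fin (2*n)}, r < s → ι (LU n s - LU n r) ≠ 0 := by
    intro r s h hc
    exact lu_sub_ne_zero n h (by rwa [← map_zero ι, hinj.eq_iff] at hc)
  have hEta : ∀ {r s : Fin (2*n)}, r < s →
      (if s = mirrorU n r then (2:K) else 1) * ι (etaU n r s) = ι (LU n s - LU n r) := by
    intro r s h
    have := congrArg ι (eta_mul n h)
    rwa [map_mul, apply_ite ι, map_one, map_ofNat] at this
  have hIte : ∀ (p : Prop) [Decidable p], (if p then (2:K) else 1) ≠ 0 := by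
    intro p _; split <;> simp
  have hvm : ∀ i : Fin m, v i.castSucc < t := fun i => hv (Fin.castSucc_lt_last i)
  have hvs : ∀ i : Fin m, v i.castSucc < v i.succ := fun i => hv (Fin.castSucc_lt_succ (i := i))
  -- Step 1: each product factor
  have hfac : ∀ i : Fin m,
      ι (LU n (v i.succ) - LU n (v i.castSucc)) /
        (ι (LU n t - LU n (v i.castSucc)) * ι (etaU n (v i.castSucc) (v i.succ)))
      = (if v i.succ = mirrorU n (v i.castSucc) then (2:K) else 1) /
          ι (LU n t - LU n (v i.castSucc)) := by
    intro i
    have h1 := hEta (hvs i)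
    have hne : ι (etaU n (v i.castSucc) (v i.succ)) ≠ 0 := fun hc => by
      rw [hc, mul_zero] at h1; exact hD (hvs i) h1.symm
    rw [← h1]
    exact div_aux1 _ _ _ hne
  -- Step 2: split Λ
  have hsplit : (Finset.univ.filter (fun r => r < t)) =
      SV ∪ Finset.image (fun i : Fin m => v i.castSucc) Finset.univ := by
    ext r
    simp only [Finset.mem_filter, Finset.mem_univ, true_and, Finset.mem_union,
      Finset.mem_image, SV]
    constructor
    · intro hr
      by_cases he : ∃ i : Fin m, v i.castSucc = r
      · exact Or.inr (by simpa using he)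
      · refine Or.inl ⟨hr, fun i => ?_⟩
        induction i using Fin.lastCases with
        | last => exact fun hc => absurd hc.symm (ne_of_lt hr)
        | cast j => exact fun hc => he ⟨j, hc⟩
    · rintro (⟨hr, _⟩ | ⟨i, _, rfl⟩)
      · exact hr
      · exact hvm i
  have hdisj : Disjoint SV (Finset.image (fun i : Fin m => v i.castSucc) Finset.univ) := by
    rw [Finset.disjoint_left]
    intro r hr hr'
    simp only [Finset.mem_filter, SV] at hr
    obtain ⟨i, -, rfl⟩ := Finset.mem_image.mp hr'
    exact hr.2.2 i.castSucc rfl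
  have hinjc : ∀ i ∈ (Finset.univ : Finset (Fin m)), ∀ j ∈ Finset.univ,
      v i.castSucc = v j.castSucc → i = j := by
    intro i _ j _ h
    exact Fin.castSucc_injective m (hv.injective h)
  have hLam : ι (LamU n t) = prodSV * ∏ i : Fin m, ι (etaU n (v i.castSucc) t) := by
    show ι (LamU n t) = ι (∏ r ∈ SV, etaU n r t) * ∏ i : Fin m, ι (etaU n (v i.castSucc) t)
    rw [← map_prod, ← map_mul]
    congr 1
    rw [LamU, hsplit, Finset.prod_union hdisj, Finset.prod_image hinjc]
  -- Step 3: eta of (v i, t)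
  have hEtaT : ∀ i : Fin m,
      ι (etaU n (v i.castSucc) t) =
        ι (LU n t - LU n (v i.castSucc)) /
          (if t = mirrorU n (v i.castSucc) then (2:K) else 1) := by
    intro i
    have h1 := hEta (hvm i)
    rw [← h1, mul_comm, mul_div_assoc, div_self (hIte _), mul_one]
  -- Combine
  have hP : P = prodSV *
      ((if ∃ i : Fin m, v i.succ = mirrorU n (v i.castSucc) then (2:K) else 1) /
        (if ∃ i : Fin m, t = mirrorU n (v i.castSucc) then (2:K) else 1)) := by
    have hstep : P = prodSV * ∏ i : Fin m,
        ((if v i.succ = mirrorU n (v i.castSucc) then (2:K) else 1) /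
          (if t = mirrorU n (v i.castSucc) then (2:K) else 1)) := by
      rw [show P = ι (LamU n t) * ∏ i : Fin m,
          ι (LU n (v i.succ) - LU n (v i.castSucc)) /
            (ι (LU n t - LU n (v i.castSucc)) * ι (etaU n (v i.castSucc) (v i.succ)))
          from rfl]
      rw [Finset.prod_congr rfl (fun i _ => hfac i), hLam]
      rw [mul_assoc, ← Finset.prod_mul_distrib]
      congr 1
      refine Finset.prod_congr rfl (fun i _ => ?_)
      rw [hEtaT i]
      exact div_aux2 _ _ _ (hD (hvm i))
    rw [hstep, Finset.prod_div_distrib,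
      prod_ite_unique (2:K) (fun i => v i.succ = mirrorU n (v i.castSucc)) ?_,
      prod_ite_unique (2:K) (fun i => t = mirrorU n (v i.castSucc)) ?_]
    · -- uniqueness for the Pb condition
      intro i j hi hj
      exact Fin.castSucc_injective m (hv.injective
        (((mirror_eq_comm n).mp hi).trans ((mirror_eq_comm n).mp hj).symm))
    · -- uniqueness for the Pc condition
      intro i j hi hj
      have hi' : (v i.succ : ℕ) = 2*n - 1 - (v i.castSucc : ℕ) := congrArg Fin.val hi
      have hj' : (v j.succ : ℕ) = 2*n - 1 - (v j.castSucc : ℕ) := congrArg Fin.val hj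
      have h2i := (v i.castSucc).2
      have h2j := (v j.castSucc).2
      have hsi : (v i.castSucc : ℕ) < v i.succ := hvs i
      have hsj : (v j.castSucc : ℕ) < v j.succ := hvs j
      by_contra hne
      rcases lt_or_gt_of_ne hne with h | h
      · have hij : (i:ℕ) < j := h
        have h1 : (v i.succ : ℕ) ≤ v j.castSucc := hv.monotone (by
          simp only [Fin.le_def, Fin.val_succ, Fin.coe_castSucc]; omega)
        omega
      · have hij : (j:ℕ) < i := h
        have h1 : (v j.succ : ℕ) ≤ v i.castSucc := hv.monotone (by
          simp only [Fin.le_def, Fin.val_succ, Fin.coe_castSucc]; omega)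
        omega
  have hBiff : (∃ i : Fin m, t = mirrorU n (v i.castSucc)) ↔
      (∃ i : Fin m, v i.castSucc = mirrorU n t) :=
    exists_congr fun i => mirror_eq_comm n
  have hInc : incomplete = ((∃ i : Fin m, v i.castSucc = mirrorU n t) ∧
      ∀ i : Fin m, v i.succ ≠ mirrorU n (v i.castSucc)) := rfl
  constructor
  · intro hi
    rw [hInc] at hi
    obtain ⟨hb, hc⟩ := hi
    rw [hP, if_pos (hBiff.mpr hb), if_neg (by simpa using hc)]
    ring
  · intro hi
    rw [hInc] at hi
    push_neg at hi
    by_cases hb : ∃ i : Fin m, v i.castSucc = mirrorU n t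
    · obtain ⟨i0, hc⟩ := hi hb
      rw [hP, if_pos (hBiff.mpr hb), if_pos ⟨i0, hc⟩]
      left
      rw [div_self (two_ne_zero), mul_one]
    · rw [hP, if_neg (fun h => hb (hBiff.mp h))]
      by_cases hc : ∃ i : Fin m, v i.succ = mirrorU n (v i.castSucc)
      · right; rw [if_pos hc]; ring
      · left; rw [if_neg hc]; ring
end
end

section
/- For every ascending D-path v_1 ≺ v_2 ≺ ⋯ ≺ v_{m+1} in U, define P = Λ^D_{v_{m+1}} · Π_{i=1}^{m} (v_{i+1} − v_i) / ((v_{m+1} − v_i) · (v_{i+1} − v_i)) in the field of fractions of ℝ[y_1,…,y_n]. If the path is complete then P = Π_{r ∈ SV, r ≠ −v_{m+1}} (v_{m+1} − r), and if the path is incomplete then P = (1/(2·v_{m+1})) · Π_{r ∈ SV} (v_{m+1} − r). -/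
open scoped Classical

noncomputable section

/-
STATEMENT 9: for every ascending D-path `v_1 ≺ ⋯ ≺ v_{m+1}` in `U` (no step joins
antipodal elements), the element
`P = Λ^D_{v_{m+1}} · ∏_{i=1}^{m} (v_{i+1} − v_i) / ((v_{m+1} − v_i)·(v_{i+1} − v_i))`
of the field of fractions of `ℝ[y_1, …, y_n]`, where
`Λ^D_s = ∏_{r ≺ s, r ≠ -s} (s - r)`, equals `∏_{r ∈ SV, r ≠ -v_{m+1}}(v_{m+1} - r)`
if the path is complete, and `(1/(2·v_{m+1})) · ∏_{r ∈ SV}(v_{m+1} - r)` if the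
path is incomplete.
-/
lemma coe_mirrorU (n : ℕ) (k : Fin (2 * n)) : (mirrorU n k : ℕ) = 2 * n - 1 - k := rfl

lemma coe_posIdxU (n : ℕ) (k : Fin (2 * n)) :
    (posIdxU n k : ℕ) = if (k : ℕ) < n then (k : ℕ) else 2 * n - 1 - k := by
  unfold posIdxU
  by_cases h : (k : ℕ) < n <;> simp [h]

lemma posIdxU_mirrorU (n : ℕ) (k : Fin (2 * n)) : posIdxU n (mirrorU n k) = posIdxU n k := by
  have hk := k.2
  ext
  rw [coe_posIdxU, coe_posIdxU, coe_mirrorU]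
  by_cases h : (k : ℕ) < n
  · have h2 : ¬ (2 * n - 1 - (k : ℕ) < n) := by omega
    simp [h, h2]; omega
  · have h2 : 2 * n - 1 - (k : ℕ) < n := by omega
    simp [h, h2]

lemma LU_mirrorU (n : ℕ) (k : Fin (2 * n)) : LU n (mirrorU n k) = - LU n k := by
  have hk := k.2
  unfold LU
  rw [posIdxU_mirrorU, coe_mirrorU]
  by_cases h : (k : ℕ) < n
  · have h2 : ¬ (2 * n - 1 - (k : ℕ) < n) := by omega
    simp [h, h2]
  · have h2 : 2 * n - 1 - (k : ℕ) < n := by omega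
    simp [h, h2]

lemma LU_injective (n : ℕ) : Function.Injective (LU n) := by
  intro k l h
  have hk := k.2; have hl := l.2
  unfold LU at h
  by_cases h1 : (k : ℕ) < n <;> by_cases h2 : (l : ℕ) < n
  · rw [if_pos h1, if_pos h2, neg_inj] at h
    have := MvPolynomial.X_injective h
    have := congrArg (Fin.val) this
    rw [coe_posIdxU, coe_posIdxU] at this
    simp [h1, h2] at this
    exact Fin.ext this
  · rw [if_pos h1, if_neg h2] at h
    have := congrArg (MvPolynomial.eval (fun _ => (1 : ℝ))) h
    norm_num at this
  · rw [if_neg h1, if_pos h2] at h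
    have := congrArg (MvPolynomial.eval (fun _ => (1 : ℝ))) h
    norm_num at this
  · rw [if_neg h1, if_neg h2] at h
    have := MvPolynomial.X_injective h
    have := congrArg (Fin.val) this
    rw [coe_posIdxU, coe_posIdxU] at this
    simp [h1, h2] at this
    exact Fin.ext (by omega)

lemma LU_ne_zero (n : ℕ) (k : Fin (2 * n)) : LU n k ≠ 0 := by
  unfold LU
  by_cases h : (k : ℕ) < n <;> simp [h, MvPolynomial.X_ne_zero]

theorem stmt_9 (n : ℕ) (hn : 2 ≤ n) (m : ℕ)
    (v : Fin (m + 1) → Fin (2 * n)) (hv : StrictMono v)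
    (hD : ∀ i : Fin m, v i.succ ≠ mirrorU n (v i.castSucc)) :
    let K := FractionRing (MvPolynomial (Fin n) ℝ)
    let ι : MvPolynomial (Fin n) ℝ →+* K := algebraMap _ _
    let LamD : K := ι (∏ r ∈ Finset.univ.filter
        (fun r => r < v (Fin.last m) ∧ r ≠ mirrorU n (v (Fin.last m))),
        (LU n (v (Fin.last m)) - LU n r))
    let P : K := LamD *
      ∏ i : Fin m, ι (LU n (v i.succ) - LU n (v i.castSucc)) /
        (ι (LU n (v (Fin.last m)) - LU n (v i.castSucc)) *
          ι (LU n (v i.succ) - LU n (v i.castSucc)))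
    let SV : Finset (Fin (2 * n)) :=
      Finset.univ.filter (fun r => r < v (Fin.last m) ∧ ∀ i, v i ≠ r)
    let incomplete : Prop := ∃ i : Fin m, v i.castSucc = mirrorU n (v (Fin.last m))
    (¬ incomplete →
      P = ι (∏ r ∈ SV.filter (fun r => r ≠ mirrorU n (v (Fin.last m))),
        (LU n (v (Fin.last m)) - LU n r))) ∧
    (incomplete →
      P = ι (∏ r ∈ SV, (LU n (v (Fin.last m)) - LU n r)) /
        (2 * ι (LU n (v (Fin.last m))))) := by
  intro K ι LamD P SV incomplete
  have hι : Function.Injective ι := IsFractionRing.injective _ _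
  have hLne : ∀ {k l : Fin (2 * n)}, k ≠ l → LU n k - LU n l ≠ 0 := by
    intro k l h
    exact sub_ne_zero.mpr (fun e => h (LU_injective n e))
  have hvne : ∀ i : Fin m, v i.castSucc ≠ v (Fin.last m) := fun i =>
    ne_of_lt (hv (Fin.castSucc_lt_last i))
  have hvinj : Function.Injective fun i : Fin m => v i.castSucc :=
    fun a b hab => Fin.castSucc_injective m (hv.injective hab)
  -- the product over path vertices below the top
  set Q : MvPolynomial (Fin n) ℝ :=
    ∏ i : Fin m, (LU n (v (Fin.last m)) - LU n (v i.castSucc)) with hQdef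
  have hQ : Q ≠ 0 := by
    rw [hQdef]
    exact Finset.prod_ne_zero_iff.mpr fun i _ => hLne (hvne i).symm
  have hιQ : ι Q ≠ 0 := by
    rwa [map_ne_zero_iff ι hι]
  -- Step A : P = LamD / ι Q
  have hP : P = LamD / ι Q := by
    unfold P
    rw [hQdef, map_prod, div_eq_mul_inv, ← Finset.prod_inv_distrib]
    congr 1
    refine Finset.prod_congr rfl fun i _ => ?_
    have ha : ι (LU n (v i.succ) - LU n (v i.castSucc)) ≠ 0 := by
      rw [map_ne_zero_iff ι hι]
      exact hLne (ne_of_gt (hv (Fin.castSucc_lt_succ (i := i))))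
    rw [mul_comm, div_mul_cancel_left₀ ha]
  -- image of path vertices below the top
  set A : Finset (Fin (2 * n)) :=
    Finset.univ.image (fun i : Fin m => v i.castSucc) with hAdef
  have hprodA : ∏ r ∈ A, (LU n (v (Fin.last m)) - LU n r) = Q := by
    rw [hAdef, hQdef]
    exact Finset.prod_image (fun a _ b _ h => hvinj h)
  constructor
  · -- complete case
    intro hc
    have hcm : ∀ i : Fin m, v i.castSucc ≠ mirrorU n (v (Fin.last m)) := by
      unfold incomplete at hc
      push_neg at hc
      exact hc
    have hdisj : Disjoint A (SV.filter (fun r => r ≠ mirrorU n (v (Fin.last m)))) := by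
      rw [Finset.disjoint_left]
      intro r hrA hrS
      rw [hAdef, Finset.mem_image] at hrA
      obtain ⟨i, -, hi⟩ := hrA
      unfold SV at hrS
      rw [Finset.mem_filter, Finset.mem_filter] at hrS
      exact hrS.1.2.2 i.castSucc hi
    have hT : Finset.univ.filter
        (fun r => r < v (Fin.last m) ∧ r ≠ mirrorU n (v (Fin.last m)))
        = A ∪ SV.filter (fun r => r ≠ mirrorU n (v (Fin.last m))) := by
      ext r
      unfold SV
      simp only [Finset.mem_filter, Finset.mem_univ, true_and, Finset.mem_union, hAdef,
        Finset.mem_image]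
      constructor
      · rintro ⟨hlt, hne⟩
        by_cases hrange : ∃ i : Fin (m + 1), v i = r
        · obtain ⟨i, hi⟩ := hrange
          have hil : i ≠ Fin.last m := by
            rintro rfl
            exact absurd hi (ne_of_gt hlt)
          obtain ⟨j0, hj0⟩ := Fin.exists_castSucc_eq.mpr hil
          exact Or.inl ⟨j0, by rw [hj0, hi]⟩
        · push_neg at hrange
          exact Or.inr ⟨⟨hlt, hrange⟩, hne⟩
      · rintro (⟨j0, hj0⟩ | ⟨⟨hlt, -⟩, hne⟩)
        · exact ⟨hj0 ▸ hv (Fin.castSucc_lt_last j0), hj0 ▸ hcm j0⟩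
        · exact ⟨hlt, hne⟩
    rw [hP]
    unfold LamD
    rw [hT, Finset.prod_union hdisj, hprodA, map_mul, mul_comm, mul_div_assoc,
      div_self hιQ, mul_one]
  · -- incomplete case
    intro hc
    obtain ⟨j, hj⟩ := hc
    have hmirA : mirrorU n (v (Fin.last m)) ∈ A := by
      rw [hAdef, Finset.mem_image]
      exact ⟨j, Finset.mem_univ j, hj⟩
    have hSVne : ∀ r ∈ SV, r ≠ mirrorU n (v (Fin.last m)) := by
      intro r hr
      unfold SV at hr
      rw [Finset.mem_filter] at hr
      intro h
      exact hr.2.2 j.castSucc (by rw [hj, h])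
    have hdisj : Disjoint (A.erase (mirrorU n (v (Fin.last m)))) SV := by
      rw [Finset.disjoint_left]
      intro r hrA hrS
      have hrA' := Finset.mem_of_mem_erase hrA
      rw [hAdef, Finset.mem_image] at hrA'
      obtain ⟨i, -, hi⟩ := hrA'
      unfold SV at hrS
      rw [Finset.mem_filter] at hrS
      exact hrS.2.2 i.castSucc hi
    have hT : Finset.univ.filter
        (fun r => r < v (Fin.last m) ∧ r ≠ mirrorU n (v (Fin.last m)))
        = (A.erase (mirrorU n (v (Fin.last m)))) ∪ SV := by
      ext r
      unfold SV
      simp only [Finset.mem_filter, Finset.mem_univ, true_and, Finset.mem_union,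
        Finset.mem_erase, hAdef, Finset.mem_image]
      constructor
      · rintro ⟨hlt, hne⟩
        by_cases hrange : ∃ i : Fin (m + 1), v i = r
        · obtain ⟨i, hi⟩ := hrange
          have hil : i ≠ Fin.last m := by
            rintro rfl
            exact absurd rfl (hi ▸ ne_of_gt hlt)
          obtain ⟨j', hj'⟩ := Fin.exists_castSucc_eq.mpr hil
          exact Or.inl ⟨hne, ⟨j', by rw [hj', hi]⟩⟩
        · push_neg at hrange
          exact Or.inr ⟨hlt, hrange⟩
      · rintro (⟨hne, ⟨j', hj'⟩⟩ | ⟨hlt, hnr⟩)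
        · exact ⟨hj' ▸ hv (Fin.castSucc_lt_last j'), hne⟩
        · exact ⟨hlt, fun h => hnr j.castSucc (by rw [hj, h])⟩
    have hQsplit : Q = (2 * LU n (v (Fin.last m))) *
        ∏ r ∈ A.erase (mirrorU n (v (Fin.last m))), (LU n (v (Fin.last m)) - LU n r) := by
      rw [← hprodA, ← Finset.mul_prod_erase _ _ hmirA, LU_mirrorU]
      ring
    have hE : (∏ r ∈ A.erase (mirrorU n (v (Fin.last m))),
        (LU n (v (Fin.last m)) - LU n r)) ≠ 0 := by
      refine Finset.prod_ne_zero_iff.mpr fun r hr => hLne ?_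
      have hr' := Finset.mem_of_mem_erase hr
      rw [hAdef, Finset.mem_image] at hr'
      obtain ⟨i, -, hi⟩ := hr'
      exact fun h => hvne i (hi.trans h.symm)
    have h2L : (2 : K) * ι (LU n (v (Fin.last m))) ≠ 0 := by
      have : (2 : K) * ι (LU n (v (Fin.last m))) = ι (2 * LU n (v (Fin.last m))) := by
        rw [map_mul, map_ofNat]
      rw [this, map_ne_zero_iff ι hι]
      exact mul_ne_zero two_ne_zero (LU_ne_zero n _)
    rw [hP]
    unfold LamD
    rw [hT, Finset.prod_union hdisj]
    rw [div_eq_div_iff hιQ h2L, hQsplit]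
    rw [map_mul, map_mul, map_mul, map_ofNat]
    ring
end
end

section
/- Let E be a finite-dimensional real vector space, ω and ω̃ alternating bilinear forms on E, and V ⊆ E a subspace such that: the restriction of ω to V is nondegenerate; ω̃(v, e) = 0 for all v ∈ V and e ∈ E; and the restriction of ω̃ to H := {e ∈ E : ω(e, v) = 0 for all v ∈ V} is nondegenerate. Then E = V ⊕ H, the subspaces V and H are orthogonal for ω̃ + t·ω for every t ∈ ℝ, and there exists t_0 > 0 such that for every t with 0 < t < t_0 the form ω̃ + t·ω is nondegenerate on E. -/
lemma alt_skew {E : Type*} [AddCommGroup E] [Module ℝ E]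
    (B : E →ₗ[ℝ] E →ₗ[ℝ] ℝ) (halt : ∀ e : E, B e e = 0) (a b : E) :
    B a b = - B b a := by
  have h := halt (a + b)
  simp only [map_add, LinearMap.add_apply, halt a, halt b] at h
  linarith

theorem stmt_10 {E : Type*} [AddCommGroup E] [Module ℝ E] [FiniteDimensional ℝ E]
    (ω ωt : E →ₗ[ℝ] E →ₗ[ℝ] ℝ)
    (hω_alt : ∀ e : E, ω e e = 0) (hωt_alt : ∀ e : E, ωt e e = 0)
    (V H : Submodule ℝ E)
    (hVnd : ∀ v ∈ V, (∀ v' ∈ V, ω v v' = 0) → v = 0)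
    (hperp : ∀ v ∈ V, ∀ e : E, ωt v e = 0)
    (hH : ∀ e : E, e ∈ H ↔ ∀ v ∈ V, ω e v = 0)
    (hHnd : ∀ h ∈ H, (∀ h' ∈ H, ωt h h' = 0) → h = 0) :
    IsCompl V H ∧
      (∀ t : ℝ, ∀ v ∈ V, ∀ h ∈ H, (ωt + t • ω) v h = 0 ∧ (ωt + t • ω) h v = 0) ∧
      ∃ t₀ : ℝ, 0 < t₀ ∧ ∀ t : ℝ, 0 < t → t < t₀ →
        ∀ e : E, (∀ f : E, (ωt + t • ω) e f = 0) → e = 0 := by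
  -- the map E → Dual V
  set φ : E →ₗ[ℝ] Module.Dual ℝ V := ω.compl₂ V.subtype with hφ
  have hφ_apply : ∀ (e : E) (v : V), φ e v = ω e v := fun _ _ => rfl
  set ψ : V →ₗ[ℝ] Module.Dual ℝ V := φ.domRestrict V with hψ
  have hψ_inj : Function.Injective ψ := by
    rw [← LinearMap.ker_eq_bot, Submodule.eq_bot_iff]
    rintro ⟨v, hv⟩ hker
    have : v = 0 := by
      refine hVnd v hv fun v' hv' => ?_
      have := congrArg (fun f => f ⟨v', hv'⟩) hker
      simpa [hψ, hφ_apply] using this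
    simpa using this
  have hψ_surj : Function.Surjective ψ :=
    (LinearMap.injective_iff_surjective_of_finrank_eq_finrank
      (Subspace.dual_finrank_eq).symm).mp hψ_inj
  -- decomposition
  have hdecomp : ∀ e : E, ∃ v ∈ V, e - v ∈ H := by
    intro e
    obtain ⟨v, hv⟩ := hψ_surj (φ e)
    refine ⟨v, v.2, (hH _).mpr fun v' hv' => ?_⟩
    have := congrArg (fun f => f ⟨v', hv'⟩) hv
    simp only [hψ, LinearMap.domRestrict_apply, hφ_apply] at this
    simp [map_sub, this]
  have hcompl : IsCompl V H := by
    constructor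
    · rw [disjoint_iff, Submodule.eq_bot_iff]
      rintro x ⟨hxV, hxH⟩
      exact hVnd x hxV fun v' hv' => (hH x).mp hxH v' hv'
    · rw [codisjoint_iff, eq_top_iff]
      intro e _
      obtain ⟨v, hvV, hvH⟩ := hdecomp e
      exact Submodule.mem_sup.mpr ⟨v, hvV, e - v, hvH, by abel⟩
  have hVH : ∀ v ∈ V, ∀ h ∈ H, ω v h = 0 := fun v hv h hh => by
    rw [alt_skew ω hω_alt]; simpa using (hH h).mp hh v hv
  refine ⟨hcompl, ?_, ?_⟩
  · intro t v hv h hh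
    constructor
    · simp [LinearMap.add_apply, hperp v hv, hVH v hv h hh]
    · have h1 : ωt h v = 0 := by rw [alt_skew ωt hωt_alt]; simp [hperp v hv]
      have h2 : ω h v = 0 := (hH h).mp hh v hv
      simp [LinearMap.add_apply, h1, h2]
  · -- nondegeneracy for small t
    set b : Module.Basis (Fin (Module.finrank ℝ H)) ℝ H := Module.finBasis ℝ H with hb
    set A : Matrix (Fin (Module.finrank ℝ H)) (Fin (Module.finrank ℝ H)) ℝ :=
      LinearMap.toMatrix₂ b b (ωt.domRestrict₁₂ H H) with hA
    set Bm : Matrix (Fin (Module.finrank ℝ H)) (Fin (Module.finrank ℝ H)) ℝ :=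
      LinearMap.toMatrix₂ b b (ω.domRestrict₁₂ H H) with hBm
    have hMat : ∀ t : ℝ,
        LinearMap.toMatrix₂ b b (((ωt + t • ω)).domRestrict₁₂ H H) = A + t • Bm := by
      intro t
      ext i j
      simp [hA, hBm, LinearMap.toMatrix₂_apply, LinearMap.domRestrict₁₂_apply,
        Matrix.add_apply, Matrix.smul_apply, LinearMap.add_apply, LinearMap.smul_apply]
    have hsep0 : (ωt.domRestrict₁₂ H H).SeparatingLeft := by
      rintro ⟨h, hh⟩ hall
      have : h = 0 := hHnd h hh fun h' hh' => hall ⟨h', hh'⟩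
      simpa using this
    have hdet0 : A.det ≠ 0 := (LinearMap.separatingLeft_iff_det_ne_zero b).mp hsep0
    have hcont : Continuous fun t : ℝ => (A + t • Bm).det :=
      Continuous.matrix_det (continuous_const.add (continuous_id.smul continuous_const))
    have hf0 : (fun t : ℝ => (A + t • Bm).det) 0 = A.det := by simp
    obtain ⟨t₀, ht₀pos, ht₀⟩ : ∃ t₀ > 0, ∀ t : ℝ, |t| < t₀ → (A + t • Bm).det ≠ 0 := by
      obtain ⟨δ, hδpos, hδ⟩ :=
        Metric.continuousAt_iff.mp (hcont.continuousAt (x := 0)) |A.det| (abs_pos.mpr hdet0)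
      refine ⟨δ, hδpos, fun t ht hzero => ?_⟩
      have := hδ (show dist t 0 < δ by simpa [Real.dist_eq] using ht)
      rw [hzero] at this
      simp [Real.dist_eq] at this
    refine ⟨t₀, ht₀pos, fun t htpos htlt e he => ?_⟩
    have hsep : ((ωt + t • ω).domRestrict₁₂ H H).SeparatingLeft := by
      apply LinearMap.separatingLeft_of_det_ne_zero b
      rw [hMat t]
      exact ht₀ t (by rw [abs_of_pos htpos]; exact htlt)
    obtain ⟨v, hvV, hvH⟩ := hdecomp e
    have hv0 : v = 0 := by
      refine hVnd v hvV fun v' hv' => ?_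
      have key : ∀ B : E →ₗ[ℝ] E →ₗ[ℝ] ℝ, B v v' + B (e - v) v' = B e v' := by
        intro B; rw [← LinearMap.add_apply, ← map_add, add_sub_cancel]
      have h1 : ωt e v' = 0 := by
        have h2 : ωt (e - v) v' = 0 := by
          rw [alt_skew ωt hωt_alt]; simp [hperp v' hv']
        have := key ωt
        rw [hperp v hvV v', h2] at this
        linarith
      have h3 : ω (e - v) v' = 0 := (hH _).mp hvH v' hv'
      have h4 : ω e v' = ω v v' := by
        have := key ω
        rw [h3] at this
        linarith
      have h5 := he v'
      simp only [LinearMap.add_apply, LinearMap.smul_apply, smul_eq_mul, h1, h4,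
        zero_add] at h5
      exact (mul_eq_zero.mp h5).resolve_left (ne_of_gt htpos)
    rw [hv0, sub_zero] at hvH
    have h0 : (⟨e, hvH⟩ : H) = 0 := hsep ⟨e, hvH⟩ fun y => by
      simpa [LinearMap.domRestrict₁₂_apply] using he y
    simpa using h0
end

section
/- For every w ∈ S_{n+1} there exists a unique canonical class α_w. Moreover, if v ∈ S_{n+1} satisfies ℓ(v) = ℓ(w) + 1, then: if v = w ∘ t_{hk} for some transposition t_{hk} with h < k (in which case necessarily w(h) < w(k)), then α_w(v) = Π_{η ∈ Inv(v), η ≠ y_{w(h)} − y_{w(k)}} η; and if v ≠ w ∘ t for every transposition t, then α_w(v) = 0. -/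
open scoped Classical

noncomputable section

/-- The inversion set of a permutation `w` of `{1, …, N}`, recorded as the set of
pairs `(i, j)` with `i < j` and `w⁻¹(i) > w⁻¹(j)`; the pair `(i, j)` corresponds
to the linear form `y_i - y_j ∈ ℤ[y_1, …, y_N]`. -/
def InvSetA (N : ℕ) (w : Equiv.Perm (Fin N)) : Finset (Fin N × Fin N) :=
  Finset.univ.filter fun p => p.1 < p.2 ∧ w⁻¹ p.2 < w⁻¹ p.1

/-- The number of inversions of `w` (its Coxeter length). -/
def lenA (N : ℕ) (w : Equiv.Perm (Fin N)) : ℕ := (InvSetA N w).card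

/-- `∏_{η ∈ Inv(w)} η`. -/
def prodInvA (N : ℕ) (w : Equiv.Perm (Fin N)) : MvPolynomial (Fin N) ℤ :=
  ∏ p ∈ InvSetA N w, (MvPolynomial.X p.1 - MvPolynomial.X p.2)

/-- GKM-compatibility: `y_i - y_j` divides `f(w) - f(t_{ij} ∘ w)` for all `w` and
all `i < j`. -/
def GKMCompatA (N : ℕ) (f : Equiv.Perm (Fin N) → MvPolynomial (Fin N) ℤ) : Prop :=
  ∀ (w : Equiv.Perm (Fin N)) (i j : Fin N), i < j →
    (MvPolynomial.X i - MvPolynomial.X j : MvPolynomial (Fin N) ℤ) ∣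
      (f w - f (Equiv.swap i j * w))

/-- A canonical class at `w`. -/
def IsCanonA (N : ℕ) (w : Equiv.Perm (Fin N))
    (α : Equiv.Perm (Fin N) → MvPolynomial (Fin N) ℤ) : Prop :=
  GKMCompatA N α ∧
  (∀ v, α v = 0 ∨ (α v).IsHomogeneous (lenA N w)) ∧
  α w = prodInvA N w ∧
  ∀ v, v ≠ w → lenA N v ≤ lenA N w → α v = 0

/-
STATEMENT 11: for every `w ∈ S_{n+1}` there is a unique canonical class `α_w`.
Moreover, if `ℓ(v) = ℓ(w) + 1`, then: if `v = w ∘ t_{hk}` with `h < k` (in which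
case necessarily `w(h) < w(k)`), then `α_w(v) = ∏_{η ∈ Inv(v), η ≠ y_{w(h)} - y_{w(k)}} η`;
and if `v ≠ w ∘ t` for every transposition `t`, then `α_w(v) = 0`.
-/
theorem Equiv.Perm.inv_apply_self {α : Type*} (f : Equiv.Perm α) (x : α) : f⁻¹ (f x) = x :=
  Equiv.Perm.inv_eq_iff_eq.mpr rfl

theorem Equiv.Perm.apply_inv_self {α : Type*} (f : Equiv.Perm α) (x : α) : f (f⁻¹ x) = x :=
  (Equiv.eq_symm_apply f).mp rfl

namespace Stmt11Aux

open MvPolynomial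

variable {N : ℕ}

/-- X a - X b is prime. -/
lemma primeXsub {a b : Fin N} (hab : a ≠ b) :
    Prime (X a - X b : MvPolynomial (Fin N) ℤ) := by
  let e := (renameEquiv ℤ (Equiv.optionSubtypeNe b).symm).trans
      (optionEquivLeft ℤ {x : Fin N // x ≠ b})
  rw [← MulEquiv.prime_iff e.toMulEquiv]
  have ha : (Equiv.optionSubtypeNe b).symm a = some ⟨a, hab⟩ :=
    Equiv.optionSubtypeNe_symm_of_ne hab
  have hb : (Equiv.optionSubtypeNe b).symm b = none :=
    Equiv.optionSubtypeNe_symm_self b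
  have : e (X a - X b) = -(Polynomial.X - Polynomial.C (X ⟨a, hab⟩)) := by
    show e (X a - X b) = _
    rw [map_sub]
    have e1 : e (X a) = Polynomial.C (X ⟨a, hab⟩) := by
      simp only [e, AlgEquiv.trans_apply, renameEquiv_apply, rename_X, ha,
        optionEquivLeft_X_some]
    have e2 : e (X b) = Polynomial.X := by
      simp only [e, AlgEquiv.trans_apply, renameEquiv_apply, rename_X, hb,
        optionEquivLeft_X_none]
    rw [e1, e2]; ring
  rw [show e.toMulEquiv (X a - X b) = e (X a - X b) from rfl, this]
  exact (Polynomial.prime_X_sub_C _).neg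

lemma Xsub_ne_zero {a b : Fin N} (hab : a ≠ b) :
    (X a - X b : MvPolynomial (Fin N) ℤ) ≠ 0 := (primeXsub hab).ne_zero

/-- If X a - X b divides X p - X q with p < q, a < b then (p,q) = (a,b). -/
lemma lin_dvd_eq {a b p q : Fin N} (hab : a < b) (hpq : p < q)
    (h : (X a - X b : MvPolynomial (Fin N) ℤ) ∣ (X p - X q)) : p = a ∧ q = b := by
  have ev : ∀ φ : Fin N → ℤ, φ a = φ b → φ p = φ q := by
    intro φ hφ
    obtain ⟨c, hc⟩ := h
    have := congrArg (MvPolynomial.eval φ) hc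
    simp only [map_sub, map_mul, eval_X, hφ, sub_self, zero_mul] at this
    linarith [this]
  constructor
  · by_contra hpa
    by_cases hpb : p = b
    · -- p = b, then q > b; use indicator of q
      have haq : a ≠ q := (hab.trans (hpb ▸ hpq)).ne
      have hbq : b ≠ q := (hpb ▸ hpq).ne
      have := ev (fun x => if x = q then 1 else 0) (by
        show (if a = q then (1:ℤ) else 0) = (if b = q then 1 else 0)
        rw [if_neg haq, if_neg hbq])
      simp only [if_neg (hpq.ne : p ≠ q), if_pos rfl] at this
      exact absurd this (by norm_num)
    · -- p ∉ {a,b}: indicator of p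
      have := ev (fun x => if x = p then 1 else 0) (by
        show (if a = p then (1:ℤ) else 0) = (if b = p then 1 else 0)
        rw [if_neg (fun h => hpa h.symm), if_neg (fun h => hpb h.symm)])
      simp only [if_pos rfl, if_neg (hpq.ne' : q ≠ p)] at this
      exact absurd this (by norm_num)
  · by_contra hqb
    by_cases hqa : q = a
    · have hap : a ≠ p := fun h => (hqa ▸ hpq).ne h.symm
      have hbp : b ≠ p := fun h => ((hqa ▸ hpq : p < a).trans hab).ne h.symm
      have := ev (fun x => if x = p then 1 else 0) (by
        show (if a = p then (1:ℤ) else 0) = (if b = p then 1 else 0)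
        rw [if_neg hap, if_neg hbp])
      simp only [if_pos rfl, if_neg (hpq.ne' : q ≠ p)] at this
      exact absurd this (by norm_num)
    · have := ev (fun x => if x = q then 1 else 0) (by
        show (if a = q then (1:ℤ) else 0) = (if b = q then 1 else 0)
        rw [if_neg (fun h => hqa h.symm), if_neg (fun h => hqb h.symm)])
      simp only [if_neg (hpq.ne : p ≠ q), if_pos rfl] at this
      exact absurd this (by norm_num)

lemma lin_dvd_C {a b : Fin N} (hab : a ≠ b) {z : ℤ}
    (h : (X a - X b : MvPolynomial (Fin N) ℤ) ∣ C z) : z = 0 := by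
  obtain ⟨c, hc⟩ := h
  have := congrArg (MvPolynomial.eval (fun _ => (0:ℤ))) hc
  simpa using this


section Homog

variable {σ : Type*} {e m k : ℕ} {q c p : MvPolynomial σ ℤ}

lemma comp_zero_of (hq : q.IsHomogeneous e) (hq0 : q ≠ 0)
    (hp : (q * c).IsHomogeneous m) (k : ℕ) (hk : e + k ≠ m) :
    MvPolynomial.homogeneousComponent k c = 0 := by
  have h1 : MvPolynomial.homogeneousComponent (e + k) (q * c) = 0 := by
    rw [MvPolynomial.homogeneousComponent_of_mem
      ((MvPolynomial.mem_homogeneousSubmodule _ _).2 hp), if_neg hk]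
  have h2 : MvPolynomial.homogeneousComponent (e + k) (q * c)
      = q * MvPolynomial.homogeneousComponent k c := by
    conv_lhs => rw [← MvPolynomial.sum_homogeneousComponent c, Finset.mul_sum, map_sum]
    rw [Finset.sum_eq_single k]
    · rw [MvPolynomial.homogeneousComponent_of_mem
        ((MvPolynomial.mem_homogeneousSubmodule _ _).2
          (hq.mul (MvPolynomial.homogeneousComponent_isHomogeneous k c))), if_pos rfl]
    · intro i _ hik
      rw [MvPolynomial.homogeneousComponent_of_mem
        ((MvPolynomial.mem_homogeneousSubmodule _ _).2
          (hq.mul (MvPolynomial.homogeneousComponent_isHomogeneous i c))),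
        if_neg (by omega)]
    · intro hkr
      rw [MvPolynomial.homogeneousComponent_eq_zero _ c (by
        simp only [Finset.mem_range, not_lt] at hkr; omega), mul_zero, map_zero]
  rw [h1] at h2
  rcases mul_eq_zero.1 h2.symm with h | h
  · exact absurd h hq0
  · exact h

/-- quotient of homogeneous by homogeneous is homogeneous -/
lemma homog_quot (hq : q.IsHomogeneous e) (hq0 : q ≠ 0)
    (hp : (q * c).IsHomogeneous m) (he : e ≤ m) : c.IsHomogeneous (m - e) := by
  have hc : c = MvPolynomial.homogeneousComponent (m - e) c := by
    conv_lhs => rw [← MvPolynomial.sum_homogeneousComponent c]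
    rw [Finset.sum_eq_single (m - e)]
    · intro i _ hik
      exact comp_zero_of hq hq0 hp i (by omega)
    · intro h
      rw [MvPolynomial.homogeneousComponent_eq_zero _ c (by
        simp only [Finset.mem_range, not_lt] at h; omega)]
  rw [hc]
  exact MvPolynomial.homogeneousComponent_isHomogeneous _ _

/-- a homogeneous multiple of strictly larger degree is zero -/
lemma homog_dvd_zero {d : ℕ} (hq : q.IsHomogeneous e) (hp : p.IsHomogeneous d)
    (hde : d < e) (hdvd : q ∣ p) : p = 0 := by
  by_cases hq0 : q = 0
  · rw [hq0, zero_dvd_iff] at hdvd; exact hdvd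
  obtain ⟨c, rfl⟩ := hdvd
  have hall : ∀ i, MvPolynomial.homogeneousComponent i c = 0 :=
    fun i => comp_zero_of hq hq0 hp i (by omega)
  have : c = 0 := by
    conv_lhs => rw [← MvPolynomial.sum_homogeneousComponent c]
    exact Finset.sum_eq_zero fun i _ => hall i
  rw [this, mul_zero]

lemma eq_C_of_homog0 (h : c.IsHomogeneous 0) : ∃ z : ℤ, c = MvPolynomial.C z := by
  refine ⟨MvPolynomial.coeff 0 c, ?_⟩
  ext d
  rw [MvPolynomial.coeff_C]
  by_cases hd : d = 0
  · rw [hd, if_pos rfl]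
  · rw [if_neg (fun hc => hd hc.symm)]
    exact h.coeff_eq_zero (fun hw => hd ((Finsupp.degree_eq_zero_iff d).1 hw))

end Homog

/-- substitution sending X b to X a -/
def chi (N : ℕ) (a b : Fin N) : MvPolynomial (Fin N) ℤ →+* MvPolynomial (Fin N) ℤ :=
  (MvPolynomial.aeval fun c => if c = b then X a else X c).toRingHom

lemma chi_X (a b c : Fin N) : chi N a b (X c) = if c = b then X a else X c := by
  simp [chi]

lemma chi_dvd (a b : Fin N) (f : MvPolynomial (Fin N) ℤ) :
    (X a - X b : MvPolynomial (Fin N) ℤ) ∣ f - chi N a b f := by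
  induction f using MvPolynomial.induction_on with
  | C r => simp [chi]
  | add p q hp hq =>
    have : p + q - chi N a b (p + q) = (p - chi N a b p) + (q - chi N a b q) := by
      rw [map_add]; ring
    rw [this]; exact dvd_add hp hq
  | mul_X p c hp =>
    have : p * X c - chi N a b (p * X c)
        = (p - chi N a b p) * X c + chi N a b p * (X c - chi N a b (X c)) := by
      rw [map_mul]; ring
    rw [this]
    refine dvd_add (Dvd.dvd.mul_right hp _) (Dvd.dvd.mul_left ?_ _)
    rw [chi_X]
    by_cases hc : c = b
    · rw [if_pos hc, hc]; exact ⟨-1, by ring⟩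
    · rw [if_neg hc]; simp

lemma not_lin_dvd_prod {a b : Fin N} (hab : a < b) {s : Finset (Fin N × Fin N)}
    (hs : ∀ p ∈ s, p.1 < p.2) (hnot : (a, b) ∉ s) :
    ¬ ((X a - X b : MvPolynomial (Fin N) ℤ) ∣ ∏ p ∈ s, (X p.1 - X p.2)) := by
  intro h
  obtain ⟨p, hps, hpd⟩ := (primeXsub hab.ne).exists_mem_finset_dvd h
  obtain ⟨h1, h2⟩ := lin_dvd_eq hab (hs p hps) hpd
  exact hnot (by rw [← h1, ← h2]; exact hps)

lemma prod_lin_dvd {s : Finset (Fin N × Fin N)} (hs : ∀ p ∈ s, p.1 < p.2)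
    {f : MvPolynomial (Fin N) ℤ} (hdvd : ∀ p ∈ s, (X p.1 - X p.2 : MvPolynomial (Fin N) ℤ) ∣ f) :
    (∏ p ∈ s, (X p.1 - X p.2 : MvPolynomial (Fin N) ℤ)) ∣ f := by
  classical
  induction s using Finset.induction_on with
  | empty => simpa using dvd_refl f
  | @insert a s ha ih =>
    have hsub : ∀ p ∈ s, p.1 < p.2 := fun p hp => hs p (Finset.mem_insert_of_mem hp)
    obtain ⟨g, hg⟩ := ih hsub (fun p hp => hdvd p (Finset.mem_insert_of_mem hp))
    have hprime := primeXsub (hs a (Finset.mem_insert_self a s)).ne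
    have hdiv : (X a.1 - X a.2 : MvPolynomial (Fin N) ℤ) ∣ g := by
      have h1 : (X a.1 - X a.2 : MvPolynomial (Fin N) ℤ) ∣
          (∏ p ∈ s, (X p.1 - X p.2 : MvPolynomial (Fin N) ℤ)) * g := by
        rw [← hg]; exact hdvd a (Finset.mem_insert_self a s)
      rcases hprime.dvd_mul.1 h1 with h | h
      · exfalso
        exact not_lin_dvd_prod (hs a (Finset.mem_insert_self a s)) hsub
          (by rwa [Prod.mk.eta]) h
      · exact h
    obtain ⟨g', hg'⟩ := hdiv
    rw [Finset.prod_insert ha]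
    exact ⟨g', by rw [hg, hg']; ring⟩


section Comb

open Equiv

lemma mem_InvSetA {N : ℕ} {w : Equiv.Perm (Fin N)} {p : Fin N × Fin N} :
    p ∈ InvSetA N w ↔ p.1 < p.2 ∧ w⁻¹ p.2 < w⁻¹ p.1 := by
  simp [InvSetA]

lemma swap_adj_lt {N : ℕ} {h k : Fin N} (hk : (k : ℕ) = (h : ℕ) + 1) {x y : Fin N}
    (hne : ¬(x = h ∧ y = k)) (hne2 : ¬(x = k ∧ y = h)) :
    Equiv.swap h k x < Equiv.swap h k y ↔ x < y := by
  simp only [Equiv.swap_apply_def, Fin.lt_def, Fin.ext_iff] at *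
  split_ifs <;> omega

lemma self_notmem_adj {N : ℕ} {w : Equiv.Perm (Fin N)} {h k : Fin N} (hhk : h < k) :
    (w h, w k) ∉ InvSetA N w := by
  rw [mem_InvSetA]
  rintro ⟨-, hlt⟩
  simp only [Equiv.Perm.inv_apply_self] at hlt
  exact absurd hlt (not_lt.2 hhk.le)

lemma invSet_adj {N : ℕ} {w : Equiv.Perm (Fin N)} {h k : Fin N}
    (hk : (k : ℕ) = (h : ℕ) + 1) (asc : w h < w k) :
    InvSetA N (w * Equiv.swap h k) = insert (w h, w k) (InvSetA N w) := by
  have hhk : h < k := by rw [Fin.lt_def]; omega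
  ext ⟨p, q⟩
  have hinv : ∀ x, (w * Equiv.swap h k)⁻¹ x = Equiv.swap h k (w⁻¹ x) := by
    intro x; rw [mul_inv_rev, Equiv.Perm.mul_apply, Equiv.swap_inv]
  simp only [mem_InvSetA, Finset.mem_insert, Prod.mk.injEq, hinv]
  by_cases c1 : w⁻¹ p = h ∧ w⁻¹ q = k
  · obtain ⟨e1, e2⟩ := c1
    have hp : p = w h := by rw [← e1, Equiv.Perm.apply_inv_self]
    have hq : q = w k := by rw [← e2, Equiv.Perm.apply_inv_self]
    rw [e1, e2, Equiv.swap_apply_left, Equiv.swap_apply_right]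
    constructor
    · intro _; exact Or.inl ⟨hp, hq⟩
    · intro _; exact ⟨hp ▸ hq ▸ asc, hhk⟩
  · by_cases c2 : w⁻¹ p = k ∧ w⁻¹ q = h
    · obtain ⟨e1, e2⟩ := c2
      have hp : p = w k := by rw [← e1, Equiv.Perm.apply_inv_self]
      have hq : q = w h := by rw [← e2, Equiv.Perm.apply_inv_self]
      rw [e1, e2, Equiv.swap_apply_left, Equiv.swap_apply_right]
      constructor
      · rintro ⟨-, hlt⟩; exact absurd hlt (not_lt.2 hhk.le)
      · rintro (⟨h1, h2⟩ | ⟨h1, h2⟩)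
        · exfalso
          have : w k = w h := by rw [← hp, h1]
          exact hhk.ne (w.injective this.symm)
        · exfalso
          rw [hp, hq] at h1
          exact absurd h1 (not_lt.2 asc.le)
    · have key := swap_adj_lt hk (x := w⁻¹ q) (y := w⁻¹ p)
        (fun ⟨a1, a2⟩ => c2 ⟨a2, a1⟩) (fun ⟨a1, a2⟩ => c1 ⟨a2, a1⟩)
      rw [key]
      constructor
      · intro hx; exact Or.inr hx
      · rintro (⟨h1, h2⟩ | hx)
        · exfalso
          apply c1
          constructor
          · rw [h1, Equiv.Perm.inv_apply_self]
          · rw [h2, Equiv.Perm.inv_apply_self]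
        · exact hx

lemma lenA_adj_asc {N : ℕ} {w : Equiv.Perm (Fin N)} {h k : Fin N}
    (hk : (k : ℕ) = (h : ℕ) + 1) (asc : w h < w k) :
    lenA N (w * Equiv.swap h k) = lenA N w + 1 := by
  have hhk : h < k := by rw [Fin.lt_def]; omega
  rw [lenA, invSet_adj hk asc, Finset.card_insert_of_notMem (self_notmem_adj hhk)]
  rfl

lemma lenA_adj_desc {N : ℕ} {w : Equiv.Perm (Fin N)} {h k : Fin N}
    (hk : (k : ℕ) = (h : ℕ) + 1) (desc : w k < w h) :
    lenA N (w * Equiv.swap h k) + 1 = lenA N w := by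
  have := lenA_adj_asc (w := w * Equiv.swap h k) hk
    (by rwa [Equiv.Perm.mul_apply, Equiv.Perm.mul_apply, Equiv.swap_apply_left,
      Equiv.swap_apply_right])
  rw [mul_assoc, Equiv.swap_mul_self, mul_one] at this
  omega

lemma lenA_adj_le {N : ℕ} {w : Equiv.Perm (Fin N)} {h k : Fin N}
    (hk : (k : ℕ) = (h : ℕ) + 1) :
    lenA N (w * Equiv.swap h k) ≤ lenA N w + 1 := by
  have hhk : h ≠ k := Fin.ne_of_val_ne (by omega)
  rcases lt_trichotomy (w h) (w k) with hc | hc | hc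
  · rw [lenA_adj_asc hk hc]
  · exact absurd (w.injective hc) hhk
  · have := lenA_adj_desc hk hc; omega

lemma lenA_swap_lt {N : ℕ} : ∀ (d : ℕ) (w : Equiv.Perm (Fin N)) (h k : Fin N),
    (k : ℕ) = (h : ℕ) + d + 1 → w k < w h → lenA N (w * Equiv.swap h k) < lenA N w := by
  intro d
  induction d using Nat.strong_induction_on with
  | _ d ih =>
    intro w h k hk hdesc
    match d, ih with
    | 0, _ =>
      have := lenA_adj_desc (w := w) (h := h) (k := k) (by omega) hdesc
      omega
    | d + 1, ih =>
      have hcN : (h : ℕ) + 1 < N := by omega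
      set c : Fin N := ⟨(h : ℕ) + 1, by omega⟩ with hc
      have hc1 : (c : ℕ) = (h : ℕ) + 1 := rfl
      have hck : (k : ℕ) = (c : ℕ) + d + 1 := by omega
      have hhc : h ≠ c := Fin.ne_of_val_ne (by omega)
      have hhk : h ≠ k := Fin.ne_of_val_ne (by omega)
      have hckne : c ≠ k := Fin.ne_of_val_ne (by omega)
      have hdecomp : Equiv.swap h k = Equiv.swap h c * Equiv.swap c k * Equiv.swap h c := by
        have hd := Equiv.swap_mul_swap_mul_swap (x := k) (y := c) (z := h)
          (Ne.symm hckne) (Ne.symm hhk)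
        rw [Equiv.swap_comm c h, Equiv.swap_comm k c] at hd
        exact hd.symm
      set w1 := w * Equiv.swap h c with hw1
      have hw1c : w1 c = w h := by
        rw [hw1, Equiv.Perm.mul_apply, Equiv.swap_apply_right]
      have hw1h : w1 h = w c := by
        rw [hw1, Equiv.Perm.mul_apply, Equiv.swap_apply_left]
      have hw1k : w1 k = w k := by
        rw [hw1, Equiv.Perm.mul_apply,
          Equiv.swap_apply_of_ne_of_ne (Ne.symm hhk) (Ne.symm hckne)]
      have step2 : lenA N (w1 * Equiv.swap c k) < lenA N w1 := by
        refine ih d (by omega) w1 c k (by omega) ?_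
        rw [hw1k, hw1c]; exact hdesc
      set w2 := w1 * Equiv.swap c k with hw2
      have hw2h : w2 h = w c := by
        rw [hw2, Equiv.Perm.mul_apply,
          Equiv.swap_apply_of_ne_of_ne hhc hhk, hw1h]
      have hw2c : w2 c = w k := by
        rw [hw2, Equiv.Perm.mul_apply, Equiv.swap_apply_left, hw1k]
      have hfinal : w * Equiv.swap h k = w2 * Equiv.swap h c := by
        rw [hdecomp, hw2, hw1]; group
      rw [hfinal]
      rcases lt_trichotomy (w h) (w c) with hcase | hcase | hcase
      · -- step1 ascent, step3 descent
        have s1 : lenA N w1 = lenA N w + 1 := lenA_adj_asc (by omega) hcase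
        have s3 : lenA N (w2 * Equiv.swap h c) + 1 = lenA N w2 := by
          refine lenA_adj_desc (by omega) ?_
          rw [hw2h, hw2c]
          exact hdesc.trans hcase
        omega
      · exact absurd (w.injective hcase) hhc
      · -- step1 descent
        have s1 : lenA N w1 + 1 = lenA N w := lenA_adj_desc (by omega) hcase
        have s3 : lenA N (w2 * Equiv.swap h c) ≤ lenA N w2 + 1 :=
          lenA_adj_le (by omega)
        omega

lemma lenA_swap_lt' {N : ℕ} {w : Equiv.Perm (Fin N)} {h k : Fin N} (hhk : h < k)
    (hdesc : w k < w h) : lenA N (w * Equiv.swap h k) < lenA N w := by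
  have hv : (k : ℕ) = (h : ℕ) + ((k : ℕ) - (h : ℕ) - 1) + 1 := by
    have := (Fin.lt_def).1 hhk; omega
  exact lenA_swap_lt _ w h k hv hdesc

lemma lenA_swap_gt {N : ℕ} {w : Equiv.Perm (Fin N)} {h k : Fin N} (hhk : h < k)
    (hasc : w h < w k) : lenA N w < lenA N (w * Equiv.swap h k) := by
  have := lenA_swap_lt' (w := w * Equiv.swap h k) hhk (by
    rw [Equiv.Perm.mul_apply, Equiv.Perm.mul_apply, Equiv.swap_apply_left,
      Equiv.swap_apply_right]
    exact hasc)
  rwa [mul_assoc, Equiv.swap_mul_self, mul_one] at this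

lemma swap_mul_eq {N : ℕ} (v : Equiv.Perm (Fin N)) (h k : Fin N) :
    Equiv.swap (v h) (v k) * v = v * Equiv.swap h k :=
  (Equiv.mul_swap_eq_swap_mul v h k).symm

lemma lenA_refl_lt {N : ℕ} {v : Equiv.Perm (Fin N)} {r s : Fin N}
    (hm : (r, s) ∈ InvSetA N v) : lenA N (Equiv.swap r s * v) < lenA N v := by
  obtain ⟨hrs, hpos⟩ := mem_InvSetA.1 hm
  have key : Equiv.swap r s * v = v * Equiv.swap (v⁻¹ s) (v⁻¹ r) := by
    rw [← swap_mul_eq v (v⁻¹ s) (v⁻¹ r), Equiv.Perm.apply_inv_self,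
      Equiv.Perm.apply_inv_self, Equiv.swap_comm]
  rw [key]
  exact lenA_swap_lt' hpos (by
    rw [Equiv.Perm.apply_inv_self, Equiv.Perm.apply_inv_self]; exact hrs)

lemma mem_p0 {N : ℕ} {w : Equiv.Perm (Fin N)} {h k : Fin N} (hhk : h < k)
    (asc : w h < w k) : (w h, w k) ∈ InvSetA N (w * Equiv.swap h k) := by
  rw [mem_InvSetA]
  refine ⟨asc, ?_⟩
  have hinv : ∀ x, (w * Equiv.swap h k)⁻¹ x = Equiv.swap h k (w⁻¹ x) := by
    intro x; rw [mul_inv_rev, Equiv.Perm.mul_apply, Equiv.swap_inv]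
  simp only [hinv, Equiv.Perm.inv_apply_self, Equiv.swap_apply_left, Equiv.swap_apply_right]
  exact hhk

lemma no_middle {N : ℕ} {w : Equiv.Perm (Fin N)} {h k c : Fin N} (hhk : h < k)
    (asc : w h < w k) (hlen : lenA N (w * Equiv.swap h k) = lenA N w + 1)
    (hc1 : h < c) (hc2 : c < k) : w c < w h ∨ w k < w c := by
  by_contra hcon
  push_neg at hcon
  obtain ⟨h1, h2⟩ := hcon
  have hhc : h ≠ c := hc1.ne
  have hck : c ≠ k := hc2.ne
  have hhkne : h ≠ k := hhk.ne
  have h1' : w h < w c := lt_of_le_of_ne h1 (fun e => hhc (w.injective e))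
  have h2' : w c < w k := lt_of_le_of_ne h2 (fun e => hck (w.injective e))
  have hdecomp : Equiv.swap h k = Equiv.swap h c * Equiv.swap c k * Equiv.swap h c := by
    have hd := Equiv.swap_mul_swap_mul_swap (x := k) (y := c) (z := h)
      (Ne.symm hck) (Ne.symm hhkne)
    rw [Equiv.swap_comm c h, Equiv.swap_comm k c] at hd
    exact hd.symm
  set u1 := w * Equiv.swap h c with hu1
  have s1 : lenA N w < lenA N u1 := lenA_swap_gt hc1 h1'
  have hu1c : u1 c = w h := by rw [hu1, Equiv.Perm.mul_apply, Equiv.swap_apply_right]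
  have hu1k : u1 k = w k := by
    rw [hu1, Equiv.Perm.mul_apply, Equiv.swap_apply_of_ne_of_ne (Ne.symm hhkne) (Ne.symm hck)]
  set u2 := u1 * Equiv.swap c k with hu2
  have s2 : lenA N u1 < lenA N u2 := by
    refine lenA_swap_gt hc2 ?_
    rw [hu1c, hu1k]; exact asc
  have hu2h : u2 h = w c := by
    rw [hu2, Equiv.Perm.mul_apply, Equiv.swap_apply_of_ne_of_ne hhc hhkne, hu1,
      Equiv.Perm.mul_apply, Equiv.swap_apply_left]
  have hu2c : u2 c = w k := by
    rw [hu2, Equiv.Perm.mul_apply, Equiv.swap_apply_left, hu1k]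
  have s3 : lenA N u2 < lenA N (u2 * Equiv.swap h c) := by
    refine lenA_swap_gt hc1 ?_
    rw [hu2h, hu2c]; exact h2'
  have hfin : u2 * Equiv.swap h c = w * Equiv.swap h k := by
    rw [hdecomp, hu2, hu1]; group
  rw [hfin, hlen] at s3
  omega

/-- all adjacent descents -/
def allD (N : ℕ) (w : Equiv.Perm (Fin N)) : Prop :=
  ∀ h k : Fin N, (k : ℕ) = (h : ℕ) + 1 → w k < w h

lemma allD_antitone {N : ℕ} {w : Equiv.Perm (Fin N)} (hw : allD N w) :
    ∀ (d : ℕ) (h k : Fin N), (k : ℕ) = (h : ℕ) + d + 1 → w k < w h := by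
  intro d
  induction d with
  | zero => intro h k hk; exact hw h k (by omega)
  | succ d ihd =>
    intro h k hk
    have hcN : (h : ℕ) + 1 < N := by have := k.isLt; omega
    set c : Fin N := ⟨(h : ℕ) + 1, by omega⟩
    exact (ihd c k (by simp only [c]; omega)).trans (hw h c rfl)

lemma invSet_allD {N : ℕ} {w : Equiv.Perm (Fin N)} (hw : allD N w) :
    InvSetA N w = Finset.univ.filter (fun p => p.1 < p.2) := by
  ext ⟨p, q⟩
  simp only [mem_InvSetA, Finset.mem_filter, Finset.mem_univ, true_and]
  constructor
  · rintro ⟨h1, -⟩; exact h1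
  · intro h1
    refine ⟨h1, ?_⟩
    rcases lt_trichotomy (w⁻¹ q) (w⁻¹ p) with hc | hc | hc
    · exact hc
    · exfalso; exact h1.ne (by rw [← w.apply_inv_self p, ← w.apply_inv_self q, hc])
    · exfalso
      have := allD_antitone hw ((w⁻¹ q : Fin N) - (w⁻¹ p : Fin N) - 1) (w⁻¹ p) (w⁻¹ q)
        (by have := (Fin.lt_def).1 hc; omega)
      rw [Equiv.Perm.apply_inv_self, Equiv.Perm.apply_inv_self] at this
      exact absurd h1 (not_lt.2 this.le)

lemma lenA_le_allD {N : ℕ} {w : Equiv.Perm (Fin N)} (hw : allD N w)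
    (v : Equiv.Perm (Fin N)) : lenA N v ≤ lenA N w := by
  refine Finset.card_le_card ?_
  rw [invSet_allD hw]
  intro p hp
  simp only [Finset.mem_filter, Finset.mem_univ, true_and]
  exact (mem_InvSetA.1 hp).1

lemma prod_lin_homog {N : ℕ} (s : Finset (Fin N × Fin N)) :
    (∏ p ∈ s, (X p.1 - X p.2 : MvPolynomial (Fin N) ℤ)).IsHomogeneous s.card := by
  have := MvPolynomial.IsHomogeneous.prod s
    (fun p => (X p.1 - X p.2 : MvPolynomial (Fin N) ℤ)) (fun _ => 1)
    (fun p _ => ((MvPolynomial.isHomogeneous_X ℤ p.1).sub (MvPolynomial.isHomogeneous_X ℤ p.2)))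
  simpa using this

lemma prodInv_homog {N : ℕ} (w : Equiv.Perm (Fin N)) :
    (prodInvA N w).IsHomogeneous (lenA N w) := prod_lin_homog _

lemma prod_lin_ne_zero {N : ℕ} {s : Finset (Fin N × Fin N)} (hs : ∀ p ∈ s, p.1 < p.2) :
    (∏ p ∈ s, (X p.1 - X p.2 : MvPolynomial (Fin N) ℤ)) ≠ 0 := by
  rw [Finset.prod_ne_zero_iff]
  exact fun p hp => Xsub_ne_zero (hs p hp).ne

end Comb


section Step

variable {N : ℕ}

def qd (a b : MvPolynomial (Fin N) ℤ) : MvPolynomial (Fin N) ℤ :=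
  if h : a ∣ b then h.choose else 0

lemma qd_spec {a b : MvPolynomial (Fin N) ℤ} (h : a ∣ b) : b = a * qd a b := by
  rw [qd, dif_pos h]; exact h.choose_spec

/-- divided difference operator on GKM classes -/
def ddiff (f : Equiv.Perm (Fin N) → MvPolynomial (Fin N) ℤ) (h k : Fin N)
    (v : Equiv.Perm (Fin N)) : MvPolynomial (Fin N) ℤ :=
  qd (X (v h) - X (v k)) (f (v * Equiv.swap h k) - f v)

lemma gkm_dvd {f : Equiv.Perm (Fin N) → MvPolynomial (Fin N) ℤ} (hg : GKMCompatA N f)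
    (v : Equiv.Perm (Fin N)) {h k : Fin N} (hne : h ≠ k) :
    (X (v h) - X (v k) : MvPolynomial (Fin N) ℤ) ∣ (f (v * Equiv.swap h k) - f v) := by
  have hvne : v h ≠ v k := fun e => hne (v.injective e)
  rcases lt_or_gt_of_ne hvne with hlt | hgt
  · have := hg v (v h) (v k) hlt
    rw [swap_mul_eq] at this
    have h2 : f (v * Equiv.swap h k) - f v = -(f v - f (v * Equiv.swap h k)) := by ring
    rw [h2]
    exact this.neg_right
  · have := hg v (v k) (v h) hgt
    rw [Equiv.swap_comm, swap_mul_eq] at this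
    have h2 : (X (v h) - X (v k) : MvPolynomial (Fin N) ℤ)
        = -(X (v k) - X (v h)) := by ring
    rw [h2, neg_dvd]
    have h3 : f (v * Equiv.swap h k) - f v = -(f v - f (v * Equiv.swap h k)) := by ring
    rw [h3]
    exact this.neg_right

lemma ddiff_spec {f : Equiv.Perm (Fin N) → MvPolynomial (Fin N) ℤ} (hg : GKMCompatA N f)
    (v : Equiv.Perm (Fin N)) {h k : Fin N} (hne : h ≠ k) :
    (X (v h) - X (v k) : MvPolynomial (Fin N) ℤ) * ddiff f h k v
      = f (v * Equiv.swap h k) - f v := (qd_spec (gkm_dvd hg v hne)).symm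

lemma ddiff_invariant {f : Equiv.Perm (Fin N) → MvPolynomial (Fin N) ℤ}
    (hg : GKMCompatA N f) {h k : Fin N} (hne : h ≠ k) (v : Equiv.Perm (Fin N)) :
    ddiff f h k (v * Equiv.swap h k) = ddiff f h k v := by
  have hvne : v h ≠ v k := fun e => hne (v.injective e)
  have e1 := ddiff_spec hg (v * Equiv.swap h k) hne
  rw [mul_assoc, Equiv.swap_mul_self, mul_one] at e1
  have e2 := ddiff_spec hg v hne
  have hvh : (v * Equiv.swap h k) h = v k := by
    rw [Equiv.Perm.mul_apply, Equiv.swap_apply_left]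
  have hvk : (v * Equiv.swap h k) k = v h := by
    rw [Equiv.Perm.mul_apply, Equiv.swap_apply_right]
  rw [hvh, hvk] at e1
  have key : (X (v h) - X (v k) : MvPolynomial (Fin N) ℤ) * ddiff f h k (v * Equiv.swap h k)
      = (X (v h) - X (v k)) * ddiff f h k v := by
    linear_combination -e1 - e2
  exact mul_left_cancel₀ (Xsub_ne_zero hvne) key

lemma lin_aux {r s : Fin N} (c : Fin N) :
    (X r - X s : MvPolynomial (Fin N) ℤ) ∣ (X c - X (Equiv.swap r s c)) := by
  by_cases hcr : c = r
  · rw [hcr, Equiv.swap_apply_left]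
  · by_cases hcs : c = s
    · rw [hcs, Equiv.swap_apply_right]
      exact ⟨-1, by ring⟩
    · rw [Equiv.swap_apply_of_ne_of_ne hcr hcs, sub_self]
      exact dvd_zero _

lemma ddiff_gkm {f : Equiv.Perm (Fin N) → MvPolynomial (Fin N) ℤ}
    (hg : GKMCompatA N f) {h k : Fin N} (hne : h ≠ k) :
    GKMCompatA N (ddiff f h k) := by
  intro v r s hrs
  by_cases hcase : Equiv.swap r s * v = v * Equiv.swap h k
  · rw [hcase, ddiff_invariant hg hne v, sub_self]
    exact dvd_zero _
  · set t := Equiv.swap r s with ht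
    have hswap_ne : ¬ (Equiv.swap r s = Equiv.swap (v h) (v k)) := by
      intro he
      apply hcase
      rw [ht, he, swap_mul_eq]
    have hvne : v h ≠ v k := fun e => hne (v.injective e)
    have htvne : t (v h) ≠ t (v k) := fun e => hvne (t.injective e)
    set dv := (X (v h) - X (v k) : MvPolynomial (Fin N) ℤ) with hdv
    set dtv := (X (t (v h)) - X (t (v k)) : MvPolynomial (Fin N) ℤ) with hdtv
    set lam := (X r - X s : MvPolynomial (Fin N) ℤ) with hlam
    have hprime : Prime lam := primeXsub hrs.ne
    have h1 : dv * ddiff f h k v = f (v * Equiv.swap h k) - f v := ddiff_spec hg v hne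
    have h2 : dtv * ddiff f h k (t * v) = f (t * v * Equiv.swap h k) - f (t * v) := by
      have := ddiff_spec hg (t * v) hne
      rwa [Equiv.Perm.mul_apply, Equiv.Perm.mul_apply] at this
    have hA : lam ∣ f (v * Equiv.swap h k) - f (t * (v * Equiv.swap h k)) :=
      hg (v * Equiv.swap h k) r s hrs
    have hB : lam ∣ f v - f (t * v) := hg v r s hrs
    have hC : lam ∣ dv - dtv := by
      have e : dv - dtv = (X (v h) - X (t (v h))) - (X (v k) - X (t (v k))) := by
        rw [hdv, hdtv]; ring
      rw [e]
      exact dvd_sub (lin_aux (v h)) (lin_aux (v k))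
    have hassoc : t * (v * Equiv.swap h k) = t * v * Equiv.swap h k := by rw [mul_assoc]
    rw [hassoc] at hA
    have key : lam ∣ dv * dtv * (ddiff f h k v - ddiff f h k (t * v)) := by
      have e : dv * dtv * (ddiff f h k v - ddiff f h k (t * v))
          = dtv * ((f (v * Equiv.swap h k) - f (t * v * Equiv.swap h k)) - (f v - f (t * v)))
            + (dtv - dv) * (f (t * v * Equiv.swap h k) - f (t * v)) := by
        linear_combination dtv * h1 - dv * h2
      rw [e]
      refine dvd_add (Dvd.dvd.mul_left (dvd_sub hA hB) _) (Dvd.dvd.mul_right ?_ _)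
      have e2 : dtv - dv = -(dv - dtv) := by ring
      rw [e2]
      exact hC.neg_right
    have hndv : ¬ lam ∣ dv := by
      intro hdvd
      apply hswap_ne
      rcases lt_or_gt_of_ne hvne with hlt | hgt
      · obtain ⟨e1, e2⟩ := lin_dvd_eq hrs hlt hdvd
        rw [e1, e2]
      · obtain ⟨e1, e2⟩ := lin_dvd_eq hrs hgt (by
          have e : (X (v k) - X (v h) : MvPolynomial (Fin N) ℤ) = -dv := by rw [hdv]; ring
          rw [e]; exact hdvd.neg_right)
        rw [e1, e2, Equiv.swap_comm]
    have hndtv : ¬ lam ∣ dtv := by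
      intro hdvd
      have hts : Equiv.swap r s = Equiv.swap (t (v h)) (t (v k)) := by
        rcases lt_or_gt_of_ne htvne with hlt | hgt
        · obtain ⟨e1, e2⟩ := lin_dvd_eq hrs hlt hdvd
          rw [e1, e2]
        · obtain ⟨e1, e2⟩ := lin_dvd_eq hrs hgt (by
            have e : (X (t (v k)) - X (t (v h)) : MvPolynomial (Fin N) ℤ) = -dtv := by
              rw [hdtv]; ring
            rw [e]; exact hdvd.neg_right)
          rw [e1, e2, Equiv.swap_comm]
      apply hswap_ne
      have e4 : Equiv.swap r s = t * Equiv.swap (v h) (v k) * t⁻¹ := by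
        rw [hts, Equiv.swap_apply_apply]
      have e5 : Equiv.swap (v h) (v k) = t⁻¹ * Equiv.swap r s * t := by
        rw [e4]; group
      rw [e5, ht]
      group
    rcases (hprime.dvd_mul.1 key) with hd | hd
    · rcases hprime.dvd_mul.1 hd with hd2 | hd2
      · exact absurd hd2 hndv
      · exact absurd hd2 hndtv
    · exact hd

end Step


section StepCanon

variable {N : ℕ}

lemma homog_of_disj {m : ℕ} {p : MvPolynomial (Fin N) ℤ}
    (h : p = 0 ∨ p.IsHomogeneous m) : p.IsHomogeneous m := by
  rcases h with h | h
  · rw [h]; exact MvPolynomial.isHomogeneous_zero _ _ _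
  · exact h

lemma isCanon_step {w : Equiv.Perm (Fin N)} {h k : Fin N}
    (hk : (k : ℕ) = (h : ℕ) + 1) (asc : w h < w k)
    {f : Equiv.Perm (Fin N) → MvPolynomial (Fin N) ℤ}
    (hf : IsCanonA N (w * Equiv.swap h k) f) : IsCanonA N w (ddiff f h k) := by
  obtain ⟨hgkm, hhom, hval, hvan⟩ := hf
  have hne : h ≠ k := Fin.ne_of_val_ne (by omega)
  have hlenu : lenA N (w * Equiv.swap h k) = lenA N w + 1 := lenA_adj_asc hk asc
  have hz : ∀ v, (f v).IsHomogeneous (lenA N w + 1) := by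
    intro v; rw [← hlenu]; exact homog_of_disj (hhom v)
  have hwne : w ≠ w * Equiv.swap h k := by
    intro he
    have : Equiv.swap h k = 1 := by
      have := congrArg (fun x => w⁻¹ * x) he
      simpa using this.symm
    exact hne (Equiv.swap_eq_one_iff.1 this)
  refine ⟨ddiff_gkm hgkm hne, ?_, ?_, ?_⟩
  · -- homogeneity
    intro v
    right
    have hvne : v h ≠ v k := fun e => hne (v.injective e)
    have hsp := ddiff_spec hgkm v hne
    have hhq : ((X (v h) - X (v k) : MvPolynomial (Fin N) ℤ)
        * ddiff f h k v).IsHomogeneous (lenA N w + 1) := by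
      rw [hsp]; exact (hz _).sub (hz _)
    have := homog_quot ((MvPolynomial.isHomogeneous_X ℤ (v h)).sub
      (MvPolynomial.isHomogeneous_X ℤ (v k))) (Xsub_ne_zero hvne) hhq (by omega)
    simpa using this
  · -- value at w
    have hsp := ddiff_spec hgkm w hne
    have hfw : f w = 0 := hvan w hwne (by omega)
    have hins : prodInvA N (w * Equiv.swap h k)
        = (X (w h) - X (w k)) * prodInvA N w := by
      rw [prodInvA, invSet_adj hk asc, Finset.prod_insert (self_notmem_adj
        (show h < k by rw [Fin.lt_def]; omega))]
      rfl
    rw [hfw, hval, sub_zero, hins] at hsp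
    exact mul_left_cancel₀ (Xsub_ne_zero (fun e => hne (w.injective e))) hsp
  · -- vanishing
    intro v hvw hvlen
    have hsp := ddiff_spec hgkm v hne
    have hfv : f v = 0 := by
      refine hvan v ?_ (by omega)
      intro he
      rw [he, hlenu] at hvlen
      omega
    have hfvs : f (v * Equiv.swap h k) = 0 := by
      refine hvan _ ?_ ?_
      · intro he
        exact hvw (mul_right_cancel he)
      · have := lenA_adj_le (w := v) hk
        omega
    rw [hfv, hfvs, sub_zero] at hsp
    rcases mul_eq_zero.1 hsp with h0 | h0
    · exact absurd h0 (Xsub_ne_zero (fun e => hne (v.injective e)))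
    · exact h0

/-- the top (delta) class -/
def deltaClass (N : ℕ) (w : Equiv.Perm (Fin N)) :
    Equiv.Perm (Fin N) → MvPolynomial (Fin N) ℤ :=
  fun v => if v = w then prodInvA N w else 0

lemma isCanon_delta {w : Equiv.Perm (Fin N)} (hw : allD N w) :
    IsCanonA N w (deltaClass N w) := by
  refine ⟨?_, ?_, ?_, ?_⟩
  · intro v i j hij
    have hmem : (i, j) ∈ InvSetA N w := by
      rw [invSet_allD hw]
      simp [hij]
    have hdvd : (X i - X j : MvPolynomial (Fin N) ℤ) ∣ prodInvA N w := by
      have := Finset.dvd_prod_of_mem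
        (fun p : Fin N × Fin N => (X p.1 - X p.2 : MvPolynomial (Fin N) ℤ)) hmem
      exact this
    unfold deltaClass
    split_ifs with h1 h2 h3
    · rw [sub_self]; exact dvd_zero _
    · rw [sub_zero]; exact hdvd
    · rw [zero_sub]; exact hdvd.neg_right
    · rw [sub_zero]; exact dvd_zero _
  · intro v
    unfold deltaClass
    split_ifs with h1
    · exact Or.inr (prodInv_homog w)
    · exact Or.inl rfl
  · unfold deltaClass; rw [if_pos rfl]
  · intro v hvw _
    unfold deltaClass; rw [if_neg hvw]

lemma exists_canon_aux : ∀ (d : ℕ) (w : Equiv.Perm (Fin N)),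
    Fintype.card (Fin N × Fin N) ≤ lenA N w + d →
    ∃ α, IsCanonA N w α := by
  intro d
  induction d with
  | zero =>
    intro w hbound
    by_cases hD : allD N w
    · exact ⟨deltaClass N w, isCanon_delta hD⟩
    · exfalso
      rw [allD] at hD
      push_neg at hD
      obtain ⟨h, k, hk, hdesc⟩ := hD
      have hne : h ≠ k := Fin.ne_of_val_ne (by omega)
      have hasc : w h < w k :=
        lt_of_le_of_ne hdesc (fun e => hne (w.injective e))
      have h1 : lenA N (w * Equiv.swap h k) = lenA N w + 1 := lenA_adj_asc hk hasc
      have h2 : lenA N (w * Equiv.swap h k) ≤ Fintype.card (Fin N × Fin N) := by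
        rw [lenA]
        calc (InvSetA N (w * Equiv.swap h k)).card ≤ Finset.univ.card :=
          Finset.card_le_card (Finset.subset_univ _)
        _ = Fintype.card (Fin N × Fin N) := Finset.card_univ
      omega
  | succ d ih =>
    intro w hbound
    by_cases hD : allD N w
    · exact ⟨deltaClass N w, isCanon_delta hD⟩
    · rw [allD] at hD
      push_neg at hD
      obtain ⟨h, k, hk, hdesc⟩ := hD
      have hne : h ≠ k := Fin.ne_of_val_ne (by omega)
      have hasc : w h < w k :=
        lt_of_le_of_ne hdesc (fun e => hne (w.injective e))
      have h1 : lenA N (w * Equiv.swap h k) = lenA N w + 1 := lenA_adj_asc hk hasc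
      obtain ⟨f, hf⟩ := ih (w * Equiv.swap h k) (by omega)
      exact ⟨ddiff f h k, isCanon_step hk hasc hf⟩

lemma exists_canon (w : Equiv.Perm (Fin N)) : ∃ α, IsCanonA N w α :=
  exists_canon_aux (Fintype.card (Fin N × Fin N)) w (by omega)

lemma canon_unique {w : Equiv.Perm (Fin N)}
    {α β : Equiv.Perm (Fin N) → MvPolynomial (Fin N) ℤ}
    (hα : IsCanonA N w α) (hβ : IsCanonA N w β) : α = β := by
  obtain ⟨hg1, hh1, hval1, hvan1⟩ := hα
  obtain ⟨hg2, hh2, hval2, hvan2⟩ := hβ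
  suffices H : ∀ (m : ℕ) (v : Equiv.Perm (Fin N)), lenA N v ≤ m → α v = β v by
    funext v; exact H (lenA N v) v le_rfl
  intro m
  induction m with
  | zero =>
    intro v hv
    by_cases hvw : v = w
    · rw [hvw, hval1, hval2]
    · rw [hvan1 v hvw (by omega), hvan2 v hvw (by omega)]
  | succ m ih =>
    intro v hv
    by_cases hvw : v = w
    · rw [hvw, hval1, hval2]
    by_cases hlen : lenA N v ≤ lenA N w
    · rw [hvan1 v hvw hlen, hvan2 v hvw hlen]
    push_neg at hlen
    have hdvd : ∀ p ∈ InvSetA N v,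
        (X p.1 - X p.2 : MvPolynomial (Fin N) ℤ) ∣ (α v - β v) := by
      rintro ⟨r, s⟩ hm
      have hrs := (mem_InvSetA.1 hm).1
      have hsmall : lenA N (Equiv.swap r s * v) < lenA N v := lenA_refl_lt hm
      have heq : α (Equiv.swap r s * v) = β (Equiv.swap r s * v) :=
        ih _ (by omega)
      have d1 := hg1 v r s hrs
      have d2 := hg2 v r s hrs
      have e : α v - β v = (α v - α (Equiv.swap r s * v))
          - (β v - β (Equiv.swap r s * v)) := by rw [heq]; ring
      rw [e]
      exact dvd_sub d1 d2
    have hprod : prodInvA N v ∣ (α v - β v) :=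
      prod_lin_dvd (fun p hp => (mem_InvSetA.1 hp).1) hdvd
    have hzero : α v - β v = 0 := by
      refine homog_dvd_zero (prodInv_homog v)
        ((homog_of_disj (hh1 v)).sub (homog_of_disj (hh2 v))) hlen hprod
    exact sub_eq_zero.1 hzero

end StepCanon


section Bij

variable {N : ℕ}

def PhiMap (a b : Fin N) (mid : Fin N → Prop) (p : Fin N × Fin N) : Fin N × Fin N :=
  if (p.2 = a ∨ p.2 = b) ∧ ¬(p.1 = a ∨ p.1 = b) ∧ mid p.1 then (p.1, Equiv.swap a b p.2)
  else if (p.1 = a ∨ p.1 = b) ∧ ¬(p.2 = a ∨ p.2 = b) ∧ mid p.2 then (Equiv.swap a b p.1, p.2)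
  else p

lemma swap_mem_ab {a b c : Fin N} (hc : c = a ∨ c = b) :
    Equiv.swap a b c = a ∨ Equiv.swap a b c = b := by
  rcases hc with e | e
  · right; rw [e, Equiv.swap_apply_left]
  · left; rw [e, Equiv.swap_apply_right]

lemma PhiMap_invol (a b : Fin N) (mid : Fin N → Prop) (p : Fin N × Fin N) :
    PhiMap a b mid (PhiMap a b mid p) = p := by
  obtain ⟨x, y⟩ := p
  show PhiMap a b mid (PhiMap a b mid (x, y)) = (x, y)
  by_cases c1 : (y = a ∨ y = b) ∧ ¬(x = a ∨ x = b) ∧ mid x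
  · rw [show PhiMap a b mid (x, y) = (x, Equiv.swap a b y) from if_pos c1]
    have c1' : (Equiv.swap a b y = a ∨ Equiv.swap a b y = b) ∧ ¬(x = a ∨ x = b) ∧ mid x :=
      ⟨swap_mem_ab c1.1, c1.2⟩
    rw [show PhiMap a b mid (x, Equiv.swap a b y) = (x, Equiv.swap a b (Equiv.swap a b y)) from
      if_pos c1', Equiv.swap_apply_self]
  · rw [show PhiMap a b mid (x, y) = _ from if_neg c1]
    by_cases c2 : (x = a ∨ x = b) ∧ ¬(y = a ∨ y = b) ∧ mid y
    · rw [show (if (x = a ∨ x = b) ∧ ¬(y = a ∨ y = b) ∧ mid y then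
        (Equiv.swap a b x, y) else (x, y)) = (Equiv.swap a b x, y) from if_pos c2]
      have nc1 : ¬ ((y = a ∨ y = b) ∧ ¬(Equiv.swap a b x = a ∨ Equiv.swap a b x = b)
          ∧ mid (Equiv.swap a b x)) := fun hcon => c2.2.1 hcon.1
      rw [show PhiMap a b mid (Equiv.swap a b x, y) = _ from if_neg nc1]
      have c2' : (Equiv.swap a b x = a ∨ Equiv.swap a b x = b) ∧ ¬(y = a ∨ y = b) ∧ mid y :=
        ⟨swap_mem_ab c2.1, c2.2⟩
      rw [show (if (Equiv.swap a b x = a ∨ Equiv.swap a b x = b) ∧ ¬(y = a ∨ y = b) ∧ mid y then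
        (Equiv.swap a b (Equiv.swap a b x), y) else (Equiv.swap a b x, y))
          = (Equiv.swap a b (Equiv.swap a b x), y) from if_pos c2', Equiv.swap_apply_self]
    · rw [show (if (x = a ∨ x = b) ∧ ¬(y = a ∨ y = b) ∧ mid y then
        (Equiv.swap a b x, y) else (x, y)) = (x, y) from if_neg c2]
      rw [show PhiMap a b mid (x, y) = _ from if_neg c1]
      rw [show (if (x = a ∨ x = b) ∧ ¬(y = a ∨ y = b) ∧ mid y then
        (Equiv.swap a b x, y) else (x, y)) = (x, y) from if_neg c2]

lemma chi_X_swap (a b c : Fin N) : chi N a b (X (Equiv.swap a b c)) = chi N a b (X c) := by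
  by_cases hc : c = a
  · rw [hc, Equiv.swap_apply_left, chi_X, chi_X]
    by_cases hab : a = b
    · rw [hab]
    · rw [if_neg hab, if_pos rfl]
  · by_cases hc2 : c = b
    · rw [hc2, Equiv.swap_apply_right, chi_X, chi_X, if_pos rfl]
      by_cases hab : a = b
      · rw [if_pos hab, hab]
      · rw [if_neg hab]
    · rw [Equiv.swap_apply_of_ne_of_ne hc hc2]

lemma chi_phi_eq (a b : Fin N) (mid : Fin N → Prop) (p : Fin N × Fin N) :
    chi N a b (X (PhiMap a b mid p).1 - X (PhiMap a b mid p).2)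
      = chi N a b (X p.1 - X p.2) := by
  obtain ⟨x, y⟩ := p
  show chi N a b (X (PhiMap a b mid (x, y)).1 - X (PhiMap a b mid (x, y)).2) = _
  by_cases c1 : (y = a ∨ y = b) ∧ ¬(x = a ∨ x = b) ∧ mid x
  · rw [show PhiMap a b mid (x, y) = (x, Equiv.swap a b y) from if_pos c1]
    show chi N a b (X x - X (Equiv.swap a b y)) = chi N a b (X x - X y)
    rw [map_sub, map_sub, chi_X_swap]
  · rw [show PhiMap a b mid (x, y) = _ from if_neg c1]
    by_cases c2 : (x = a ∨ x = b) ∧ ¬(y = a ∨ y = b) ∧ mid y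
    · rw [show (if (x = a ∨ x = b) ∧ ¬(y = a ∨ y = b) ∧ mid y then
        (Equiv.swap a b x, y) else (x, y)) = (Equiv.swap a b x, y) from if_pos c2]
      show chi N a b (X (Equiv.swap a b x) - X y) = chi N a b (X x - X y)
      rw [map_sub, map_sub, chi_X_swap]
    · rw [show (if (x = a ∨ x = b) ∧ ¬(y = a ∨ y = b) ∧ mid y then
        (Equiv.swap a b x, y) else (x, y)) = (x, y) from if_neg c2]

end Bij


section BijMem

variable {N : ℕ}

lemma phi_mem_fwd {w : Equiv.Perm (Fin N)} {h k : Fin N} (hhk : h < k) (asc : w h < w k)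
    (hlen : lenA N (w * Equiv.swap h k) = lenA N w + 1) :
    ∀ p ∈ InvSetA N w,
      PhiMap (w h) (w k) (fun x => h < w⁻¹ x ∧ w⁻¹ x < k) p
        ∈ (InvSetA N (w * Equiv.swap h k)).erase (w h, w k) := by
  intro p hp
  obtain ⟨x, y⟩ := p
  obtain ⟨hxy, hpos⟩ := mem_InvSetA.1 hp
  have hab : w h < w k := asc
  have hwa : w⁻¹ (w h) = h := w.inv_apply_self h
  have hwb : w⁻¹ (w k) = k := w.inv_apply_self k
  have hvinv : ∀ z, (w * Equiv.swap h k)⁻¹ z = Equiv.swap h k (w⁻¹ z) := by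
    intro z; rw [mul_inv_rev, Equiv.Perm.mul_apply, Equiv.swap_inv]
  have hva : (w * Equiv.swap h k)⁻¹ (w h) = k := by rw [hvinv, hwa, Equiv.swap_apply_left]
  have hvb : (w * Equiv.swap h k)⁻¹ (w k) = h := by rw [hvinv, hwb, Equiv.swap_apply_right]
  have hpe : ∀ z, w⁻¹ z = h → z = w h := fun z e => by rw [← w.apply_inv_self z, e]
  have hpe2 : ∀ z, w⁻¹ z = k → z = w k := fun z e => by rw [← w.apply_inv_self z, e]
  have hvx : ∀ z, z ≠ w h → z ≠ w k → (w * Equiv.swap h k)⁻¹ z = w⁻¹ z := by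
    intro z h1 h2
    rw [hvinv, Equiv.swap_apply_of_ne_of_ne (fun e => h1 (hpe z e)) (fun e => h2 (hpe2 z e))]
  simp only [Finset.mem_erase, mem_InvSetA]
  by_cases hya : y = w h
  · subst hya
    have hxa : x ≠ w h := hxy.ne
    have hxb : x ≠ w k := (hxy.trans hab).ne
    rw [hwa] at hpos
    by_cases hmid : w⁻¹ x < k
    · have c1 : ((w h : Fin N) = w h ∨ (w h : Fin N) = w k) ∧ ¬(x = w h ∨ x = w k)
          ∧ (h < w⁻¹ x ∧ w⁻¹ x < k) :=
        ⟨Or.inl rfl, fun hc => hc.elim hxa hxb, hpos, hmid⟩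
      rw [show PhiMap (w h) (w k) (fun z => h < w⁻¹ z ∧ w⁻¹ z < k) (x, w h)
          = (x, Equiv.swap (w h) (w k) (w h)) from if_pos c1, Equiv.swap_apply_left]
      refine ⟨fun he => hxa (congrArg Prod.fst he), hxy.trans hab, ?_⟩
      rw [hvb, hvx x hxa hxb]; exact hpos
    · have hk2 : k < w⁻¹ x := lt_of_le_of_ne (not_lt.1 hmid) (fun e => hxb (hpe2 x e.symm))
      have nc1 : ¬ (((w h : Fin N) = w h ∨ (w h : Fin N) = w k) ∧ ¬(x = w h ∨ x = w k)
          ∧ (h < w⁻¹ x ∧ w⁻¹ x < k)) := fun hc => hmid hc.2.2.2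
      have nc2 : ¬ ((x = w h ∨ x = w k) ∧ ¬((w h : Fin N) = w h ∨ (w h : Fin N) = w k)
          ∧ (h < w⁻¹ (w h) ∧ w⁻¹ (w h) < k)) := fun hc => hc.1.elim hxa hxb
      rw [show PhiMap (w h) (w k) (fun z => h < w⁻¹ z ∧ w⁻¹ z < k) (x, w h) = _
        from if_neg nc1, if_neg nc2]
      refine ⟨fun he => hxa (congrArg Prod.fst he), hxy, ?_⟩
      rw [hva, hvx x hxa hxb]; exact hk2
  · by_cases hyb : y = w k
    · subst hyb
      by_cases hxa : x = w h
      · exfalso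
        rw [hxa, hwa, hwb] at hpos
        exact absurd hpos (not_lt.2 hhk.le)
      · have hxb : x ≠ w k := hxy.ne
        rw [hwb] at hpos
        have nc1 : ¬ (((w k : Fin N) = w h ∨ (w k : Fin N) = w k) ∧ ¬(x = w h ∨ x = w k)
            ∧ (h < w⁻¹ x ∧ w⁻¹ x < k)) := fun hc => absurd hc.2.2.2 (not_lt.2 hpos.le)
        have nc2 : ¬ ((x = w h ∨ x = w k) ∧ ¬((w k : Fin N) = w h ∨ (w k : Fin N) = w k)
            ∧ (h < w⁻¹ (w k) ∧ w⁻¹ (w k) < k)) := fun hc => hc.1.elim hxa hxb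
        rw [show PhiMap (w h) (w k) (fun z => h < w⁻¹ z ∧ w⁻¹ z < k) (x, w k) = _
          from if_neg nc1, if_neg nc2]
        refine ⟨fun he => hxa (congrArg Prod.fst he), hxy, ?_⟩
        rw [hvb, hvx x hxa hxb]; exact hhk.trans hpos
    · by_cases hxa : x = w h
      · subst hxa
        rw [hwa] at hpos
        have hyb' : y ≠ w k := hyb
        have nmid : ¬ (h < w⁻¹ y ∧ w⁻¹ y < k) := fun hc => absurd hpos (not_lt.2 hc.1.le)
        have nc1 : ¬ ((y = w h ∨ y = w k) ∧ ¬((w h : Fin N) = w h ∨ (w h : Fin N) = w k)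
            ∧ (h < w⁻¹ (w h) ∧ w⁻¹ (w h) < k)) := fun hc => hc.1.elim hya hyb
        have nc2 : ¬ (((w h : Fin N) = w h ∨ (w h : Fin N) = w k) ∧ ¬(y = w h ∨ y = w k)
            ∧ (h < w⁻¹ y ∧ w⁻¹ y < k)) := fun hc => nmid hc.2.2
        rw [show PhiMap (w h) (w k) (fun z => h < w⁻¹ z ∧ w⁻¹ z < k) (w h, y) = _
          from if_neg nc1, if_neg nc2]
        refine ⟨fun he => hyb (congrArg Prod.snd he), hxy, ?_⟩
        rw [hva, hvx y hya hyb']; exact hpos.trans hhk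
      · by_cases hxb : x = w k
        · subst hxb
          rw [hwb] at hpos
          by_cases hmid : h < w⁻¹ y
          · have c2 : ((w k : Fin N) = w h ∨ (w k : Fin N) = w k) ∧ ¬(y = w h ∨ y = w k)
                ∧ (h < w⁻¹ y ∧ w⁻¹ y < k) :=
              ⟨Or.inr rfl, fun hc => hc.elim hya hyb, hmid, hpos⟩
            have nc1 : ¬ ((y = w h ∨ y = w k) ∧ ¬((w k : Fin N) = w h ∨ (w k : Fin N) = w k)
                ∧ (h < w⁻¹ (w k) ∧ w⁻¹ (w k) < k)) := fun hc => hc.1.elim hya hyb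
            rw [show PhiMap (w h) (w k) (fun z => h < w⁻¹ z ∧ w⁻¹ z < k) (w k, y) = _
              from if_neg nc1, if_pos c2, Equiv.swap_apply_right]
            refine ⟨fun he => hyb (congrArg Prod.snd he), hab.trans hxy, ?_⟩
            rw [hva, hvx y hya hyb]
            exact hpos
          · have hlt : w⁻¹ y < h :=
              lt_of_le_of_ne (not_lt.1 hmid) (fun e => hya (hpe y e))
            have nc1 : ¬ ((y = w h ∨ y = w k) ∧ ¬((w k : Fin N) = w h ∨ (w k : Fin N) = w k)
                ∧ (h < w⁻¹ (w k) ∧ w⁻¹ (w k) < k)) := fun hc => hc.1.elim hya hyb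
            have nc2 : ¬ (((w k : Fin N) = w h ∨ (w k : Fin N) = w k) ∧ ¬(y = w h ∨ y = w k)
                ∧ (h < w⁻¹ y ∧ w⁻¹ y < k)) := fun hc => hmid hc.2.2.1
            rw [show PhiMap (w h) (w k) (fun z => h < w⁻¹ z ∧ w⁻¹ z < k) (w k, y) = _
              from if_neg nc1, if_neg nc2]
            refine ⟨fun he => hyb (congrArg Prod.snd he), hxy, ?_⟩
            rw [hvb, hvx y hya hyb]
            exact hlt
        · have nc1 : ¬ ((y = w h ∨ y = w k) ∧ ¬(x = w h ∨ x = w k)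
              ∧ (h < w⁻¹ x ∧ w⁻¹ x < k)) := fun hc => hc.1.elim hya hyb
          have nc2 : ¬ ((x = w h ∨ x = w k) ∧ ¬(y = w h ∨ y = w k)
              ∧ (h < w⁻¹ y ∧ w⁻¹ y < k)) := fun hc => hc.1.elim hxa hxb
          rw [show PhiMap (w h) (w k) (fun z => h < w⁻¹ z ∧ w⁻¹ z < k) (x, y) = _
            from if_neg nc1, if_neg nc2]
          refine ⟨fun he => hxa (congrArg Prod.fst he), hxy, ?_⟩
          rw [hvx y hya hyb, hvx x hxa hxb]
          exact hpos


lemma phi_mem_bwd {w : Equiv.Perm (Fin N)} {h k : Fin N} (hhk : h < k) (asc : w h < w k)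
    (hlen : lenA N (w * Equiv.swap h k) = lenA N w + 1) :
    ∀ p ∈ (InvSetA N (w * Equiv.swap h k)).erase (w h, w k),
      PhiMap (w h) (w k) (fun x => h < w⁻¹ x ∧ w⁻¹ x < k) p ∈ InvSetA N w := by
  intro p hp
  obtain ⟨x, y⟩ := p
  rw [Finset.mem_erase] at hp
  obtain ⟨hne, hmem⟩ := hp
  obtain ⟨hxy, hpos⟩ := mem_InvSetA.1 hmem
  have hab : w h < w k := asc
  have hwa : w⁻¹ (w h) = h := w.inv_apply_self h
  have hwb : w⁻¹ (w k) = k := w.inv_apply_self k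
  have hvinv : ∀ z, (w * Equiv.swap h k)⁻¹ z = Equiv.swap h k (w⁻¹ z) := by
    intro z; rw [mul_inv_rev, Equiv.Perm.mul_apply, Equiv.swap_inv]
  have hva : (w * Equiv.swap h k)⁻¹ (w h) = k := by rw [hvinv, hwa, Equiv.swap_apply_left]
  have hvb : (w * Equiv.swap h k)⁻¹ (w k) = h := by rw [hvinv, hwb, Equiv.swap_apply_right]
  have hpe : ∀ z, w⁻¹ z = h → z = w h := fun z e => by rw [← w.apply_inv_self z, e]
  have hpe2 : ∀ z, w⁻¹ z = k → z = w k := fun z e => by rw [← w.apply_inv_self z, e]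
  have hvx : ∀ z, z ≠ w h → z ≠ w k → (w * Equiv.swap h k)⁻¹ z = w⁻¹ z := by
    intro z h1 h2
    rw [hvinv, Equiv.swap_apply_of_ne_of_ne (fun e => h1 (hpe z e)) (fun e => h2 (hpe2 z e))]
  have nomid : ∀ z : Fin N, z ≠ w h → z ≠ w k → h < w⁻¹ z → w⁻¹ z < k →
      z < w h ∨ w k < z := by
    intro z h1 h2 m1 m2
    have := no_middle hhk asc hlen m1 m2
    rwa [w.apply_inv_self] at this
  simp only [mem_InvSetA]
  by_cases hya : y = w h
  · subst hya
    have hxa : x ≠ w h := hxy.ne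
    have hxb : x ≠ w k := (hxy.trans hab).ne
    rw [hva] at hpos
    rw [hvx x hxa hxb] at hpos
    have nmid : ¬ (h < w⁻¹ x ∧ w⁻¹ x < k) := fun hc => absurd hpos (not_lt.2 hc.2.le)
    have nc1 : ¬ (((w h : Fin N) = w h ∨ (w h : Fin N) = w k) ∧ ¬(x = w h ∨ x = w k)
        ∧ (h < w⁻¹ x ∧ w⁻¹ x < k)) := fun hc => nmid hc.2.2
    have nc2 : ¬ ((x = w h ∨ x = w k) ∧ ¬((w h : Fin N) = w h ∨ (w h : Fin N) = w k)
        ∧ (h < w⁻¹ (w h) ∧ w⁻¹ (w h) < k)) := fun hc => hc.1.elim hxa hxb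
    rw [show PhiMap (w h) (w k) (fun z => h < w⁻¹ z ∧ w⁻¹ z < k) (x, w h) = _
      from if_neg nc1, if_neg nc2]
    exact ⟨hxy, by rw [hwa]; exact hhk.trans hpos⟩
  · by_cases hyb : y = w k
    · subst hyb
      by_cases hxa : x = w h
      · exact absurd (by rw [hxa]) hne
      · have hxb : x ≠ w k := hxy.ne
        rw [hvb, hvx x hxa hxb] at hpos
        by_cases hmid : w⁻¹ x < k
        · have c1 : ((w k : Fin N) = w h ∨ (w k : Fin N) = w k) ∧ ¬(x = w h ∨ x = w k)
              ∧ (h < w⁻¹ x ∧ w⁻¹ x < k) :=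
            ⟨Or.inr rfl, fun hc => hc.elim hxa hxb, hpos, hmid⟩
          rw [show PhiMap (w h) (w k) (fun z => h < w⁻¹ z ∧ w⁻¹ z < k) (x, w k)
              = (x, Equiv.swap (w h) (w k) (w k)) from if_pos c1, Equiv.swap_apply_right]
          have hxlt : x < w h := by
            rcases nomid x hxa hxb hpos hmid with hc | hc
            · exact hc
            · exact absurd hxy (not_lt.2 hc.le)
          exact ⟨hxlt, by rw [hwa]; exact hpos⟩
        · have hk2 : k < w⁻¹ x := lt_of_le_of_ne (not_lt.1 hmid) (fun e => hxb (hpe2 x e.symm))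
          have nc1 : ¬ (((w k : Fin N) = w h ∨ (w k : Fin N) = w k) ∧ ¬(x = w h ∨ x = w k)
              ∧ (h < w⁻¹ x ∧ w⁻¹ x < k)) := fun hc => hmid hc.2.2.2
          have nc2 : ¬ ((x = w h ∨ x = w k) ∧ ¬((w k : Fin N) = w h ∨ (w k : Fin N) = w k)
              ∧ (h < w⁻¹ (w k) ∧ w⁻¹ (w k) < k)) := fun hc => hc.1.elim hxa hxb
          rw [show PhiMap (w h) (w k) (fun z => h < w⁻¹ z ∧ w⁻¹ z < k) (x, w k) = _
            from if_neg nc1, if_neg nc2]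
          exact ⟨hxy, by rw [hwb]; exact hk2⟩
    · by_cases hxa : x = w h
      · subst hxa
        rw [hva, hvx y hya hyb] at hpos
        by_cases hmid : h < w⁻¹ y
        · have c2 : ((w h : Fin N) = w h ∨ (w h : Fin N) = w k) ∧ ¬(y = w h ∨ y = w k)
              ∧ (h < w⁻¹ y ∧ w⁻¹ y < k) :=
            ⟨Or.inl rfl, fun hc => hc.elim hya hyb, hmid, hpos⟩
          have nc1 : ¬ ((y = w h ∨ y = w k) ∧ ¬((w h : Fin N) = w h ∨ (w h : Fin N) = w k)
              ∧ (h < w⁻¹ (w h) ∧ w⁻¹ (w h) < k)) := fun hc => hc.1.elim hya hyb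
          rw [show PhiMap (w h) (w k) (fun z => h < w⁻¹ z ∧ w⁻¹ z < k) (w h, y) = _
            from if_neg nc1, if_pos c2, Equiv.swap_apply_left]
          have hylt : w k < y := by
            rcases nomid y hya hyb hmid hpos with hc | hc
            · exact absurd hxy (not_lt.2 hc.le)
            · exact hc
          exact ⟨hylt, by rw [hwb]; exact hpos⟩
        · have hlt : w⁻¹ y < h := lt_of_le_of_ne (not_lt.1 hmid) (fun e => hya (hpe y e))
          have nc1 : ¬ ((y = w h ∨ y = w k) ∧ ¬((w h : Fin N) = w h ∨ (w h : Fin N) = w k)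
              ∧ (h < w⁻¹ (w h) ∧ w⁻¹ (w h) < k)) := fun hc => hc.1.elim hya hyb
          have nc2 : ¬ (((w h : Fin N) = w h ∨ (w h : Fin N) = w k) ∧ ¬(y = w h ∨ y = w k)
              ∧ (h < w⁻¹ y ∧ w⁻¹ y < k)) := fun hc => hmid hc.2.2.1
          rw [show PhiMap (w h) (w k) (fun z => h < w⁻¹ z ∧ w⁻¹ z < k) (w h, y) = _
            from if_neg nc1, if_neg nc2]
          exact ⟨hxy, by rw [hwa]; exact hlt⟩
      · by_cases hxb : x = w k
        · subst hxb
          rw [hvb, hvx y hya hyb] at hpos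
          have nmid : ¬ (h < w⁻¹ y ∧ w⁻¹ y < k) := fun hc => absurd hpos (not_lt.2 hc.1.le)
          have nc1 : ¬ ((y = w h ∨ y = w k) ∧ ¬((w k : Fin N) = w h ∨ (w k : Fin N) = w k)
              ∧ (h < w⁻¹ (w k) ∧ w⁻¹ (w k) < k)) := fun hc => hc.1.elim hya hyb
          have nc2 : ¬ (((w k : Fin N) = w h ∨ (w k : Fin N) = w k) ∧ ¬(y = w h ∨ y = w k)
              ∧ (h < w⁻¹ y ∧ w⁻¹ y < k)) := fun hc => nmid hc.2.2
          rw [show PhiMap (w h) (w k) (fun z => h < w⁻¹ z ∧ w⁻¹ z < k) (w k, y) = _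
            from if_neg nc1, if_neg nc2]
          exact ⟨hxy, by rw [hwb]; exact hpos.trans hhk⟩
        · have nc1 : ¬ ((y = w h ∨ y = w k) ∧ ¬(x = w h ∨ x = w k)
              ∧ (h < w⁻¹ x ∧ w⁻¹ x < k)) := fun hc => hc.1.elim hya hyb
          have nc2 : ¬ ((x = w h ∨ x = w k) ∧ ¬(y = w h ∨ y = w k)
              ∧ (h < w⁻¹ y ∧ w⁻¹ y < k)) := fun hc => hc.1.elim hxa hxb
          rw [show PhiMap (w h) (w k) (fun z => h < w⁻¹ z ∧ w⁻¹ z < k) (x, y) = _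
            from if_neg nc1, if_neg nc2]
          rw [hvx y hya hyb, hvx x hxa hxb] at hpos
          exact ⟨hxy, hpos⟩

end BijMem


section Final

variable {N : ℕ}

lemma swap_eq_pair {r s a b : Fin N} (hrs : r < s) (hab : a < b)
    (he : Equiv.swap r s = Equiv.swap a b) : r = a ∧ s = b := by
  have h1 : Equiv.swap r s a = b := by rw [he, Equiv.swap_apply_left]
  by_cases har : a = r
  · subst har
    rw [Equiv.swap_apply_left] at h1
    exact ⟨rfl, h1⟩
  · by_cases has : a = s
    · exfalso
      rw [has, Equiv.swap_apply_right] at h1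
      have e1 : r < a := by rw [has]; exact hrs
      have e2 : a < r := by rw [h1]; exact hab
      exact absurd (e1.trans e2) (lt_irrefl r)
    · exfalso
      rw [Equiv.swap_apply_of_ne_of_ne har has] at h1
      exact hab.ne h1

lemma chi_prod_eq {w : Equiv.Perm (Fin N)} {h k : Fin N} (hhk : h < k) (asc : w h < w k)
    (hlen : lenA N (w * Equiv.swap h k) = lenA N w + 1) :
    chi N (w h) (w k) (prodInvA N w)
      = chi N (w h) (w k) (∏ p ∈ (InvSetA N (w * Equiv.swap h k)).erase (w h, w k),
          (X p.1 - X p.2)) := by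
  rw [prodInvA, map_prod, map_prod]
  exact Finset.prod_nbij'
    (PhiMap (w h) (w k) (fun x => h < w⁻¹ x ∧ w⁻¹ x < k))
    (PhiMap (w h) (w k) (fun x => h < w⁻¹ x ∧ w⁻¹ x < k))
    (phi_mem_fwd hhk asc hlen) (phi_mem_bwd hhk asc hlen)
    (fun p _ => PhiMap_invol _ _ _ p) (fun p _ => PhiMap_invol _ _ _ p)
    (fun p _ => (chi_phi_eq _ _ _ p).symm)

lemma part_a {w : Equiv.Perm (Fin N)} {α : Equiv.Perm (Fin N) → MvPolynomial (Fin N) ℤ}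
    (hα : IsCanonA N w α) {h k : Fin N} (hhk : h < k)
    (hlen1 : lenA N (w * Equiv.swap h k) = lenA N w + 1) :
    w h < w k ∧ α (w * Equiv.swap h k)
      = ∏ p ∈ (InvSetA N (w * Equiv.swap h k)).erase (w h, w k), (X p.1 - X p.2) := by
  obtain ⟨hg, hh, hval, hvan⟩ := hα
  have asc : w h < w k := by
    rcases lt_trichotomy (w h) (w k) with hc | hc | hc
    · exact hc
    · exact absurd (w.injective hc) hhk.ne
    · exfalso
      have := lenA_swap_lt' hhk hc
      omega
  refine ⟨asc, ?_⟩
  set v := w * Equiv.swap h k with hv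
  have p0mem : (w h, w k) ∈ InvSetA N v := mem_p0 hhk asc
  have hsorted : ∀ p ∈ (InvSetA N v).erase (w h, w k), p.1 < p.2 :=
    fun p hp => (mem_InvSetA.1 (Finset.mem_of_mem_erase hp)).1
  have hdvd : ∀ p ∈ (InvSetA N v).erase (w h, w k),
      (X p.1 - X p.2 : MvPolynomial (Fin N) ℤ) ∣ α v := by
    rintro ⟨r, s⟩ hp
    have hmem := Finset.mem_of_mem_erase hp
    have hne := Finset.ne_of_mem_erase hp
    have hrs : r < s := (mem_InvSetA.1 hmem).1
    have hlt : lenA N (Equiv.swap r s * v) < lenA N v := lenA_refl_lt hmem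
    have htvne : Equiv.swap r s * v ≠ w := by
      intro he
      have e2 : Equiv.swap r s = Equiv.swap (w h) (w k) := by
        have hvs : v * Equiv.swap h k = w := by
          rw [hv, mul_assoc, Equiv.swap_mul_self, mul_one]
        have e4 : Equiv.swap r s * w = v := by
          rw [← he, ← mul_assoc, Equiv.swap_mul_self, one_mul]
        have e5 : v = Equiv.swap (w h) (w k) * w := hv.trans (swap_mul_eq w h k).symm
        exact mul_right_cancel (e4.trans e5)
      obtain ⟨er, es⟩ := swap_eq_pair hrs asc e2
      exact hne (by rw [er, es])
    have hz : α (Equiv.swap r s * v) = 0 := hvan _ htvne (by omega)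
    have := hg v r s hrs
    rwa [hz, sub_zero] at this
  have hPdvd : (∏ p ∈ (InvSetA N v).erase (w h, w k),
      (X p.1 - X p.2 : MvPolynomial (Fin N) ℤ)) ∣ α v := prod_lin_dvd hsorted hdvd
  have cardP : ((InvSetA N v).erase (w h, w k)).card = lenA N w := by
    rw [Finset.card_erase_of_mem p0mem]
    have : (InvSetA N v).card = lenA N v := rfl
    omega
  have hP'homog : (∏ p ∈ (InvSetA N v).erase (w h, w k),
      (X p.1 - X p.2 : MvPolynomial (Fin N) ℤ)).IsHomogeneous (lenA N w) := by
    rw [← cardP]; exact prod_lin_homog _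
  have hP'ne : (∏ p ∈ (InvSetA N v).erase (w h, w k),
      (X p.1 - X p.2 : MvPolynomial (Fin N) ℤ)) ≠ 0 := prod_lin_ne_zero hsorted
  have hsv : Equiv.swap (w h) (w k) * v = w := by
    rw [hv, ← mul_assoc, swap_mul_eq w h k, mul_assoc, Equiv.swap_mul_self, mul_one]
  have hl0 : (X (w h) - X (w k) : MvPolynomial (Fin N) ℤ) ∣ α v - prodInvA N w := by
    have := hg v (w h) (w k) asc
    rwa [hsv, hval] at this
  have hαne : α v ≠ 0 := by
    intro h0
    rw [h0, zero_sub] at hl0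
    have : (X (w h) - X (w k) : MvPolynomial (Fin N) ℤ) ∣ prodInvA N w := (dvd_neg.1 hl0)
    exact not_lin_dvd_prod asc (fun p hp => (mem_InvSetA.1 hp).1) (self_notmem_adj hhk) this
  have hαhomog : (α v).IsHomogeneous (lenA N w) := by
    rcases hh v with h0 | h0
    · exact absurd h0 hαne
    · exact h0
  obtain ⟨c, hc⟩ := hPdvd
  have hchomog : c.IsHomogeneous 0 := by
    have := homog_quot hP'homog hP'ne (by rw [← hc]; exact hαhomog) le_rfl
    simpa using this
  obtain ⟨z, rfl⟩ := eq_C_of_homog0 hchomog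
  have hchi : (X (w h) - X (w k) : MvPolynomial (Fin N) ℤ)
      ∣ prodInvA N w - ∏ p ∈ (InvSetA N v).erase (w h, w k), (X p.1 - X p.2) := by
    have d1 := chi_dvd (w h) (w k) (prodInvA N w)
    have d2 := chi_dvd (w h) (w k)
      (∏ p ∈ (InvSetA N v).erase (w h, w k), (X p.1 - X p.2 : MvPolynomial (Fin N) ℤ))
    have heq := chi_prod_eq hhk asc hlen1
    have e : prodInvA N w - ∏ p ∈ (InvSetA N v).erase (w h, w k),
        (X p.1 - X p.2 : MvPolynomial (Fin N) ℤ)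
        = (prodInvA N w - chi N (w h) (w k) (prodInvA N w))
          - ((∏ p ∈ (InvSetA N v).erase (w h, w k), (X p.1 - X p.2 : MvPolynomial (Fin N) ℤ))
            - chi N (w h) (w k) (∏ p ∈ (InvSetA N v).erase (w h, w k), (X p.1 - X p.2))) := by
      rw [heq]; ring
    rw [e]
    exact dvd_sub d1 d2
  have hfinal : (X (w h) - X (w k) : MvPolynomial (Fin N) ℤ)
      ∣ (∏ p ∈ (InvSetA N v).erase (w h, w k), (X p.1 - X p.2 : MvPolynomial (Fin N) ℤ))
        * (C z - 1) := by
    have e : (∏ p ∈ (InvSetA N v).erase (w h, w k), (X p.1 - X p.2 : MvPolynomial (Fin N) ℤ))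
        * (C z - 1)
        = (α v - prodInvA N w) + (prodInvA N w
          - ∏ p ∈ (InvSetA N v).erase (w h, w k), (X p.1 - X p.2)) := by
      rw [hc]; ring
    rw [e]
    exact dvd_add hl0 hchi
  have hnotP : ¬ ((X (w h) - X (w k) : MvPolynomial (Fin N) ℤ)
      ∣ ∏ p ∈ (InvSetA N v).erase (w h, w k), (X p.1 - X p.2)) :=
    not_lin_dvd_prod asc hsorted (Finset.notMem_erase _ _)
  have hzdvd : (X (w h) - X (w k) : MvPolynomial (Fin N) ℤ) ∣ C (z - 1) := by
    have hprime := primeXsub (fun e => hhk.ne (w.injective e))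
    rcases hprime.dvd_mul.1 hfinal with hd | hd
    · exact absurd hd hnotP
    · rw [map_sub, map_one]; exact hd
  have hz1 : z = 1 := by
    have := lin_dvd_C (fun e => hhk.ne (w.injective e)) hzdvd
    omega
  rw [hc, hz1, map_one, mul_one]

lemma part_b {w : Equiv.Perm (Fin N)} {α : Equiv.Perm (Fin N) → MvPolynomial (Fin N) ℤ}
    (hα : IsCanonA N w α) {v : Equiv.Perm (Fin N)}
    (hlen1 : lenA N v = lenA N w + 1)
    (hnt : ∀ h k : Fin N, h ≠ k → v ≠ w * Equiv.swap h k) : α v = 0 := by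
  obtain ⟨hg, hh, hval, hvan⟩ := hα
  have hdvd : ∀ p ∈ InvSetA N v, (X p.1 - X p.2 : MvPolynomial (Fin N) ℤ) ∣ α v := by
    rintro ⟨r, s⟩ hmem
    have hrs : r < s := (mem_InvSetA.1 hmem).1
    have hlt : lenA N (Equiv.swap r s * v) < lenA N v := lenA_refl_lt hmem
    have htvne : Equiv.swap r s * v ≠ w := by
      intro he
      have hv : v = Equiv.swap r s * w := by
        rw [← he, ← mul_assoc, Equiv.swap_mul_self, one_mul]
      have hrsne : w⁻¹ r ≠ w⁻¹ s := fun e => hrs.ne (by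
        rw [← w.apply_inv_self r, ← w.apply_inv_self s, e])
      refine hnt (w⁻¹ r) (w⁻¹ s) hrsne ?_
      rw [hv, Equiv.mul_swap_eq_swap_mul, w.apply_inv_self, w.apply_inv_self]
    have hz : α (Equiv.swap r s * v) = 0 := hvan _ htvne (by omega)
    have := hg v r s hrs
    rwa [hz, sub_zero] at this
  have hPdvd : prodInvA N v ∣ α v :=
    prod_lin_dvd (fun p hp => (mem_InvSetA.1 hp).1) hdvd
  exact homog_dvd_zero (prodInv_homog v) (homog_of_disj (hh v)) (by omega) hPdvd

end Final

end Stmt11Aux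

theorem stmt_11 (n : ℕ) (hn : 1 ≤ n) :
    (∀ w : Equiv.Perm (Fin (n + 1)),
      ∃! α : Equiv.Perm (Fin (n + 1)) → MvPolynomial (Fin (n + 1)) ℤ,
        IsCanonA (n + 1) w α) ∧
    (∀ (w : Equiv.Perm (Fin (n + 1)))
        (α : Equiv.Perm (Fin (n + 1)) → MvPolynomial (Fin (n + 1)) ℤ),
      IsCanonA (n + 1) w α →
      ∀ v : Equiv.Perm (Fin (n + 1)), lenA (n + 1) v = lenA (n + 1) w + 1 →
        (∀ h k : Fin (n + 1), h < k → v = w * Equiv.swap h k →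
          w h < w k ∧
          α v = ∏ p ∈ (InvSetA (n + 1) v).erase (w h, w k),
            (MvPolynomial.X p.1 - MvPolynomial.X p.2)) ∧
        ((∀ h k : Fin (n + 1), h ≠ k → v ≠ w * Equiv.swap h k) → α v = 0)) := by
  constructor
  · intro w
    obtain ⟨α, hα⟩ := Stmt11Aux.exists_canon w
    exact ⟨α, hα, fun β hβ => Stmt11Aux.canon_unique hβ hα⟩
  · intro w α hα v hlen
    constructor
    · intro h k hhk hveq
      subst hveq
      exact Stmt11Aux.part_a hα hhk hlen
    · intro hnt
      exact Stmt11Aux.part_b hα hlen hnt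
end
end
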